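/- arXiv:2202.00954 — 6 statements merged into one kernel-verified Lean document; each statement's English description precedes it below -/
import Mathlib

section
/- For every multi-marginal transport plan π ∈ Π(μ¹,…,μ^N), one has Φ(π) ≥ Ψ((M_λ)_# π), i.e. the MOT cost of π is at least the barycenter objective evaluated at the pushforward of π under the weighted mean map. -/
open MeasureTheory
open scoped ENNReal

noncomputable section

/-- Points of the `d`-dimensional Euclidean space. -/
abbrev Pt (d : ℕ) := EuclideanSpace ℝ (Fin d)

/-- A measure is finitely supported if it vanishes outside a finite set. -/
def FinitelySupported {α : Type*} [MeasurableSpace α] (μ : Measure α) : Prop :=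
  ∃ s : Finset α, μ ((s : Set α)ᶜ) = 0

/-- `λ` lies in the open probability simplex. -/
def InSimplex {N : ℕ} (l : Fin N → ℝ) : Prop :=
  (∀ i, 0 < l i) ∧ ∑ i, l i = 1

/-- `π` is a multi-marginal transport plan with marginals `μ i`. -/
def IsPlan {d N : ℕ} (μ : Fin N → Measure (Pt d)) (π : Measure (Fin N → Pt d)) : Prop :=
  IsProbabilityMeasure π ∧ ∀ i, π.map (fun x => x i) = μ i

/-- The multi-marginal optimal transport cost `Φ(π)`. -/
def MOT {d N : ℕ} (l : Fin N → ℝ) (π : Measure (Fin N → Pt d)) : ℝ≥0∞ :=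
  ∫⁻ x, ∑ s : Fin N, ∑ t : Fin N,
    (if s < t then ENNReal.ofReal (l s * l t * ‖x s - x t‖ ^ 2) else 0) ∂π

/-- `π` is a coupling of `μ` and `ν`. -/
def IsCoupling {α : Type*} [MeasurableSpace α] (μ ν : Measure α) (π : Measure (α × α)) : Prop :=
  IsProbabilityMeasure π ∧ π.map Prod.fst = μ ∧ π.map Prod.snd = ν

/-- The squared Wasserstein-2 distance: the optimal squared-Euclidean transport cost
over all couplings. -/
def W2sq {d : ℕ} (μ ν : Measure (Pt d)) : ℝ≥0∞ :=
  sInf { c : ℝ≥0∞ | ∃ π : Measure (Pt d × Pt d), IsCoupling μ ν π ∧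
    c = ∫⁻ p, ENNReal.ofReal (‖p.1 - p.2‖ ^ 2) ∂π }

/-- The barycenter objective `Ψ(ν) = ∑ i λ i * W₂²(μ i, ν)`. -/
def Psi {d N : ℕ} (l : Fin N → ℝ) (μ : Fin N → Measure (Pt d)) (ν : Measure (Pt d)) : ℝ≥0∞ :=
  ∑ i, ENNReal.ofReal (l i) * W2sq (μ i) ν

/-- The `λ`-weighted mean map `M_λ`. -/
def wmean {d N : ℕ} (l : Fin N → ℝ) (x : Fin N → Pt d) : Pt d :=
  ∑ i, l i • x i

/-- The support-as-atoms of a measure. -/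
def msupport {α : Type*} [MeasurableSpace α] (μ : Measure α) : Set α :=
  {x | μ {x} ≠ 0}

/-- The variance identity: `∑ i λ i ‖x i − x̄‖² = ∑_{s<t} λ s λ t ‖x s − x t‖²`. -/
lemma var_ident {E : Type*} [NormedAddCommGroup E] [InnerProductSpace ℝ E] {N : ℕ}
    (l : Fin N → ℝ) (hsum : ∑ i, l i = 1) (x : Fin N → E) :
    ∑ i, l i * ‖x i - ∑ j, l j • x j‖^2
      = ∑ s, ∑ t, (if s < t then l s * l t * ‖x s - x t‖ ^ 2 else 0) := by
  set m : E := ∑ j, l j • x j with hm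
  have hsq : ∀ a b : E, ‖a - b‖^2 = ‖a‖^2 - 2 * inner ℝ a b + ‖b‖^2 := fun a b =>
    @norm_sub_sq_real E _ _ a b
  set f : Fin N → Fin N → ℝ := fun s t => l s * l t * ‖x s - x t‖ ^ 2 with hf
  set K : ℝ := ∑ i, l i * ‖x i‖^2 with hKdef
  have hsym : ∀ s t, f s t = f t s := by
    intro s t; simp only [hf, norm_sub_rev (x s)]; ring
  have hdiag : ∀ s, f s s = 0 := by intro s; simp [hf]
  have hxm : ∀ s, (inner ℝ (x s) m : ℝ) = ∑ t, l t * inner ℝ (x s) (x t) := by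
    intro s; rw [hm, inner_sum]
    exact Finset.sum_congr rfl fun t _ => real_inner_smul_right _ _ _
  have hsm : (inner ℝ m m : ℝ) = ∑ s, l s * inner ℝ (x s) m := by
    nth_rewrite 1 [hm]; rw [sum_inner]
    exact Finset.sum_congr rfl fun s _ => real_inner_smul_left _ _ _
  have hKs : ∀ s, ∑ t, f s t = l s * ‖x s‖^2 - 2 * (l s * inner ℝ (x s) m) + l s * K := by
    intro s
    have h1 : ∀ t, f s t = ‖x s‖^2 * (l s * l t) - 2 * (l s * (l t * inner ℝ (x s) (x t)))
        + l s * (l t * ‖x t‖^2) := fun t => by simp only [hf, hsq]; ring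
    rw [Finset.sum_congr rfl fun t _ => h1 t]
    rw [Finset.sum_add_distrib, Finset.sum_sub_distrib, ← Finset.mul_sum, ← Finset.mul_sum,
      ← Finset.mul_sum, ← Finset.mul_sum, hsum, ← hxm s, hKdef]
    rw [← Finset.mul_sum]
    ring
  have htot : ∑ s, ∑ t, f s t = 2 * K - 2 * inner ℝ m m := by
    rw [Finset.sum_congr rfl fun s _ => hKs s]
    rw [Finset.sum_add_distrib, Finset.sum_sub_distrib, ← Finset.mul_sum, ← hsm,
      ← Finset.sum_mul, hsum, ← hKdef]
    ring
  have hLHS : ∑ i, l i * ‖x i - m‖^2 = K - inner ℝ m m := by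
    have h1 : ∀ i, l i * ‖x i - m‖^2 = l i * ‖x i‖^2 - 2 * (l i * inner ℝ (x i) m)
        + l i * ‖m‖^2 := fun i => by rw [hsq]; ring
    rw [Finset.sum_congr rfl fun i _ => h1 i]
    rw [Finset.sum_add_distrib, Finset.sum_sub_distrib, ← Finset.mul_sum, ← hsm,
      ← Finset.sum_mul, hsum, ← hKdef, real_inner_self_eq_norm_sq m]
    ring
  have hsplit : (∑ s, ∑ t, (if s < t then f s t else 0))
      + (∑ s, ∑ t, (if t < s then f s t else 0)) = ∑ s, ∑ t, f s t := by
    rw [← Finset.sum_add_distrib]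
    refine Finset.sum_congr rfl fun s _ => ?_
    rw [← Finset.sum_add_distrib]
    refine Finset.sum_congr rfl fun t _ => ?_
    rcases lt_trichotomy s t with h | h | h
    · simp [h, not_lt.mpr h.le]
    · subst h; simp [hdiag]
    · simp [h, not_lt.mpr h.le]
  have hswap : (∑ s, ∑ t, (if t < s then f s t else 0))
      = ∑ s, ∑ t, (if s < t then f s t else 0) := by
    rw [Finset.sum_comm]
    exact Finset.sum_congr rfl fun s _ => Finset.sum_congr rfl fun t _ => by rw [hsym]
  have := real_inner_self_eq_norm_sq m
  linarith

/-- For every multi-marginal plan `π ∈ Π(μ¹,…,μ^N)`,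
`Φ(π) ≥ Ψ((M_λ)_# π)`. -/
theorem stmt1 {d N : ℕ} (μ : Fin N → Measure (Pt d))
    (hμ : ∀ i, IsProbabilityMeasure (μ i) ∧ FinitelySupported (μ i))
    (l : Fin N → ℝ) (hl : InSimplex l)
    (π : Measure (Fin N → Pt d)) (hπ : IsPlan μ π) :
    Psi l μ (π.map (wmean l)) ≤ MOT l π := by
  obtain ⟨hπprob, hmarg⟩ := hπ
  obtain ⟨hlpos, hlsum⟩ := hl
  have hmeas_wm : Measurable (wmean (d := d) l) := by
    unfold wmean
    exact Finset.measurable_sum _ fun i _ => (measurable_pi_apply i).const_smul (l i)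
  have hcost : Measurable fun p : Pt d × Pt d => ENNReal.ofReal (‖p.1 - p.2‖ ^ 2) :=
    ((measurable_fst.sub measurable_snd).norm.pow_const 2).ennreal_ofReal
  have hterm : ∀ i : Fin N, Measurable fun x : Fin N → Pt d =>
      ENNReal.ofReal (‖x i - wmean l x‖ ^ 2) := fun i =>
    (((measurable_pi_apply i).sub hmeas_wm).norm.pow_const 2).ennreal_ofReal
  -- Step 1: bound each W2sq by the cost of the coupling (x i, wmean l x)
  have hW : ∀ i, W2sq (μ i) (π.map (wmean l))
      ≤ ∫⁻ x, ENNReal.ofReal (‖x i - wmean l x‖ ^ 2) ∂π := by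
    intro i
    have hgmeas : Measurable fun x : Fin N → Pt d => (x i, wmean l x) :=
      (measurable_pi_apply i).prodMk hmeas_wm
    apply sInf_le
    refine ⟨π.map (fun x => (x i, wmean l x)), ⟨?_, ?_, ?_⟩, ?_⟩
    · exact Measure.isProbabilityMeasure_map hgmeas.aemeasurable
    · rw [Measure.map_map measurable_fst hgmeas]; exact hmarg i
    · rw [Measure.map_map measurable_snd hgmeas]; rfl
    · rw [lintegral_map hcost hgmeas]
  calc Psi l μ (π.map (wmean l))
      ≤ ∑ i, ENNReal.ofReal (l i) * ∫⁻ x, ENNReal.ofReal (‖x i - wmean l x‖ ^ 2) ∂π :=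
        Finset.sum_le_sum fun i _ => mul_le_mul_right (hW i) _
    _ = ∑ i, ∫⁻ x, ENNReal.ofReal (l i * ‖x i - wmean l x‖ ^ 2) ∂π := by
        refine Finset.sum_congr rfl fun i _ => ?_
        rw [← lintegral_const_mul _ (hterm i)]
        refine lintegral_congr fun x => ?_
        rw [ENNReal.ofReal_mul (hlpos i).le]
    _ = ∫⁻ x, ∑ i, ENNReal.ofReal (l i * ‖x i - wmean l x‖ ^ 2) ∂π := by
        rw [lintegral_finset_sum]
        exact fun i _ => (((measurable_pi_apply i).sub hmeas_wm).norm.pow_const 2).const_mul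
          (l i) |>.ennreal_ofReal
    _ = MOT l π := by
        refine lintegral_congr fun x => ?_
        have hnn : ∀ s t : Fin N, 0 ≤ (if s < t then l s * l t * ‖x s - x t‖ ^ 2 else 0) :=
          fun s t => by
            split
            · exact mul_nonneg (mul_nonneg (hlpos s).le (hlpos t).le) (sq_nonneg _)
            · exact le_refl 0
        rw [← ENNReal.ofReal_sum_of_nonneg fun i _ =>
          mul_nonneg (hlpos i).le (sq_nonneg _)]
        have hwm : wmean l x = ∑ j, l j • x j := rfl
        rw [hwm, var_ident l hlsum x,
          ENNReal.ofReal_sum_of_nonneg fun s _ => Finset.sum_nonneg fun t _ => hnn s t]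
        refine Finset.sum_congr rfl fun s _ => ?_
        rw [ENNReal.ofReal_sum_of_nonneg fun t _ => hnn s t]
        refine Finset.sum_congr rfl fun t _ => ?_
        split <;> simp
end
end

section
/- Let π̂ = Σ_{j=1}^M π̂_j δ(x̂_{1,j},…,x̂_{N,j}) be an optimal plan for the MOT problem, i.e. a minimizer of Φ over Π(μ¹,…,μ^N). Then the pushforward ν̂ = (M_λ)_# π̂ = Σ_{j=1}^M π̂_j δ(m̂_j), where m̂_j = Σ_{i=1}^N λ_i x̂_{i,j}, is an optimal Wasserstein-2 barycenter, i.e. it minimizes Ψ(ν) = Σ_i λ_i W₂²(μ^i, ν) over all probability measures ν on ℝ^d. -/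
open MeasureTheory
open scoped ENNReal

noncomputable section

/-! ### Auxiliary algebraic lemmas -/

section Alg

variable {E : Type*} [NormedAddCommGroup E] [InnerProductSpace ℝ E] {N : ℕ}

lemma expand_sum (l : Fin N → ℝ) (hsum : ∑ i, l i = 1) (x : Fin N → E) (y : E) :
    ∑ i, l i * ‖x i - y‖ ^ 2
      = (∑ i, l i * ‖x i‖ ^ 2) - 2 * inner ℝ (∑ j, l j • x j) y + ‖y‖ ^ 2 := by
  have h : ∀ i, ‖x i - y‖ ^ 2 = ‖x i‖ ^ 2 - 2 * inner ℝ (x i) y + ‖y‖ ^ 2 := by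
    intro i; exact norm_sub_sq_real (x i) y
  have hinner : inner ℝ (∑ j, l j • x j) y = ∑ j, l j * inner ℝ (x j) y := by
    rw [sum_inner]
    exact Finset.sum_congr rfl fun j _ => real_inner_smul_left (x j) y (l j)
  calc ∑ i, l i * ‖x i - y‖ ^ 2
      = ∑ i, (l i * ‖x i‖ ^ 2 - 2 * (l i * inner ℝ (x i) y) + l i * ‖y‖ ^ 2) := by
        refine Finset.sum_congr rfl fun i _ => ?_; rw [h i]; ring
    _ = (∑ i, l i * ‖x i‖ ^ 2) - 2 * (∑ i, l i * inner ℝ (x i) y) + (∑ i, l i) * ‖y‖ ^ 2 := by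
        rw [Finset.sum_add_distrib, Finset.sum_sub_distrib, ← Finset.mul_sum, ← Finset.sum_mul]
    _ = _ := by rw [hinner, hsum]; ring

lemma key_ineq (l : Fin N → ℝ) (hsum : ∑ i, l i = 1) (x : Fin N → E) (y : E) :
    ∑ i, l i * ‖x i - ∑ j, l j • x j‖ ^ 2 ≤ ∑ i, l i * ‖x i - y‖ ^ 2 := by
  set m := ∑ j, l j • x j with hm
  have e1 := expand_sum l hsum x m
  have e2 := expand_sum l hsum x y
  have e3 : ‖m - y‖ ^ 2 = ‖m‖ ^ 2 - 2 * inner ℝ m y + ‖y‖ ^ 2 := norm_sub_sq_real m y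
  have e4 : (inner ℝ m m : ℝ) = ‖m‖ ^ 2 := real_inner_self_eq_norm_sq m
  nlinarith [sq_nonneg ‖m - y‖]

lemma key_identity (l : Fin N → ℝ) (hsum : ∑ i, l i = 1) (x : Fin N → E) :
    ∑ s, ∑ t, (if s < t then l s * l t * ‖x s - x t‖ ^ 2 else 0)
      = ∑ i, l i * ‖x i - ∑ j, l j • x j‖ ^ 2 := by
  set m := ∑ j, l j • x j with hm
  set S := ∑ i, l i * ‖x i‖ ^ 2 with hS
  set F : Fin N → Fin N → ℝ := fun s t => l s * l t * ‖x s - x t‖ ^ 2 with hF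
  have hFsymm : ∀ s t, F s t = F t s := by
    intro s t; simp only [hF, norm_sub_rev (x s) (x t)]; ring
  have hFdiag : ∀ s, F s s = 0 := by intro s; simp [hF]
  have hfull : ∑ s, ∑ t, F s t = 2 * S - 2 * ‖m‖ ^ 2 := by
    have hrow : ∀ s, ∑ t, F s t = l s * (S - 2 * inner ℝ m (x s) + ‖x s‖ ^ 2) := by
      intro s
      have := expand_sum l hsum x (x s)
      calc ∑ t, F s t = l s * ∑ t, l t * ‖x t - x s‖ ^ 2 := by
            rw [Finset.mul_sum]
            exact Finset.sum_congr rfl fun t _ => by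
              rw [hF]; rw [norm_sub_rev]; ring
        _ = _ := by rw [this]
    have h5 : (inner ℝ m m : ℝ) = ∑ s, l s * (inner ℝ m (x s) : ℝ) := by
      calc (inner ℝ m m : ℝ) = inner ℝ m (∑ j, l j • x j) := by rw [← hm]
        _ = ∑ j, (inner ℝ m (l j • x j) : ℝ) := inner_sum _ _ _
        _ = _ := Finset.sum_congr rfl fun j _ => real_inner_smul_right m (x j) (l j)
    have hsum2 : ∑ s, l s * inner ℝ m (x s) = (‖m‖:ℝ) ^ 2 := by
      rw [← real_inner_self_eq_norm_sq m]; exact h5.symm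
    calc ∑ s, ∑ t, F s t = ∑ s, l s * (S - 2 * inner ℝ m (x s) + ‖x s‖ ^ 2) :=
          Finset.sum_congr rfl fun s _ => hrow s
      _ = (∑ s, l s) * S - 2 * (∑ s, l s * inner ℝ m (x s)) + ∑ s, l s * ‖x s‖ ^ 2 := by
          have hterm : ∀ s : Fin N, l s * (S - 2 * inner ℝ m (x s) + ‖x s‖ ^ 2)
              = l s * S - 2 * (l s * inner ℝ m (x s)) + l s * ‖x s‖ ^ 2 := fun s => by ring
          simp_rw [hterm]
          rw [Finset.sum_add_distrib, Finset.sum_sub_distrib, ← Finset.sum_mul, ← Finset.mul_sum]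
      _ = 2 * S - 2 * ‖m‖ ^ 2 := by rw [hsum, hsum2, ← hS]; ring
  have hhalf : ∑ s, ∑ t, (if s < t then F s t else 0) = (∑ s, ∑ t, F s t) / 2 := by
    have hsplit : ∀ s t, F s t = (if s < t then F s t else 0) + (if t < s then F s t else 0) := by
      intro s t
      rcases lt_trichotomy s t with h | h | h
      · simp [h, asymm h]
      · simp [h, hFdiag]
      · simp [h, asymm h, not_lt.mpr (le_of_lt h)]
    have hthis : ∑ s, ∑ t, F s t
        = (∑ s, ∑ t, (if s < t then F s t else 0)) + ∑ s, ∑ t, (if t < s then F s t else 0) := by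
      rw [← Finset.sum_add_distrib]
      refine Finset.sum_congr rfl fun s _ => ?_
      rw [← Finset.sum_add_distrib]
      exact Finset.sum_congr rfl fun t _ => hsplit s t
    have hswap : ∑ s, ∑ t, (if t < s then F s t else 0)
        = ∑ s, ∑ t, (if s < t then F s t else 0) := by
      rw [Finset.sum_comm]
      refine Finset.sum_congr rfl fun s _ => Finset.sum_congr rfl fun t _ => ?_
      simp only [hFsymm s t]
    rw [hswap] at hthis
    linarith
  have hRHS : ∑ i, l i * ‖x i - m‖ ^ 2 = S - ‖m‖ ^ 2 := by
    rw [expand_sum l hsum x m, ← hm, ← hS]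
    have : (inner ℝ m m : ℝ) = ‖m‖ ^ 2 := real_inner_self_eq_norm_sq m
    rw [this]; ring
  rw [hRHS]
  calc ∑ s, ∑ t, (if s < t then F s t else 0) = (∑ s, ∑ t, F s t) / 2 := hhalf
    _ = S - ‖m‖ ^ 2 := by rw [hfull]; ring

end Alg

/-! ### Product kernel -/

section Ker

open ProbabilityTheory Function Set

variable {α : Type*} [MeasurableSpace α] {N : ℕ} {β : Fin N → Type*} [∀ i, MeasurableSpace (β i)]

lemma measurable_pi_meas (κ : ∀ i, Kernel α (β i)) [∀ i, IsMarkovKernel (κ i)] :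
    Measurable (fun a => Measure.pi (fun i => (κ i) a)) := by
  refine Measure.measurable_measure.mpr ?_
  have h : ∀ t : Set (∀ i, β i), MeasurableSet t →
      Measurable (fun a => Measure.pi (fun i => (κ i) a) t) := by
    refine MeasurableSpace.induction_on_inter generateFrom_pi.symm isPiSystem_pi ?_ ?_ ?_ ?_
    · simp only [measure_empty]; exact measurable_const
    · rintro t ⟨s, hs, rfl⟩
      simp only [mem_univ_pi] at hs
      have h2 : ∀ a, Measure.pi (fun i => (κ i) a) (Set.pi univ s) = ∏ i, (κ i) a (s i) := by
        intro a; exact Measure.pi_pi _ _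
      simp_rw [h2]
      exact Finset.measurable_prod _ fun i _ => Kernel.measurable_coe (κ i) (hs i)
    · intro t ht h
      have h2 : ∀ a, Measure.pi (fun i => (κ i) a) tᶜ = 1 - Measure.pi (fun i => (κ i) a) t := by
        intro a
        have : IsProbabilityMeasure (Measure.pi (fun i => (κ i) a)) := by infer_instance
        rw [measure_compl ht (measure_ne_top _ _), measure_univ]
      simp_rw [h2]
      exact Measurable.const_sub h 1
    · intro f hdisj hmeas h
      have h2 : ∀ a, Measure.pi (fun i => (κ i) a) (⋃ n, f n)
          = ∑' n, Measure.pi (fun i => (κ i) a) (f n) := fun a => measure_iUnion hdisj hmeas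
      simp_rw [h2]
      exact Measurable.ennreal_tsum h
  intro s hs; exact h s hs

/-- product of Markov kernels -/
noncomputable def kpi (κ : ∀ i, Kernel α (β i)) [∀ i, IsMarkovKernel (κ i)] :
    Kernel α (∀ i, β i) :=
  ⟨fun a => Measure.pi (fun i => (κ i) a), measurable_pi_meas κ⟩

instance (κ : ∀ i, Kernel α (β i)) [∀ i, IsMarkovKernel (κ i)] : IsMarkovKernel (kpi κ) :=
  ⟨fun a => by
    show IsProbabilityMeasure (Measure.pi (fun i => (κ i) a))
    infer_instance⟩

lemma kpi_apply (κ : ∀ i, Kernel α (β i)) [∀ i, IsMarkovKernel (κ i)] (a : α) :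
    kpi κ a = Measure.pi (fun i => (κ i) a) := rfl

lemma pi_eval_preimage (μ : ∀ i, Measure (β i)) [∀ i, IsProbabilityMeasure (μ i)]
    (i : Fin N) {s : Set (β i)} (_hs : MeasurableSet s) :
    Measure.pi μ (eval i ⁻¹' s) = μ i s := by
  classical
  rw [Set.eval_preimage, Measure.pi_pi]
  rw [Finset.prod_eq_single i]
  · simp
  · intro j _ hj
    simp [Function.update_of_ne hj]
  · simp

lemma pi_map_eval (μ : ∀ i, Measure (β i)) [∀ i, IsProbabilityMeasure (μ i)] (i : Fin N) :
    (Measure.pi μ).map (eval i) = μ i := by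
  ext s hs
  rw [Measure.map_apply (measurable_pi_apply i) hs, pi_eval_preimage μ i hs]

end Ker

/-! ### Measure-theoretic lemmas for the barycenter problem -/

section Main

open scoped ProbabilityTheory

variable {d N : ℕ}

lemma measurable_wmean (l : Fin N → ℝ) : Measurable (wmean (d := d) l) := by
  have : Continuous (wmean (d := d) l) := by
    unfold wmean
    exact continuous_finset_sum _ fun i _ => (continuous_apply i).const_smul (l i)
  exact this.measurable

lemma measurable_motf (l : Fin N → ℝ) :
    Measurable (fun x : Fin N → Pt d => ∑ s : Fin N, ∑ t : Fin N,
      (if s < t then ENNReal.ofReal (l s * l t * ‖x s - x t‖ ^ 2) else 0)) := by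
  refine Finset.measurable_sum _ fun s _ => Finset.measurable_sum _ fun t _ => ?_
  split_ifs
  · exact (measurable_const.mul
      ((((measurable_pi_apply s).sub (measurable_pi_apply t)).norm).pow_const 2)).ennreal_ofReal
  · exact measurable_const

lemma motf_eq (l : Fin N → ℝ) (hl0 : ∀ i, 0 ≤ l i) (x : Fin N → Pt d) :
    ∑ s : Fin N, ∑ t : Fin N,
      (if s < t then ENNReal.ofReal (l s * l t * ‖x s - x t‖ ^ 2) else 0)
    = ENNReal.ofReal (∑ s : Fin N, ∑ t : Fin N,
      (if s < t then l s * l t * ‖x s - x t‖ ^ 2 else 0)) := by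
  have hnn : ∀ s t : Fin N, 0 ≤ (if s < t then l s * l t * ‖x s - x t‖ ^ 2 else 0) := by
    intro s t; split_ifs
    · exact mul_nonneg (mul_nonneg (hl0 s) (hl0 t)) (sq_nonneg _)
    · exact le_refl 0
  rw [ENNReal.ofReal_sum_of_nonneg (fun s _ => Finset.sum_nonneg fun t _ => hnn s t)]
  refine Finset.sum_congr rfl fun s _ => ?_
  rw [ENNReal.ofReal_sum_of_nonneg (fun t _ => hnn s t)]
  refine Finset.sum_congr rfl fun t _ => ?_
  split_ifs <;> simp

lemma W2sq_le_coupling {μ ν : Measure (Pt d)} {π : Measure (Pt d × Pt d)}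
    (h : IsCoupling μ ν π) :
    W2sq μ ν ≤ ∫⁻ p, ENNReal.ofReal (‖p.1 - p.2‖ ^ 2) ∂π :=
  sInf_le ⟨π, h, rfl⟩

/-- Direction 1: the pushforward barycenter candidate costs at most `Φ(π̂)`. -/
lemma psi_map_le_MOT (μ : Fin N → Measure (Pt d)) (l : Fin N → ℝ) (hl : InSimplex l)
    (pihat : Measure (Fin N → Pt d)) (hplan : IsPlan μ pihat) :
    Psi l μ (pihat.map (wmean l)) ≤ MOT l pihat := by
  haveI : IsProbabilityMeasure pihat := hplan.1
  have hl0 : ∀ i, 0 ≤ l i := fun i => (hl.1 i).le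
  have hcost : ∀ i : Fin N,
      W2sq (μ i) (pihat.map (wmean l))
        ≤ ∫⁻ x, ENNReal.ofReal (‖x i - wmean l x‖ ^ 2) ∂pihat := by
    intro i
    have hmap : Measurable (fun x : Fin N → Pt d => (x i, wmean l x)) :=
      (measurable_pi_apply i).prodMk (measurable_wmean l)
    have hcoup : IsCoupling (μ i) (pihat.map (wmean l)) (pihat.map (fun x => (x i, wmean l x))) := by
      refine ⟨Measure.isProbabilityMeasure_map hmap.aemeasurable, ?_, ?_⟩
      · rw [Measure.map_map measurable_fst hmap]; exact hplan.2 i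
      · rw [Measure.map_map measurable_snd hmap]; rfl
    have h := W2sq_le_coupling hcoup
    rwa [lintegral_map (f := fun p : Pt d × Pt d => ENNReal.ofReal (‖p.1 - p.2‖ ^ 2)) ((((measurable_fst).sub measurable_snd).norm.pow_const 2).ennreal_ofReal)
      hmap] at h
  calc Psi l μ (pihat.map (wmean l))
      ≤ ∑ i, ENNReal.ofReal (l i) * ∫⁻ x, ENNReal.ofReal (‖x i - wmean l x‖ ^ 2) ∂pihat := by
        exact Finset.sum_le_sum fun i _ => mul_le_mul_right (hcost i) _
    _ = ∑ i, ∫⁻ x, ENNReal.ofReal (l i * ‖x i - wmean l x‖ ^ 2) ∂pihat := by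
        refine Finset.sum_congr rfl fun i _ => ?_
        rw [← lintegral_const_mul _ (f := fun x => ENNReal.ofReal (‖x i - wmean l x‖ ^ 2)) ((((measurable_pi_apply i).sub
          (measurable_wmean l)).norm.pow_const 2).ennreal_ofReal)]
        refine lintegral_congr fun x => ?_
        rw [ENNReal.ofReal_mul (hl0 i)]
    _ = ∫⁻ x, ∑ i, ENNReal.ofReal (l i * ‖x i - wmean l x‖ ^ 2) ∂pihat := by
        rw [lintegral_finset_sum]
        intro i _
        exact (measurable_const.mul (((measurable_pi_apply i).sub
          (measurable_wmean l)).norm.pow_const 2)).ennreal_ofReal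
    _ = MOT l pihat := by
        refine lintegral_congr fun x => ?_
        rw [← ENNReal.ofReal_sum_of_nonneg (fun i _ =>
          mul_nonneg (hl0 i) (sq_nonneg _))]
        rw [motf_eq l hl0 x]
        simp only [wmean]
        rw [← key_identity l hl.2 x]

lemma motf_le (l : Fin N → ℝ) (hl0 : ∀ i, 0 ≤ l i) (hsum : ∑ i, l i = 1)
    (x : Fin N → Pt d) (y : Pt d) :
    (∑ s : Fin N, ∑ t : Fin N,
        (if s < t then ENNReal.ofReal (l s * l t * ‖x s - x t‖ ^ 2) else 0))
      ≤ ∑ i, ENNReal.ofReal (l i * ‖x i - y‖ ^ 2) := by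
  rw [motf_eq l hl0 x,
    ← ENNReal.ofReal_sum_of_nonneg (fun i _ => mul_nonneg (hl0 i) (sq_nonneg _))]
  apply ENNReal.ofReal_le_ofReal
  rw [key_identity l hsum x]
  exact key_ineq l hsum x y

/-- Direction 2: from couplings of each `μ i` with `ν`, glue a plan whose MOT cost is at most
the total coupling cost. -/
lemma exists_plan_glue (μ : Fin N → Measure (Pt d)) (l : Fin N → ℝ) (hl0 : ∀ i, 0 ≤ l i)
    (hsum : ∑ i, l i = 1) (ν : Measure (Pt d)) (hν : IsProbabilityMeasure ν)
    (γ : Fin N → Measure (Pt d × Pt d)) (hγ : ∀ i, IsCoupling (μ i) ν (γ i)) :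
    ∃ π : Measure (Fin N → Pt d), IsPlan μ π ∧
      MOT l π ≤ ∑ i, ENNReal.ofReal (l i) *
        ∫⁻ p, ENNReal.ofReal (‖p.1 - p.2‖ ^ 2) ∂(γ i) := by
  classical
  haveI := hν
  haveI hγp : ∀ i, IsProbabilityMeasure (γ i) := fun i => (hγ i).1
  set ρ : Fin N → Measure (Pt d × Pt d) := fun i => (γ i).map Prod.swap with hρ
  haveI hρp : ∀ i, IsProbabilityMeasure (ρ i) := fun i =>
    Measure.isProbabilityMeasure_map measurable_swap.aemeasurable
  have hρfst : ∀ i, (ρ i).fst = ν := by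
    intro i
    show ((γ i).map Prod.swap).map Prod.fst = ν
    rw [Measure.map_map measurable_fst measurable_swap]
    exact (hγ i).2.2
  set κ : Fin N → ProbabilityTheory.Kernel (Pt d) (Pt d) :=
    fun i => (ρ i).condKernel with hκ
  haveI : ∀ i, ProbabilityTheory.IsMarkovKernel (κ i) := fun i => by
    rw [hκ]; infer_instance
  have hdis : ∀ i, ν ⊗ₘ κ i = ρ i := by
    intro i
    rw [hκ, ← hρfst i]
    exact Measure.disintegrate (ρ i) (ρ i).condKernel
  set K := kpi κ with hK
  set θ := ν ⊗ₘ K with hθ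
  haveI hθp : IsProbabilityMeasure θ := by rw [hθ]; infer_instance
  refine ⟨θ.map Prod.snd, ⟨Measure.isProbabilityMeasure_map measurable_snd.aemeasurable, ?_⟩, ?_⟩
  · -- marginals
    intro i
    rw [Measure.map_map (measurable_pi_apply i) measurable_snd]
    ext s hs
    have hmeascomp : Measurable ((fun x : Fin N → Pt d => x i) ∘ (Prod.snd : Pt d × (Fin N → Pt d) → Fin N → Pt d)) :=
      (measurable_pi_apply i).comp measurable_snd
    rw [Measure.map_apply hmeascomp hs]
    have h1 : θ (((fun x : Fin N → Pt d => x i) ∘ Prod.snd) ⁻¹' s) = ∫⁻ a, κ i a s ∂ν := by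
      rw [hθ, Measure.compProd_apply (hmeascomp hs)]
      refine lintegral_congr fun a => ?_
      have hpre : (Prod.mk a ⁻¹' (((fun x : Fin N → Pt d => x i) ∘ Prod.snd) ⁻¹' s))
          = Function.eval i ⁻¹' s := rfl
      rw [hpre, hK, kpi_apply, pi_eval_preimage _ i hs]
    have h2 : μ i s = ∫⁻ a, κ i a s ∂ν := by
      have hμi : μ i = (ρ i).map Prod.snd := by
        rw [hρ]
        show μ i = ((γ i).map Prod.swap).map Prod.snd
        rw [Measure.map_map measurable_snd measurable_swap]
        exact ((hγ i).2.1).symm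
      rw [hμi, ← hdis i, Measure.map_apply measurable_snd hs,
        Measure.compProd_apply (measurable_snd hs)]
      exact lintegral_congr fun a => rfl
    rw [h1, h2]
  · -- cost bound
    have hg : ∀ i : Fin N, Measurable fun z : Pt d × (Fin N → Pt d) =>
        ENNReal.ofReal (l i * ‖z.2 i - z.1‖ ^ 2) := by
      intro i
      have h1 : Measurable fun z : Pt d × (Fin N → Pt d) => z.2 i :=
        (measurable_pi_apply i).comp measurable_snd
      exact (measurable_const.mul ((h1.sub measurable_fst).norm.pow_const 2)).ennreal_ofReal
    have hstep1 : MOT l (θ.map Prod.snd)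
        = ∫⁻ z, (∑ s : Fin N, ∑ t : Fin N,
            (if s < t then ENNReal.ofReal (l s * l t * ‖z.2 s - z.2 t‖ ^ 2) else 0)) ∂θ := by
      rw [MOT, lintegral_map (measurable_motf l) measurable_snd]
    rw [hstep1]
    calc ∫⁻ z, (∑ s : Fin N, ∑ t : Fin N,
            (if s < t then ENNReal.ofReal (l s * l t * ‖z.2 s - z.2 t‖ ^ 2) else 0)) ∂θ
        ≤ ∫⁻ z, ∑ i, ENNReal.ofReal (l i * ‖z.2 i - z.1‖ ^ 2) ∂θ := by
          refine lintegral_mono fun z => ?_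
          exact motf_le l hl0 hsum z.2 z.1
      _ = ∑ i, ∫⁻ z, ENNReal.ofReal (l i * ‖z.2 i - z.1‖ ^ 2) ∂θ := by
          rw [lintegral_finset_sum]
          exact fun i _ => hg i
      _ = ∑ i, ENNReal.ofReal (l i) * ∫⁻ p, ENNReal.ofReal (‖p.1 - p.2‖ ^ 2) ∂(γ i) := by
          refine Finset.sum_congr rfl fun i _ => ?_
          have hg' : Measurable fun z : Pt d × Pt d =>
              ENNReal.ofReal (l i * ‖z.2 - z.1‖ ^ 2) :=
            (measurable_const.mul ((measurable_snd.sub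
              measurable_fst).norm.pow_const 2)).ennreal_ofReal
          have hin : ∀ a, ∫⁻ x, ENNReal.ofReal (l i * ‖x i - a‖ ^ 2) ∂(K a)
              = ∫⁻ u, ENNReal.ofReal (l i * ‖u - a‖ ^ 2) ∂(κ i a) := by
            intro a
            have hf : Measurable fun u : Pt d => ENNReal.ofReal (l i * ‖u - a‖ ^ 2) :=
              (measurable_const.mul ((measurable_id.sub
                measurable_const).norm.pow_const 2)).ennreal_ofReal
            rw [hK, kpi_apply, ← pi_map_eval (fun j => κ j a) i,
              lintegral_map hf (measurable_pi_apply i)]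
          calc ∫⁻ z, ENNReal.ofReal (l i * ‖z.2 i - z.1‖ ^ 2) ∂θ
              = ∫⁻ a, ∫⁻ x, ENNReal.ofReal (l i * ‖x i - a‖ ^ 2) ∂(K a) ∂ν := by
                rw [hθ, Measure.lintegral_compProd (hg i)]
            _ = ∫⁻ a, ∫⁻ u, ENNReal.ofReal (l i * ‖u - a‖ ^ 2) ∂(κ i a) ∂ν := by
                exact lintegral_congr fun a => hin a
            _ = ∫⁻ z, ENNReal.ofReal (l i * ‖z.2 - z.1‖ ^ 2) ∂(ν ⊗ₘ κ i) := by
                rw [Measure.lintegral_compProd hg']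
            _ = ∫⁻ z, ENNReal.ofReal (l i * ‖z.2 - z.1‖ ^ 2) ∂((γ i).map Prod.swap) := by
                rw [hdis i]
            _ = ∫⁻ p, ENNReal.ofReal (l i * ‖p.1 - p.2‖ ^ 2) ∂(γ i) := by
                rw [lintegral_map hg' measurable_swap]
                simp only [Prod.fst_swap, Prod.snd_swap]
            _ = ENNReal.ofReal (l i) * ∫⁻ p, ENNReal.ofReal (‖p.1 - p.2‖ ^ 2) ∂(γ i) := by
                simp_rw [ENNReal.ofReal_mul (hl0 i)]
                rw [lintegral_const_mul _ (f := fun p : Pt d × Pt d => ENNReal.ofReal (‖p.1 - p.2‖ ^ 2)) (((measurable_fst.sub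
                  measurable_snd).norm.pow_const 2).ennreal_ofReal)]

end Main

/-- If `π̂` is an optimal plan for the MOT problem, then its pushforward
under the weighted mean map is an optimal Wasserstein-2 barycenter. -/
theorem stmt3 {d N : ℕ} (μ : Fin N → Measure (Pt d))
    (hμ : ∀ i, IsProbabilityMeasure (μ i) ∧ FinitelySupported (μ i))
    (l : Fin N → ℝ) (hl : InSimplex l)
    (pihat : Measure (Fin N → Pt d)) (hplan : IsPlan μ pihat)
    (hopt : ∀ π, IsPlan μ π → MOT l pihat ≤ MOT l π) :
    ∀ ν : Measure (Pt d), IsProbabilityMeasure ν →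
      Psi l μ (pihat.map (wmean l)) ≤ Psi l μ ν := by
  intro ν hν
  have hl0 : ∀ i, 0 ≤ l i := fun i => (hl.1 i).le
  have hdir1 := psi_map_le_MOT μ l hl pihat hplan
  refine ENNReal.le_of_forall_pos_le_add ?_
  intro ε hε hlt
  -- each W2sq is finite
  have hfin : ∀ i, W2sq (μ i) ν < ∞ := by
    intro i
    by_contra h
    push_neg at h
    have htop : W2sq (μ i) ν = ∞ := top_le_iff.mp h
    have : Psi l μ ν = ∞ := by
      refine ENNReal.sum_eq_top.mpr ⟨i, Finset.mem_univ i, ?_⟩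
      rw [htop, ENNReal.mul_top]
      simp only [ne_eq, ENNReal.ofReal_eq_zero, not_le]
      exact hl.1 i
    exact absurd this hlt.ne
  -- choose near-optimal couplings
  have hchoice : ∀ i : Fin N, ∃ γ : Measure (Pt d × Pt d), IsCoupling (μ i) ν γ ∧
      (∫⁻ p, ENNReal.ofReal (‖p.1 - p.2‖ ^ 2) ∂γ) ≤ W2sq (μ i) ν + ε := by
    intro i
    have hlt2 : W2sq (μ i) ν < W2sq (μ i) ν + ε :=
      ENNReal.lt_add_right (hfin i).ne (by exact_mod_cast hε.ne')
    obtain ⟨c, hc, hclt⟩ := sInf_lt_iff.mp hlt2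
    obtain ⟨γ, hγ, rfl⟩ := hc
    exact ⟨γ, hγ, hclt.le⟩
  choose γ hγ hγc using hchoice
  obtain ⟨π, hπ, hπle⟩ := exists_plan_glue μ l hl0 hl.2 ν hν γ hγ
  calc Psi l μ (pihat.map (wmean l)) ≤ MOT l pihat := hdir1
    _ ≤ MOT l π := hopt π hπ
    _ ≤ ∑ i, ENNReal.ofReal (l i) * ∫⁻ p, ENNReal.ofReal (‖p.1 - p.2‖ ^ 2) ∂(γ i) := hπle
    _ ≤ ∑ i, ENNReal.ofReal (l i) * (W2sq (μ i) ν + ε) :=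
        Finset.sum_le_sum fun i _ => mul_le_mul_right (hγc i) _
    _ = Psi l μ ν + (∑ i, ENNReal.ofReal (l i)) * ε := by
        simp_rw [mul_add, Finset.sum_add_distrib, Finset.sum_mul]
        rfl
    _ = Psi l μ ν + ε := by
        rw [← ENNReal.ofReal_sum_of_nonneg (fun i _ => hl0 i), hl.2,
          ENNReal.ofReal_one, one_mul]
end
end

section
/- Every optimal Wasserstein-2 barycenter ν̂ (a minimizer of Ψ over probability measures on ℝ^d) can be obtained as ν̂ = (M_λ)_# π̂ for some optimal multi-marginal plan π̂ minimizing Φ over Π(μ¹,…,μ^N). In particular, every optimal barycenter is a finitely supported measure whose support is contained in { Σ_{i=1}^N λ_i x^i : x^i ∈ supp(μ^i) for all i }. -/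
open MeasureTheory
open scoped ENNReal

noncomputable section

set_option linter.unusedSectionVars false
set_option maxHeartbeats 1000000

namespace Stmt4Aux
open RealInnerProductSpace


variable {α : Type*} {β : Type*} {γ' : Type*} [MeasurableSpace α] [MeasurableSpace β]
  [MeasurableSpace γ']

lemma measure_finset_eq_sum [MeasurableSingletonClass α] (ρ : Measure α) (s : Finset α) :
    ρ (↑s) = ∑ x ∈ s, ρ {x} := by
  rw [show (↑s : Set α) = ⋃ x ∈ s, {x} by ext y; simp]
  rw [measure_biUnion_finset ?_ (fun b _ => measurableSet_singleton b)]
  intro a _ b _ hab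
  simp [Function.onFun, Set.disjoint_singleton, hab]

lemma atomic_apply [MeasurableSingletonClass α] (s : Finset β) (c : β → ℝ≥0∞) (h : β → α)
    {A : Set α} (hA : MeasurableSet A) [DecidablePred (· ∈ A)] :
    (∑ x ∈ s, c x • Measure.dirac (h x)) A = ∑ x ∈ s, if h x ∈ A then c x else 0 := by
  rw [Measure.finset_sum_apply]
  refine Finset.sum_congr rfl fun x _ => ?_
  rw [Measure.smul_apply, Measure.dirac_apply' _ hA]
  by_cases hx : h x ∈ A <;> simp [hx, Set.indicator_apply]

lemma atomic_lintegral [MeasurableSingletonClass α] (s : Finset β) (c : β → ℝ≥0∞) (h : β → α)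
    (g : α → ℝ≥0∞) :
    ∫⁻ y, g y ∂(∑ x ∈ s, c x • Measure.dirac (h x)) = ∑ x ∈ s, c x * g (h x) := by
  rw [lintegral_finset_sum_measure]
  refine Finset.sum_congr rfl fun x _ => ?_
  rw [lintegral_smul_measure, lintegral_dirac, smul_eq_mul]

lemma atomic_map (s : Finset β) (c : β → ℝ≥0∞) (h : β → α) {g : α → γ'} (hg : Measurable g) :
    (∑ x ∈ s, c x • Measure.dirac (h x)).map g = ∑ x ∈ s, c x • Measure.dirac (g (h x)) := by
  classical
  induction s using Finset.induction_on with
  | empty => simp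
  | insert a s hx ih =>
    rw [Finset.sum_insert hx, Finset.sum_insert hx, Measure.map_add _ _ hg, Measure.map_smul,
      Measure.map_dirac' hg, ih]

lemma eq_atomic [MeasurableSingletonClass α] {ρ : Measure α} {s : Finset α}
    (hs : ρ ((↑s : Set α)ᶜ) = 0) :
    ρ = ∑ x ∈ s, ρ {x} • Measure.dirac x := by
  classical
  ext A hA
  rw [show (∑ x ∈ s, ρ {x} • Measure.dirac x) = ∑ x ∈ s, ρ {x} • Measure.dirac (id x) from rfl,
    atomic_apply s _ id hA]
  simp only [id]
  have h2 : ρ (A \ ↑s) = 0 := measure_mono_null (Set.diff_subset_compl _ _) hs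
  have h1 : ρ A = ρ (A ∩ ↑s) := by
    have := measure_inter_add_diff (μ := ρ) A (s.measurableSet)
    rw [h2, add_zero] at this; exact this.symm
  have h3 : A ∩ ↑s = ↑(s.filter (· ∈ A)) := by ext y; simp [and_comm]
  rw [h1, h3, measure_finset_eq_sum, Finset.sum_filter]

lemma apply_of_null_compl [MeasurableSingletonClass α] {ρ : Measure α} {s : Finset α}
    (hs : ρ ((↑s : Set α)ᶜ) = 0) {A : Set α} (hA : MeasurableSet A) [DecidablePred (· ∈ A)] :
    ρ A = ∑ x ∈ s, if x ∈ A then ρ {x} else 0 := by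
  conv_lhs => rw [eq_atomic hs]
  rw [show (∑ x ∈ s, ρ {x} • Measure.dirac x) = ∑ x ∈ s, ρ {x} • Measure.dirac (id x) from rfl,
    atomic_apply s _ id hA]
  simp only [id]

lemma lintegral_of_null_compl [MeasurableSingletonClass α] {ρ : Measure α} {s : Finset α}
    (hs : ρ ((↑s : Set α)ᶜ) = 0) (g : α → ℝ≥0∞) :
    ∫⁻ y, g y ∂ρ = ∑ x ∈ s, ρ {x} * g x := by
  conv_lhs => rw [eq_atomic hs]
  exact atomic_lintegral s _ id g

/-- key product-sum helper -/
lemma piFinset_mul_sum {N : ℕ} {α : Type*} [DecidableEq α] (S : Fin N → Finset α)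
    (f : Fin N → α → ℝ≥0∞) (i0 : Fin N) (c : α → ℝ≥0∞)
    (h1 : ∀ j, ∑ b ∈ S j, f j b = 1) :
    ∑ x ∈ Fintype.piFinset S, (∏ j, f j (x j)) * c (x i0) = ∑ a ∈ S i0, f i0 a * c a := by
  classical
  set g : Fin N → α → ℝ≥0∞ := fun j b => if j = i0 then f j b * c b else f j b with hg
  have key : ∀ x : Fin N → α, (∏ j, g j (x j)) = (∏ j, f j (x j)) * c (x i0) := by
    intro x
    rw [Finset.prod_eq_mul_prod_sdiff_singleton_of_mem (Finset.mem_univ i0) (fun j => g j (x j)),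
      Finset.prod_eq_mul_prod_sdiff_singleton_of_mem (Finset.mem_univ i0) (fun j => f j (x j))]
    have : ∏ j ∈ Finset.univ \ {i0}, g j (x j) = ∏ j ∈ Finset.univ \ {i0}, f j (x j) := by
      refine Finset.prod_congr rfl fun j hj => ?_
      simp only [Finset.mem_sdiff, Finset.mem_singleton] at hj
      simp [hg, hj.2]
    rw [this]
    simp only [hg, if_pos rfl]
    ring
  calc ∑ x ∈ Fintype.piFinset S, (∏ j, f j (x j)) * c (x i0)
      = ∑ x ∈ Fintype.piFinset S, ∏ j, g j (x j) := by
        exact Finset.sum_congr rfl fun x _ => (key x).symm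
    _ = ∏ j, ∑ b ∈ S j, g j b := (Finset.prod_univ_sum S g).symm
    _ = ∑ a ∈ S i0, f i0 a * c a := by
        rw [Finset.prod_eq_mul_prod_sdiff_singleton_of_mem (Finset.mem_univ i0)]
        have : ∏ j ∈ Finset.univ \ {i0}, ∑ b ∈ S j, g j b = 1 := by
          refine Finset.prod_eq_one fun j hj => ?_
          simp only [Finset.mem_sdiff, Finset.mem_singleton] at hj
          simp only [hg, if_neg hj.2]
          exact h1 j
        rw [this, mul_one]
        simp [hg]

lemma piFinset_sum_one {N : ℕ} {α : Type*} [DecidableEq α] (S : Fin N → Finset α)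
    (f : Fin N → α → ℝ≥0∞) (h1 : ∀ j, ∑ b ∈ S j, f j b = 1) :
    ∑ x ∈ Fintype.piFinset S, (∏ j, f j (x j)) = 1 := by
  rw [← Finset.prod_univ_sum S f]
  exact Finset.prod_eq_one fun j _ => h1 j



variable {E : Type*} [NormedAddCommGroup E] [InnerProductSpace ℝ E]

lemma key_identity {N : ℕ} (l : Fin N → ℝ) (hl : ∑ i, l i = 1) (x : Fin N → E) (y : E) :
    ∑ i, l i * ‖x i - y‖ ^ 2 =
      (∑ s, ∑ t, if s < t then l s * l t * ‖x s - x t‖ ^ 2 else 0)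
        + ‖y - ∑ i, l i • x i‖ ^ 2 := by
  set m : E := ∑ i, l i • x i with hm
  have hinner : ∀ z : E, ⟪m, z⟫ = ∑ i, l i * ⟪x i, z⟫ := by
    intro z
    rw [hm, sum_inner]
    exact Finset.sum_congr rfl fun i _ => real_inner_smul_left _ _ _
  have hmm : ‖m‖ ^ 2 = ∑ s, ∑ t, l s * l t * ⟪x s, x t⟫ := by
    rw [← real_inner_self_eq_norm_sq, hinner]
    refine Finset.sum_congr rfl fun s _ => ?_
    rw [real_inner_comm, hinner, Finset.mul_sum]
    refine Finset.sum_congr rfl fun t _ => ?_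
    rw [real_inner_comm]; ring
  -- full double sum
  have hfull : ∑ s, ∑ t, l s * l t * ‖x s - x t‖ ^ 2
      = 2 * (∑ i, l i * ‖x i‖ ^ 2) - 2 * ‖m‖ ^ 2 := by
    have expand : ∀ s t : Fin N, l s * l t * ‖x s - x t‖ ^ 2
        = (l s * ‖x s‖ ^ 2) * l t + l s * (l t * ‖x t‖ ^ 2)
          - 2 * (l s * l t * ⟪x s, x t⟫) := by
      intro s t; rw [norm_sub_sq_real]; ring
    simp only [expand, Finset.sum_sub_distrib, Finset.sum_add_distrib, ← Finset.mul_sum,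
      ← Finset.sum_mul, hl, mul_one, one_mul, hmm]
    ring
  -- pairs
  have hpairs : 2 * (∑ s, ∑ t, if s < t then l s * l t * ‖x s - x t‖ ^ 2 else 0)
      = ∑ s, ∑ t, l s * l t * ‖x s - x t‖ ^ 2 := by
    have tri : ∀ s t : Fin N, l s * l t * ‖x s - x t‖ ^ 2
        = (if s < t then l s * l t * ‖x s - x t‖ ^ 2 else 0)
          + (if t < s then l s * l t * ‖x s - x t‖ ^ 2 else 0) := by
      intro s t
      rcases lt_trichotomy s t with h | h | h
      · rw [if_pos h, if_neg (asymm h), add_zero]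
      · subst h; simp
      · rw [if_neg (asymm h), if_pos h, zero_add]
    calc 2 * (∑ s, ∑ t, if s < t then l s * l t * ‖x s - x t‖ ^ 2 else 0)
        = (∑ s, ∑ t, if s < t then l s * l t * ‖x s - x t‖ ^ 2 else 0)
          + (∑ s, ∑ t, if t < s then l s * l t * ‖x s - x t‖ ^ 2 else 0) := by
          rw [two_mul]
          congr 1
          rw [Finset.sum_comm]
          refine Finset.sum_congr rfl fun s _ => Finset.sum_congr rfl fun t _ => ?_
          rw [norm_sub_rev]; ring_nf
      _ = ∑ s, ∑ t, l s * l t * ‖x s - x t‖ ^ 2 := by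
          rw [← Finset.sum_add_distrib]
          refine Finset.sum_congr rfl fun s _ => ?_
          rw [← Finset.sum_add_distrib]
          exact Finset.sum_congr rfl fun t _ => (tri s t).symm
  have hLHS : ∑ i, l i * ‖x i - y‖ ^ 2
      = ∑ i, l i * ‖x i‖ ^ 2 - 2 * ⟪m, y⟫ + ‖y‖ ^ 2 := by
    have expand : ∀ i, l i * ‖x i - y‖ ^ 2
        = l i * ‖x i‖ ^ 2 - 2 * (l i * ⟪x i, y⟫) + ‖y‖ ^ 2 * l i := by
      intro i; rw [norm_sub_sq_real]; ring
    simp only [expand, Finset.sum_add_distrib, Finset.sum_sub_distrib, ← Finset.mul_sum,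
      ← Finset.sum_mul, hl, mul_one]
    linarith [hinner y]
  have hRHS : ‖y - m‖ ^ 2 = ‖y‖ ^ 2 - 2 * ⟪m, y⟫ + ‖m‖ ^ 2 := by
    rw [norm_sub_sq_real, real_inner_comm]
  have hp2 : (∑ s, ∑ t, if s < t then l s * l t * ‖x s - x t‖ ^ 2 else 0)
      = (∑ i, l i * ‖x i‖ ^ 2) - ‖m‖ ^ 2 := by
    have := hfull ▸ hpairs
    linarith
  linarith [hLHS, hRHS, hp2]


section PtLemmas
variable {d N : ℕ}

/-- The real-valued pair interaction cost. -/
def phiR (l : Fin N → ℝ) (x : Fin N → Pt d) : ℝ :=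
  ∑ s, ∑ t, if s < t then l s * l t * ‖x s - x t‖ ^ 2 else 0

lemma phiR_nonneg {l : Fin N → ℝ} (hl : ∀ i, 0 < l i) (x : Fin N → Pt d) : 0 ≤ phiR l x := by
  refine Finset.sum_nonneg fun s _ => Finset.sum_nonneg fun t _ => ?_
  by_cases h : s < t <;> simp only [h, if_true, if_false, le_refl]
  exact mul_nonneg (mul_nonneg (hl s).le (hl t).le) (sq_nonneg _)

lemma ofReal_phi {l : Fin N → ℝ} (hl : ∀ i, 0 < l i) (x : Fin N → Pt d) :
    (∑ s, ∑ t, if s < t then ENNReal.ofReal (l s * l t * ‖x s - x t‖ ^ 2) else 0)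
      = ENNReal.ofReal (phiR l x) := by
  rw [phiR, ENNReal.ofReal_sum_of_nonneg (fun s _ => Finset.sum_nonneg fun t _ => by
    by_cases h : s < t <;> simp only [h, if_true, if_false, le_refl]
    exact mul_nonneg (mul_nonneg (hl s).le (hl t).le) (sq_nonneg _))]
  refine Finset.sum_congr rfl fun s _ => ?_
  rw [ENNReal.ofReal_sum_of_nonneg (fun t _ => by
    by_cases h : s < t <;> simp only [h, if_true, if_false, le_refl]
    exact mul_nonneg (mul_nonneg (hl s).le (hl t).le) (sq_nonneg _))]
  refine Finset.sum_congr rfl fun t _ => ?_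
  by_cases h : s < t <;> simp [h]

lemma mot_eq (l : Fin N → ℝ) (hl : ∀ i, 0 < l i) (π : Measure (Fin N → Pt d)) :
    MOT l π = ∫⁻ x, ENNReal.ofReal (phiR l x) ∂π :=
  lintegral_congr fun x => ofReal_phi hl x

lemma wmean_meas (l : Fin N → ℝ) : Measurable (wmean l : (Fin N → Pt d) → Pt d) := by
  have : Continuous (wmean l : (Fin N → Pt d) → Pt d) :=
    continuous_finset_sum Finset.univ (fun i _ => (continuous_apply i).const_smul (l i))
  exact this.measurable

lemma cost_meas : Measurable fun p : Pt d × Pt d => ENNReal.ofReal (‖p.1 - p.2‖ ^ 2) := by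
  have : Continuous fun p : Pt d × Pt d => ENNReal.ofReal (‖p.1 - p.2‖ ^ 2) :=
    ENNReal.continuous_ofReal.comp (((continuous_fst.sub continuous_snd).norm).pow 2)
  exact this.measurable

lemma sum_ofReal_sq {l : Fin N → ℝ} (hl : InSimplex l) (x : Fin N → Pt d) (y : Pt d) :
    ∑ i, ENNReal.ofReal (l i) * ENNReal.ofReal (‖x i - y‖ ^ 2)
      = ENNReal.ofReal (phiR l x) + ENNReal.ofReal (‖y - wmean l x‖ ^ 2) := by
  have h1 : ∀ i : Fin N, ENNReal.ofReal (l i) * ENNReal.ofReal (‖x i - y‖ ^ 2)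
      = ENNReal.ofReal (l i * ‖x i - y‖ ^ 2) := fun i => (ENNReal.ofReal_mul (hl.1 i).le).symm
  simp only [h1]
  rw [← ENNReal.ofReal_sum_of_nonneg (fun i _ => mul_nonneg (hl.1 i).le (sq_nonneg _)),
    key_identity l hl.2 x y]
  rw [show (∑ s, ∑ t, if s < t then l s * l t * ‖x s - x t‖ ^ 2 else 0) = phiR l x from rfl,
    show (∑ i, l i • x i) = wmean l x from rfl,
    ENNReal.ofReal_add (phiR_nonneg hl.1 x) (sq_nonneg _)]

lemma psi_le_mot (μ : Fin N → Measure (Pt d)) {l : Fin N → ℝ} (hl : InSimplex l)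
    (π : Measure (Fin N → Pt d)) (hπ : IsPlan μ π) :
    Psi l μ (π.map (wmean l)) ≤ MOT l π := by
  have hm := wmean_meas (d := d) l
  have hπp : IsProbabilityMeasure π := hπ.1
  have step : ∀ i, W2sq (μ i) (π.map (wmean l)) ≤
      ∫⁻ x, ENNReal.ofReal (‖x i - wmean l x‖ ^ 2) ∂π := by
    intro i
    have hpair : Measurable (fun x : Fin N → Pt d => (x i, wmean l x)) :=
      (measurable_pi_apply i).prodMk hm
    refine sInf_le ⟨π.map (fun x => (x i, wmean l x)), ⟨?_, ?_, ?_⟩, ?_⟩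
    · exact Measure.isProbabilityMeasure_map hpair.aemeasurable
    · rw [Measure.map_map measurable_fst hpair]; exact hπ.2 i
    · rw [Measure.map_map measurable_snd hpair]; rfl
    · rw [lintegral_map cost_meas hpair]
  calc Psi l μ (π.map (wmean l))
      ≤ ∑ i, ENNReal.ofReal (l i) * ∫⁻ x, ENNReal.ofReal (‖x i - wmean l x‖ ^ 2) ∂π :=
        Finset.sum_le_sum fun i _ => mul_le_mul_right (step i) _
    _ = ∑ i, ∫⁻ x, ENNReal.ofReal (l i) * ENNReal.ofReal (‖x i - wmean l x‖ ^ 2) ∂π := by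
        refine Finset.sum_congr rfl fun i _ => ?_
        rw [lintegral_const_mul _ ?_]
        exact ENNReal.measurable_ofReal.comp
          (((continuous_apply i).sub (continuous_finset_sum Finset.univ
            (fun j _ => (continuous_apply j).const_smul (l j)))).norm.pow 2).measurable
    _ = ∫⁻ x, ∑ i, ENNReal.ofReal (l i) * ENNReal.ofReal (‖x i - wmean l x‖ ^ 2) ∂π := by
        rw [lintegral_finset_sum]
        intro i _
        refine (Measurable.const_mul ?_ _)
        exact ENNReal.measurable_ofReal.comp
          (((continuous_apply i).sub (continuous_finset_sum Finset.univ
            (fun j _ => (continuous_apply j).const_smul (l j)))).norm.pow 2).measurable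
    _ = ∫⁻ x, ENNReal.ofReal (phiR l x) ∂π := by
        refine lintegral_congr fun x => ?_
        rw [sum_ofReal_sq hl x (wmean l x)]
        simp
    _ = MOT l π := (mot_eq l hl.1 π).symm

lemma w2_dirac_lt_top (ρ : Measure (Pt d)) (hp : IsProbabilityMeasure ρ)
    (S : Finset (Pt d)) (hS : ρ ((↑S : Set (Pt d))ᶜ) = 0) :
    W2sq ρ (Measure.dirac (0 : Pt d)) < ⊤ := by
  have hpair : Measurable (fun a : Pt d => (a, (0 : Pt d))) :=
    measurable_id.prodMk measurable_const
  have hcoup : IsCoupling ρ (Measure.dirac (0 : Pt d)) (ρ.map (fun a => (a, (0 : Pt d)))) := by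
    refine ⟨Measure.isProbabilityMeasure_map hpair.aemeasurable, ?_, ?_⟩
    · rw [Measure.map_map measurable_fst hpair]
      exact Measure.map_id
    · rw [Measure.map_map measurable_snd hpair]
      show ρ.map (fun _ => (0 : Pt d)) = _
      rw [Measure.map_const, measure_univ, one_smul]
  refine lt_of_le_of_lt (sInf_le ⟨_, hcoup, rfl⟩) ?_
  rw [lintegral_map cost_meas hpair]
  rw [lintegral_of_null_compl hS]
  refine ENNReal.sum_lt_top.mpr fun a _ => ?_
  exact ENNReal.mul_lt_top (measure_lt_top ρ _) ENNReal.ofReal_lt_top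

end PtLemmas

section Helpers2
variable {α : Type*} [MeasurableSpace α]

lemma withDensity_finset_sum (μ : Measure α) {ι : Type*} (s : Finset ι)
    (f : ι → α → ℝ≥0∞) (hf : ∀ i ∈ s, Measurable (f i)) :
    μ.withDensity (fun y => ∑ i ∈ s, f i y) = ∑ i ∈ s, μ.withDensity (f i) := by
  classical
  induction s using Finset.induction_on with
  | empty => simp [show (fun _ : α => (0:ℝ≥0∞)) = 0 from rfl]
  | @insert a s ha ih =>
    rw [Finset.sum_insert ha,
      show (fun y => ∑ i ∈ insert a s, f i y)
        = f a + (fun y => ∑ i ∈ s, f i y) from funext fun y => by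
          rw [Finset.sum_insert ha]; rfl,
      withDensity_add_left (hf a (Finset.mem_insert_self a s)),
      ih (fun i hi => hf i (Finset.mem_insert_of_mem hi))]

end Helpers2

section Core
variable {d N : ℕ}

lemma core (μ : Fin N → Measure (Pt d)) (hμp : ∀ i, IsProbabilityMeasure (μ i))
    (S : Fin N → Finset (Pt d)) (hS : ∀ i, μ i ((↑(S i) : Set (Pt d))ᶜ) = 0)
    {l : Fin N → ℝ} (hl : InSimplex l)
    (nuhat : Measure (Pt d)) (hν : IsProbabilityMeasure nuhat)
    (γ : Fin N → Measure (Pt d × Pt d)) (hγ : ∀ i, IsCoupling (μ i) nuhat (γ i)) :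
    ∃ π : Measure (Fin N → Pt d), ∃ D : ℝ≥0∞,
      IsPlan μ π ∧
      (∃ w : (Fin N → Pt d) → ℝ≥0∞,
         π = ∑ x ∈ Fintype.piFinset S, w x • Measure.dirac x) ∧
      (∑ i, ENNReal.ofReal (l i) * ∫⁻ p, ENNReal.ofReal (‖p.1 - p.2‖ ^ 2) ∂(γ i))
        = MOT l π + D ∧
      (D = 0 → nuhat = π.map (wmean l)) ∧
      (∀ g : Pt d → ℝ≥0∞, Measurable g →
        (∀ y, ∀ x ∈ Fintype.piFinset S, g y ≤ ENNReal.ofReal (‖y - wmean l x‖ ^ 2)) →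
        ∫⁻ y, g y ∂nuhat ≤ D) := by
  classical
  haveI := hν
  haveI := fun i => hμp i
  set K := Fintype.piFinset S with hK
  set nu : (i : Fin N) → Pt d → Measure (Pt d) :=
    fun i a => ((γ i).restrict ({a} ×ˢ Set.univ)).map Prod.snd with hnu
  set f : Fin N → Pt d → Pt d → ℝ≥0∞ := fun i a => (nu i a).rnDeriv nuhat with hf
  have hfmeas : ∀ i a, Measurable (f i a) := fun i a => Measure.measurable_rnDeriv _ _
  have hle : ∀ i a, nu i a ≤ nuhat := by
    intro i a
    refine Measure.le_iff.mpr fun A hA => ?_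
    rw [hnu, Measure.map_apply measurable_snd hA, Measure.restrict_apply (measurable_snd hA)]
    calc γ i (Prod.snd ⁻¹' A ∩ {a} ×ˢ Set.univ) ≤ γ i (Prod.snd ⁻¹' A) :=
          measure_mono Set.inter_subset_left
      _ = nuhat A := by rw [← (hγ i).2.2, Measure.map_apply measurable_snd hA]
  have hfin : ∀ i a, IsFiniteMeasure (nu i a) := by
    intro i a
    refine ⟨lt_of_le_of_lt (Measure.le_iff'.mp (hle i a) Set.univ) ?_⟩
    simp [measure_univ]
  have hac : ∀ i a, nu i a ≪ nuhat := fun i a => Measure.absolutelyContinuous_of_le (hle i a)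
  have hwd : ∀ i a, nuhat.withDensity (f i a) = nu i a := by
    intro i a
    haveI := hfin i a
    haveI : (nu i a).HaveLebesgueDecomposition nuhat :=
      @Measure.haveLebesgueDecomposition_of_sigmaFinite _ _ _ _ inferInstance inferInstance
    exact Measure.withDensity_rnDeriv_eq (nu i a) nuhat (hac i a)
  have hsp : ∀ a : Pt d, ({a} ×ˢ Set.univ : Set (Pt d × Pt d)) = Prod.fst ⁻¹' {a} := by
    intro a; ext p
    simp only [Set.mem_prod, Set.mem_singleton_iff, Set.mem_univ, and_true, Set.mem_preimage]
  have hmass : ∀ i a, nu i a Set.univ = μ i {a} := by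
    intro i a
    rw [hnu, Measure.map_apply measurable_snd MeasurableSet.univ, Set.preimage_univ,
      Measure.restrict_apply MeasurableSet.univ, Set.univ_inter, hsp,
      ← Measure.map_apply measurable_fst (measurableSet_singleton a), (hγ i).2.1]
  have hlint_f : ∀ i a, ∫⁻ y, f i a y ∂nuhat = μ i {a} := by
    intro i a
    have h1 := congrArg (fun ρ : Measure (Pt d) => ρ Set.univ) (hwd i a)
    simpa [withDensity_apply _ MeasurableSet.univ, hmass i a] using h1
  have hconc : ∀ i, γ i ((↑(S i) ×ˢ (Set.univ : Set (Pt d)) : Set (Pt d × Pt d))ᶜ) = 0 := by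
    intro i
    have h1 : ((↑(S i) ×ˢ (Set.univ : Set (Pt d)) : Set (Pt d × Pt d)))ᶜ
        = Prod.fst ⁻¹' ((↑(S i) : Set (Pt d))ᶜ) := by ext p; simp
    rw [h1, ← Measure.map_apply measurable_fst (S i).measurableSet.compl, (hγ i).2.1]
    exact hS i
  -- sum of slices is nuhat
  have hsum1 : ∀ i, ∀ᵐ y ∂nuhat, ∑ a ∈ S i, f i a y = 1 := by
    intro i
    have hslice : ∀ a (A : Set (Pt d)), MeasurableSet A → nu i a A = γ i ({a} ×ˢ A) := by
      intro a A hA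
      rw [hnu, Measure.map_apply measurable_snd hA, Measure.restrict_apply (measurable_snd hA)]
      congr 1; ext p
      simp only [Set.mem_inter_iff, Set.mem_preimage, Set.mem_prod, Set.mem_singleton_iff,
        Set.mem_univ, and_true, and_comm, true_and]
    have hsum_nu : ∀ A, MeasurableSet A → ∑ a ∈ S i, nu i a A = nuhat A := by
      intro A hA
      have h2 : ∑ a ∈ S i, γ i ({a} ×ˢ A) = γ i (↑(S i) ×ˢ A) := by
        rw [show ((↑(S i) : Set (Pt d)) ×ˢ A : Set (Pt d × Pt d)) = ⋃ a ∈ S i, ({a} ×ˢ A) by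
          ext p
          simp only [Set.mem_prod, Finset.mem_coe, Set.mem_iUnion, Set.mem_singleton_iff]
          constructor
          · rintro ⟨h1, h2⟩; exact ⟨p.1, h1, rfl, h2⟩
          · rintro ⟨a, ha, rfl, h2⟩; exact ⟨ha, h2⟩]
        rw [measure_biUnion_finset ?_ (fun b _ => (measurableSet_singleton b).prod hA)]
        intro a _ b _ hab
        refine Set.disjoint_left.mpr fun p hp hq => hab ?_
        simp only [Set.mem_prod, Set.mem_singleton_iff] at hp hq
        rw [← hp.1, ← hq.1]
      have h5 : γ i (Set.univ ×ˢ A) = nuhat A := by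
        rw [show (Set.univ ×ˢ A : Set (Pt d × Pt d)) = Prod.snd ⁻¹' A by ext p; simp,
          ← Measure.map_apply measurable_snd hA, (hγ i).2.2]
      have h3 : γ i (Set.univ ×ˢ A) ≤ γ i (↑(S i) ×ˢ A) := by
        calc γ i (Set.univ ×ˢ A)
            ≤ γ i ((↑(S i) ×ˢ A) ∪ (↑(S i) ×ˢ (Set.univ : Set (Pt d)))ᶜ) := by
              refine measure_mono fun p hp => ?_
              by_cases hmem : p.1 ∈ S i
              · exact Or.inl ⟨hmem, hp.2⟩
              · exact Or.inr (by simp [hmem])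
          _ ≤ γ i (↑(S i) ×ˢ A) + γ i ((↑(S i) ×ˢ (Set.univ : Set (Pt d)))ᶜ) :=
              measure_union_le _ _
          _ = γ i (↑(S i) ×ˢ A) := by rw [hconc i, add_zero]
      have h4 : γ i (↑(S i) ×ˢ A) ≤ γ i (Set.univ ×ˢ A) :=
        measure_mono (Set.prod_mono (Set.subset_univ _) le_rfl)
      simp only [fun a => hslice a A hA]
      rw [h2, le_antisymm h4 h3, h5]
    have hwds : nuhat.withDensity (fun y => ∑ a ∈ S i, f i a y) = nuhat := by
      rw [withDensity_finset_sum nuhat (S i) _ (fun a _ => hfmeas i a)]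
      ext A hA
      rw [Measure.finset_sum_apply]
      simp only [fun a => hwd i a]
      exact hsum_nu A hA
    have hint : ∫⁻ y, ∑ a ∈ S i, f i a y ∂nuhat ≠ ⊤ := by
      rw [lintegral_finset_sum _ (fun a _ => hfmeas i a)]
      simp only [fun a => hlint_f i a]
      refine ne_top_of_le_ne_top ENNReal.one_ne_top ?_
      rw [← measure_finset_eq_sum (μ i) (S i)]
      exact prob_le_one
    have heq : nuhat.withDensity (fun y => ∑ a ∈ S i, f i a y)
        = nuhat.withDensity (fun _ => 1) := by
      rw [hwds, show (fun _ : Pt d => (1:ℝ≥0∞)) = (1 : Pt d → ℝ≥0∞) from rfl, withDensity_one]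
    have := (withDensity_eq_iff
      (Finset.measurable_sum (S i) (fun a _ => hfmeas i a)).aemeasurable
      aemeasurable_const hint).mp heq
    filter_upwards [this] with y hy using hy

  -- cost in density form
  have hcostmeas : ∀ (a : Pt d), Measurable (fun y : Pt d => ENNReal.ofReal (‖a - y‖ ^ 2)) := by
    intro a
    exact (ENNReal.continuous_ofReal.comp
      (((continuous_const.sub continuous_id).norm).pow 2)).measurable
  have hgm : ∀ (z : Pt d), Measurable (fun y : Pt d => ENNReal.ofReal (‖y - z‖ ^ 2)) := by
    intro z
    exact (ENNReal.continuous_ofReal.comp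
      (((continuous_id.sub continuous_const).norm).pow 2)).measurable
  have hcost : ∀ i, ∫⁻ p, ENNReal.ofReal (‖p.1 - p.2‖ ^ 2) ∂(γ i)
      = ∑ a ∈ S i, ∫⁻ y, f i a y * ENNReal.ofReal (‖a - y‖ ^ 2) ∂nuhat := by
    intro i
    have hE : MeasurableSet (↑(S i) ×ˢ (Set.univ : Set (Pt d)) : Set (Pt d × Pt d)) :=
      (S i).measurableSet.prod MeasurableSet.univ
    have step1 : ∫⁻ p, ENNReal.ofReal (‖p.1 - p.2‖ ^ 2) ∂(γ i)
        = ∫⁻ p in (↑(S i) ×ˢ Set.univ), ENNReal.ofReal (‖p.1 - p.2‖ ^ 2) ∂(γ i) := by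
      conv_lhs => rw [← Measure.restrict_add_restrict_compl (μ := γ i) hE]
      rw [lintegral_add_measure, Measure.restrict_eq_zero.mpr (hconc i), lintegral_zero_measure,
        add_zero]
    have hsetEq : (↑(S i) ×ˢ (Set.univ : Set (Pt d)) : Set (Pt d × Pt d))
        = ⋃ a ∈ S i, ({a} ×ˢ (Set.univ : Set (Pt d))) := by
      ext p
      simp only [Set.mem_prod, Finset.mem_coe, Set.mem_univ, and_true, Set.mem_iUnion,
        Set.mem_singleton_iff]
      constructor
      · intro h1; exact ⟨p.1, h1, rfl⟩
      · rintro ⟨a, ha, rfl⟩; exact ha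
    rw [step1, hsetEq, lintegral_biUnion_finset ?_
      (fun b _ => (measurableSet_singleton b).prod MeasurableSet.univ)]
    swap
    · intro a _ b _ hab
      refine Set.disjoint_left.mpr fun p hp hq => hab ?_
      simp only [Set.mem_prod, Set.mem_singleton_iff] at hp hq
      rw [← hp.1, ← hq.1]
    refine Finset.sum_congr rfl fun a _ => ?_
    have e1 : ∫⁻ p in ({a} ×ˢ (Set.univ : Set (Pt d))), ENNReal.ofReal (‖p.1 - p.2‖ ^ 2) ∂(γ i)
        = ∫⁻ p in ({a} ×ˢ (Set.univ : Set (Pt d))), ENNReal.ofReal (‖a - p.2‖ ^ 2) ∂(γ i) := by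
      refine setLIntegral_congr_fun ((measurableSet_singleton a).prod MeasurableSet.univ)
        (fun p hp => ?_)
      have hp1 : p.1 = a := hp.1
      rw [hp1]
    have e2 : ∫⁻ p in ({a} ×ˢ (Set.univ : Set (Pt d))), ENNReal.ofReal (‖a - p.2‖ ^ 2) ∂(γ i)
        = ∫⁻ y, ENNReal.ofReal (‖a - y‖ ^ 2) ∂(nu i a) := by
      rw [hnu]
      rw [lintegral_map (hcostmeas a) measurable_snd]
    rw [e1, e2, ← hwd i a, lintegral_withDensity_eq_lintegral_mul _ (hfmeas i a) (hcostmeas a)]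
    rfl
  -- the product density, weights, candidate plan and defect
  set FF : (Fin N → Pt d) → Pt d → ℝ≥0∞ := fun x y => ∏ j, f j (x j) y with hFF
  have hFFmeas : ∀ x, Measurable (FF x) :=
    fun x => Finset.measurable_prod _ fun j _ => hfmeas j (x j)
  set w : (Fin N → Pt d) → ℝ≥0∞ := fun x => ∫⁻ y, FF x y ∂nuhat with hw
  set π : Measure (Fin N → Pt d) := ∑ x ∈ K, w x • Measure.dirac x with hπ
  set D : ℝ≥0∞ := ∫⁻ y, (∑ x ∈ K, FF x y * ENNReal.ofReal (‖y - wmean l x‖ ^ 2)) ∂nuhat with hD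
  have haeall : ∀ᵐ y ∂nuhat, ∀ i, ∑ a ∈ S i, f i a y = 1 := ae_all_iff.mpr hsum1
  have hCmeas : Measurable fun y => ∑ x ∈ K, FF x y * ENNReal.ofReal (‖y - wmean l x‖ ^ 2) :=
    Finset.measurable_sum _ fun x _ => (hFFmeas x).mul (hgm (wmean l x))
  -- marginal computation
  have hmarg : ∀ (i : Fin N) (A : Set (Pt d)), MeasurableSet A →
      ∑ x ∈ K, (if x i ∈ A then w x else 0) = μ i A := by
    intro i A hA
    have hterm : ∀ x : Fin N → Pt d, (if x i ∈ A then w x else 0)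
        = ∫⁻ y, FF x y * (if x i ∈ A then 1 else 0) ∂nuhat := by
      intro x
      by_cases h : x i ∈ A <;> simp [h, hw]
    simp only [hterm]
    rw [← lintegral_finset_sum _ (fun x _ => (hFFmeas x).mul_const _)]
    have hptwise : ∀ᵐ y ∂nuhat, (∑ x ∈ K, FF x y * (if x i ∈ A then 1 else 0))
        = ∑ a ∈ S i, f i a y * (if a ∈ A then 1 else 0) := by
      filter_upwards [haeall] with y hy
      exact piFinset_mul_sum S (fun j a => f j a y) i (fun a => if a ∈ A then 1 else 0) hy
    rw [lintegral_congr_ae hptwise, lintegral_finset_sum _ (fun a _ => (hfmeas i a).mul_const _),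
      apply_of_null_compl (hS i) hA]
    refine Finset.sum_congr rfl fun a _ => ?_
    by_cases h : a ∈ A <;> simp [h, hlint_f i a]
  have htotal : ∑ x ∈ K, w x = 1 := by
    rw [show ∑ x ∈ K, w x = ∫⁻ y, ∑ x ∈ K, FF x y ∂nuhat from
      (lintegral_finset_sum _ (fun x _ => hFFmeas x)).symm]
    have hae1 : ∀ᵐ y ∂nuhat, ∑ x ∈ K, FF x y = 1 := by
      filter_upwards [haeall] with y hy
      exact piFinset_sum_one S (fun j a => f j a y) hy
    rw [lintegral_congr_ae hae1, lintegral_one, measure_univ]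
  have hπprob : IsProbabilityMeasure π := by
    constructor
    rw [hπ, Measure.finset_sum_apply]
    simp only [Measure.smul_apply, measure_univ, smul_eq_mul, mul_one]
    exact htotal
  have hplanmarg : ∀ i, π.map (fun x => x i) = μ i := by
    intro i
    rw [hπ, show (∑ x ∈ K, w x • Measure.dirac x) = ∑ x ∈ K, w x • Measure.dirac (id x) from rfl,
      atomic_map K w id (measurable_pi_apply i)]
    ext A hA
    rw [show (∑ x ∈ K, w x • Measure.dirac ((fun x : Fin N → Pt d => x i) (id x)))
        = ∑ x ∈ K, w x • Measure.dirac ((fun x : Fin N → Pt d => x i) x) from rfl,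
      atomic_apply K w (fun x => x i) hA]
    exact hmarg i A hA
  -- cost decomposition
  have hdecomp : ∑ i, ENNReal.ofReal (l i) * ∫⁻ p, ENNReal.ofReal (‖p.1 - p.2‖ ^ 2) ∂(γ i)
      = (∑ x ∈ K, w x * ENNReal.ofReal (phiR l x)) + D := by
    have stepA : ∀ i, ENNReal.ofReal (l i) * ∫⁻ p, ENNReal.ofReal (‖p.1 - p.2‖ ^ 2) ∂(γ i)
        = ∫⁻ y, ∑ a ∈ S i, f i a y * (ENNReal.ofReal (l i) * ENNReal.ofReal (‖a - y‖ ^ 2))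
            ∂nuhat := by
      intro i
      rw [hcost i, Finset.mul_sum,
        lintegral_finset_sum _ (fun a _ => (hfmeas i a).fun_mul ((hcostmeas a).const_mul _))]
      refine Finset.sum_congr rfl fun a _ => ?_
      rw [← lintegral_const_mul _ ((hfmeas i a).fun_mul (hcostmeas a))]
      refine lintegral_congr fun y => ?_
      ring
    simp only [stepA]
    rw [← lintegral_finset_sum _ (fun i _ => Finset.measurable_sum _
      (fun a _ => (hfmeas i a).fun_mul ((hcostmeas a).const_mul _)))]
    have hptw : ∀ᵐ y ∂nuhat,
        (∑ i, ∑ a ∈ S i, f i a y * (ENNReal.ofReal (l i) * ENNReal.ofReal (‖a - y‖ ^ 2)))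
        = (∑ x ∈ K, FF x y * ENNReal.ofReal (phiR l x))
          + (∑ x ∈ K, FF x y * ENNReal.ofReal (‖y - wmean l x‖ ^ 2)) := by
      filter_upwards [haeall] with y hy
      have h1 : ∀ i : Fin N,
          ∑ a ∈ S i, f i a y * (ENNReal.ofReal (l i) * ENNReal.ofReal (‖a - y‖ ^ 2))
          = ∑ x ∈ K, FF x y * (ENNReal.ofReal (l i) * ENNReal.ofReal (‖x i - y‖ ^ 2)) :=
        fun i => (piFinset_mul_sum S (fun j a => f j a y) i
          (fun a => ENNReal.ofReal (l i) * ENNReal.ofReal (‖a - y‖ ^ 2)) hy).symm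
      simp only [h1]
      rw [Finset.sum_comm]
      rw [← Finset.sum_add_distrib]
      refine Finset.sum_congr rfl fun x _ => ?_
      rw [← Finset.mul_sum, sum_ofReal_sq hl x y, mul_add]
    rw [lintegral_congr_ae hptw, lintegral_add_left
      (Finset.measurable_sum _ fun x _ => (hFFmeas x).mul_const _)]
    congr 1
    rw [lintegral_finset_sum _ (fun x _ => (hFFmeas x).mul_const _)]
    exact Finset.sum_congr rfl fun x _ => lintegral_mul_const _ (hFFmeas x)
  have hMOT : MOT l π = ∑ x ∈ K, w x * ENNReal.ofReal (phiR l x) := by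
    rw [mot_eq l hl.1, hπ,
      show (∑ x ∈ K, w x • Measure.dirac x) = ∑ x ∈ K, w x • Measure.dirac (id x) from rfl,
      atomic_lintegral K w id (fun x => ENNReal.ofReal (phiR l x))]
    rfl
  refine ⟨π, D, ⟨hπprob, hplanmarg⟩, ⟨w, hπ⟩, by rw [hMOT]; exact hdecomp, ?_, ?_⟩
  · -- D = 0 → nuhat = π.map (wmean l)
    intro h0
    have hCae : ∀ᵐ y ∂nuhat,
        (∑ x ∈ K, FF x y * ENNReal.ofReal (‖y - wmean l x‖ ^ 2)) = 0 := by
      have := (lintegral_eq_zero_iff hCmeas).mp h0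
      filter_upwards [this] with y hy using hy
    refine Measure.ext fun A hA => ?_
    symm
    rw [hπ, show (∑ x ∈ K, w x • Measure.dirac x) = ∑ x ∈ K, w x • Measure.dirac (id x) from rfl,
      atomic_map K w id (wmean_meas l),
      show (∑ x ∈ K, w x • Measure.dirac (wmean l (id x)))
        = ∑ x ∈ K, w x • Measure.dirac (wmean l x) from rfl,
      atomic_apply K w (wmean l) hA]
    have hterm : ∀ x : Fin N → Pt d, (if wmean l x ∈ A then w x else 0)
        = ∫⁻ y, FF x y * (if wmean l x ∈ A then 1 else 0) ∂nuhat := by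
      intro x
      by_cases h : wmean l x ∈ A <;> simp [h, hw]
    simp only [hterm]
    rw [← lintegral_finset_sum _ (fun x _ => (hFFmeas x).mul_const _)]
    have hpt : ∀ᵐ y ∂nuhat, (∑ x ∈ K, FF x y * (if wmean l x ∈ A then 1 else 0))
        = (if y ∈ A then 1 else 0) := by
      filter_upwards [haeall, hCae] with y hy hC
      have hC' : ∀ x ∈ K, FF x y * ENNReal.ofReal (‖y - wmean l x‖ ^ 2) = 0 :=
        fun x hx => (Finset.sum_eq_zero_iff.mp hC) x hx
      have hterm2 : ∀ x ∈ K, FF x y * (if wmean l x ∈ A then 1 else 0)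
          = FF x y * (if y ∈ A then 1 else 0) := by
        intro x hx
        rcases mul_eq_zero.mp (hC' x hx) with h | h
        · rw [h, zero_mul, zero_mul]
        · have h2 : ‖y - wmean l x‖ ^ 2 ≤ 0 := ENNReal.ofReal_eq_zero.mp h
          have h3 : ‖y - wmean l x‖ ^ 2 = 0 := le_antisymm h2 (sq_nonneg _)
          have h4 : y = wmean l x := by
            rw [← sub_eq_zero]
            have h5 : ‖y - wmean l x‖ = 0 := by
              have := sq_eq_zero_iff.mp h3
              exact this
            exact norm_eq_zero.mp h5
          rw [h4]
      rw [Finset.sum_congr rfl hterm2, ← Finset.sum_mul,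
        piFinset_sum_one S (fun j a => f j a y) hy, one_mul]
    rw [lintegral_congr_ae hpt]
    calc ∫⁻ y, (if y ∈ A then (1:ℝ≥0∞) else 0) ∂nuhat
        = ∫⁻ y, A.indicator 1 y ∂nuhat :=
          lintegral_congr fun y => by simp [Set.indicator_apply]
      _ = nuhat A := lintegral_indicator_one hA
  · -- lower bound on D
    intro g hgmeas hgle
    calc ∫⁻ y, g y ∂nuhat = ∫⁻ y, ∑ x ∈ K, FF x y * g y ∂nuhat := by
          refine lintegral_congr_ae ?_
          filter_upwards [haeall] with y hy
          rw [← Finset.sum_mul, piFinset_sum_one S (fun j a => f j a y) hy, one_mul]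
      _ ≤ D := by
          rw [hD]
          exact lintegral_mono fun y =>
            Finset.sum_le_sum fun x hx => mul_le_mul_right (hgle y x hx) _

end Core

section Phase1
variable {d N : ℕ}

lemma exists_opt_coupling (ρ ν : Measure (Pt d)) (hρ : IsProbabilityMeasure ρ)
    (hν : IsProbabilityMeasure ν) (S T : Finset (Pt d))
    (hρS : ρ ((↑S : Set (Pt d))ᶜ) = 0) (hνT : ν ((↑T : Set (Pt d))ᶜ) = 0) :
    ∃ γ, IsCoupling ρ ν γ ∧ ∫⁻ p, ENNReal.ofReal (‖p.1 - p.2‖ ^ 2) ∂γ = W2sq ρ ν := by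
  classical
  set c : Pt d × Pt d → ℝ≥0∞ := fun p => ENNReal.ofReal (‖p.1 - p.2‖ ^ 2) with hc
  set P : Set ((Pt d × Pt d) → ℝ≥0∞) := {q | (∀ a ∈ S, ∑ b ∈ T, q (a,b) = ρ {a}) ∧
    (∀ b ∈ T, ∑ a ∈ S, q (a,b) = ν {b})} with hP
  set cost : ((Pt d × Pt d) → ℝ≥0∞) → ℝ≥0∞ := fun q => ∑ p ∈ S ×ˢ T, q p * c p with hcost
  have hSmass : ρ (↑S) = 1 := by
    have := measure_add_measure_compl (μ := ρ) S.measurableSet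
    rw [hρS, add_zero, measure_univ] at this; exact this
  have hTmass : ν (↑T) = 1 := by
    have := measure_add_measure_compl (μ := ν) T.measurableSet
    rw [hνT, add_zero, measure_univ] at this; exact this
  have mk_coupling : ∀ q ∈ P, IsCoupling ρ ν (∑ p ∈ S ×ˢ T, q p • Measure.dirac p) ∧
      ∫⁻ p, c p ∂(∑ p ∈ S ×ˢ T, q p • Measure.dirac p) = cost q := by
    intro q hq
    have htot : ∑ p ∈ S ×ˢ T, q p = 1 := by
      rw [Finset.sum_product]
      calc ∑ a ∈ S, ∑ b ∈ T, q (a,b)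
          = ∑ a ∈ S, ρ {a} := Finset.sum_congr rfl (fun a ha => hq.1 a ha)
        _ = 1 := by rw [← measure_finset_eq_sum, hSmass]
    refine ⟨⟨⟨?_⟩, ?_, ?_⟩, ?_⟩
    · rw [Measure.finset_sum_apply]
      simp only [Measure.smul_apply, measure_univ, smul_eq_mul, mul_one]
      exact htot
    · rw [show (∑ p ∈ S ×ˢ T, q p • Measure.dirac p)
          = ∑ p ∈ S ×ˢ T, q p • Measure.dirac (id p) from rfl,
        atomic_map _ q id measurable_fst]
      ext A hA
      rw [show (∑ p ∈ S ×ˢ T, q p • Measure.dirac (Prod.fst (id p)))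
          = ∑ p ∈ S ×ˢ T, q p • Measure.dirac (Prod.fst p) from rfl,
        atomic_apply (S ×ˢ T) q Prod.fst hA, apply_of_null_compl hρS hA, Finset.sum_product]
      refine Finset.sum_congr rfl fun a ha => ?_
      by_cases hmem : a ∈ A
      · simp only [hmem, if_true]
        exact hq.1 a ha
      · simp [hmem]
    · rw [show (∑ p ∈ S ×ˢ T, q p • Measure.dirac p)
          = ∑ p ∈ S ×ˢ T, q p • Measure.dirac (id p) from rfl,
        atomic_map _ q id measurable_snd]
      ext A hA
      rw [show (∑ p ∈ S ×ˢ T, q p • Measure.dirac (Prod.snd (id p)))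
          = ∑ p ∈ S ×ˢ T, q p • Measure.dirac (Prod.snd p) from rfl,
        atomic_apply (S ×ˢ T) q Prod.snd hA, apply_of_null_compl hνT hA, Finset.sum_product,
        Finset.sum_comm]
      refine Finset.sum_congr rfl fun b hb => ?_
      by_cases hmem : b ∈ A
      · simp only [hmem, if_true]
        exact hq.2 b hb
      · simp [hmem]
    · rw [show (∑ p ∈ S ×ˢ T, q p • Measure.dirac p)
          = ∑ p ∈ S ×ˢ T, q p • Measure.dirac (id p) from rfl,
        atomic_lintegral (S ×ˢ T) q id c]
      rfl
  have mk_weights : ∀ γ : Measure (Pt d × Pt d), IsCoupling ρ ν γ →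
      ((fun p => γ {p}) ∈ P ∧ ∫⁻ p, c p ∂γ = cost (fun p => γ {p})) := by
    intro γ hγ
    have hSc : γ (Prod.fst ⁻¹' ((↑S : Set (Pt d))ᶜ)) = 0 := by
      rw [← Measure.map_apply measurable_fst S.measurableSet.compl, hγ.2.1]; exact hρS
    have hTc : γ (Prod.snd ⁻¹' ((↑T : Set (Pt d))ᶜ)) = 0 := by
      rw [← Measure.map_apply measurable_snd T.measurableSet.compl, hγ.2.2]; exact hνT
    have hrow : ∀ a ∈ S, ∑ b ∈ T, γ {(a,b)} = ρ {a} := by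
      intro a ha
      have h1 : ∑ b ∈ T, γ {(a,b)} = γ ({a} ×ˢ (↑T : Set (Pt d))) := by
        rw [show ({a} ×ˢ (↑T : Set (Pt d)) : Set (Pt d × Pt d)) = ⋃ b ∈ T, {(a,b)} by
          ext p
          simp only [Set.mem_prod, Set.mem_singleton_iff, Finset.mem_coe, Set.mem_iUnion]
          constructor
          · rintro ⟨h1, h2⟩
            exact ⟨p.2, h2, by rw [← h1]⟩
          · rintro ⟨b, hb, rfl⟩
            exact ⟨rfl, hb⟩]
        rw [measure_biUnion_finset ?_ (fun b _ => measurableSet_singleton _)]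
        intro b1 _ b2 _ hne
        refine Set.disjoint_left.mpr fun p hp hq2 => hne ?_
        simp only [Set.mem_singleton_iff] at hp hq2
        rw [hp] at hq2
        exact (Prod.mk.injEq _ _ _ _).mp hq2 |>.2
      have h2 : γ ({a} ×ˢ (↑T : Set (Pt d))) = γ ({a} ×ˢ (Set.univ : Set (Pt d))) := by
        refine le_antisymm (measure_mono (Set.prod_mono le_rfl (Set.subset_univ _))) ?_
        calc γ ({a} ×ˢ (Set.univ : Set (Pt d)))
            ≤ γ (({a} ×ˢ (↑T : Set (Pt d))) ∪ Prod.snd ⁻¹' ((↑T : Set (Pt d))ᶜ)) := by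
              refine measure_mono fun p hp => ?_
              by_cases h : p.2 ∈ T
              · exact Or.inl ⟨hp.1, h⟩
              · exact Or.inr h
          _ ≤ γ ({a} ×ˢ (↑T : Set (Pt d))) + γ (Prod.snd ⁻¹' ((↑T : Set (Pt d))ᶜ)) :=
              measure_union_le _ _
          _ = γ ({a} ×ˢ (↑T : Set (Pt d))) := by rw [hTc, add_zero]
      have h3 : γ ({a} ×ˢ (Set.univ : Set (Pt d))) = ρ {a} := by
        rw [show ({a} ×ˢ (Set.univ : Set (Pt d)) : Set (Pt d × Pt d)) = Prod.fst ⁻¹' {a} by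
            ext p
            simp only [Set.mem_prod, Set.mem_singleton_iff, Set.mem_univ, and_true,
              Set.mem_preimage],
          ← Measure.map_apply measurable_fst (measurableSet_singleton a), hγ.2.1]
      rw [h1, h2, h3]
    have hcol : ∀ b ∈ T, ∑ a ∈ S, γ {(a,b)} = ν {b} := by
      intro b hb
      have h1 : ∑ a ∈ S, γ {(a,b)} = γ ((↑S : Set (Pt d)) ×ˢ ({b} : Set (Pt d))) := by
        rw [show ((↑S : Set (Pt d)) ×ˢ ({b} : Set (Pt d)) : Set (Pt d × Pt d))
            = ⋃ a ∈ S, {(a,b)} by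
          ext p
          simp only [Set.mem_prod, Set.mem_singleton_iff, Finset.mem_coe, Set.mem_iUnion]
          constructor
          · rintro ⟨h1, h2⟩
            exact ⟨p.1, h1, by rw [← h2]⟩
          · rintro ⟨a, ha, rfl⟩
            exact ⟨ha, rfl⟩]
        rw [measure_biUnion_finset ?_ (fun a _ => measurableSet_singleton _)]
        intro a1 _ a2 _ hne
        refine Set.disjoint_left.mpr fun p hp hq2 => hne ?_
        simp only [Set.mem_singleton_iff] at hp hq2
        rw [hp] at hq2
        exact (Prod.mk.injEq _ _ _ _).mp hq2 |>.1
      have h2 : γ ((↑S : Set (Pt d)) ×ˢ ({b} : Set (Pt d)))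
          = γ ((Set.univ : Set (Pt d)) ×ˢ ({b} : Set (Pt d))) := by
        refine le_antisymm (measure_mono (Set.prod_mono (Set.subset_univ _) le_rfl)) ?_
        calc γ ((Set.univ : Set (Pt d)) ×ˢ ({b} : Set (Pt d)))
            ≤ γ (((↑S : Set (Pt d)) ×ˢ ({b} : Set (Pt d))) ∪ Prod.fst ⁻¹' ((↑S : Set (Pt d))ᶜ)) := by
              refine measure_mono fun p hp => ?_
              by_cases h : p.1 ∈ S
              · exact Or.inl ⟨h, hp.2⟩
              · exact Or.inr h
          _ ≤ _ + γ (Prod.fst ⁻¹' ((↑S : Set (Pt d))ᶜ)) := measure_union_le _ _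
          _ = γ ((↑S : Set (Pt d)) ×ˢ ({b} : Set (Pt d))) := by rw [hSc, add_zero]
      have h3 : γ ((Set.univ : Set (Pt d)) ×ˢ ({b} : Set (Pt d))) = ν {b} := by
        rw [show ((Set.univ : Set (Pt d)) ×ˢ ({b} : Set (Pt d)) : Set (Pt d × Pt d))
            = Prod.snd ⁻¹' {b} by
            ext p
            simp only [Set.mem_prod, Set.mem_singleton_iff, Set.mem_univ, true_and,
              Set.mem_preimage],
          ← Measure.map_apply measurable_snd (measurableSet_singleton b), hγ.2.2]
      rw [h1, h2, h3]
    refine ⟨⟨hrow, hcol⟩, ?_⟩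
    have hconc : γ ((↑(S ×ˢ T) : Set (Pt d × Pt d))ᶜ) = 0 := by
      refine measure_mono_null ?_
        (measure_union_null hSc hTc)
      intro p hp
      simp only [Set.mem_compl_iff, Finset.mem_coe, Finset.mem_product, not_and] at hp
      by_cases h : p.1 ∈ S
      · exact Or.inr (hp h)
      · exact Or.inl h
    rw [lintegral_of_null_compl hconc c]
  have hsetEq : { c' : ℝ≥0∞ | ∃ γ : Measure (Pt d × Pt d), IsCoupling ρ ν γ ∧
      c' = ∫⁻ p, ENNReal.ofReal (‖p.1 - p.2‖ ^ 2) ∂γ } = cost '' P := by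
    ext c'
    constructor
    · rintro ⟨γ, hγ, rfl⟩
      exact ⟨fun p => γ {p}, (mk_weights γ hγ).1, ((mk_weights γ hγ).2).symm⟩
    · rintro ⟨q, hq, rfl⟩
      exact ⟨_, (mk_coupling q hq).1, ((mk_coupling q hq).2).symm⟩
  have hPclosed : IsClosed P := by
    have hPeq : P = (⋂ a ∈ S, {q : (Pt d × Pt d) → ℝ≥0∞ | ∑ b ∈ T, q (a,b) = ρ {a}})
        ∩ (⋂ b ∈ T, {q : (Pt d × Pt d) → ℝ≥0∞ | ∑ a ∈ S, q (a,b) = ν {b}}) := by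
      ext q
      simp only [hP, Set.mem_setOf_eq, Set.mem_inter_iff, Set.mem_iInter]
    rw [hPeq]
    refine IsClosed.inter (isClosed_biInter fun a _ => ?_) (isClosed_biInter fun b _ => ?_)
    · exact isClosed_eq (continuous_finset_sum _ fun b _ => continuous_apply (a,b))
        continuous_const
    · exact isClosed_eq (continuous_finset_sum _ fun a _ => continuous_apply (a,b))
        continuous_const
  have hcont : Continuous cost := by
    refine continuous_finset_sum _ fun p _ => ?_
    exact (ENNReal.continuous_mul_const ENNReal.ofReal_ne_top).comp (continuous_apply p)
  have hPne : P.Nonempty := by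
    refine ⟨fun p => ρ {p.1} * ν {p.2}, ?_, ?_⟩
    · intro a ha
      show ∑ b ∈ T, ρ {a} * ν {b} = ρ {a}
      rw [← Finset.mul_sum, ← measure_finset_eq_sum, hTmass, mul_one]
    · intro b hb
      show ∑ a ∈ S, ρ {a} * ν {b} = ν {b}
      rw [← Finset.sum_mul, ← measure_finset_eq_sum, hSmass, one_mul]
  have hW2 : W2sq ρ ν = sInf (cost '' P) := congrArg sInf hsetEq
  have hmem : sInf (cost '' P) ∈ cost '' P :=
    (hPclosed.isCompact.image hcont).sInf_mem (hPne.image cost)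
  obtain ⟨q, hq, hcq⟩ := hmem
  refine ⟨∑ p ∈ S ×ˢ T, q p • Measure.dirac p, (mk_coupling q hq).1, ?_⟩
  rw [show (∫⁻ p, ENNReal.ofReal (‖p.1 - p.2‖ ^ 2) ∂(∑ p ∈ S ×ˢ T, q p • Measure.dirac p))
      = ∫⁻ p, c p ∂(∑ p ∈ S ×ˢ T, q p • Measure.dirac p) from rfl,
    (mk_coupling q hq).2, hcq, hW2]


lemma phase1 (μ : Fin N → Measure (Pt d)) (hμp : ∀ i, IsProbabilityMeasure (μ i))
    (S : Fin N → Finset (Pt d)) (hS : ∀ i, μ i ((↑(S i) : Set (Pt d))ᶜ) = 0)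
    {l : Fin N → ℝ} (hl : InSimplex l)
    (nuhat : Measure (Pt d)) (hν : IsProbabilityMeasure nuhat)
    (hopt : ∀ ν : Measure (Pt d), IsProbabilityMeasure ν → Psi l μ nuhat ≤ Psi l μ ν)
    (hfinPsi : Psi l μ nuhat ≠ ⊤) (hWfin : ∀ i, W2sq (μ i) nuhat ≠ ⊤)
    (T : Finset (Pt d)) (hTmem : ∀ x ∈ Fintype.piFinset S, wmean l x ∈ T) :
    nuhat ((↑T : Set (Pt d))ᶜ) = 0 := by
  classical
  haveI := hν
  have hUnull : ∀ δ : ℝ, 0 < δ →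
      nuhat ((⋃ x ∈ Fintype.piFinset S, Metric.ball (wmean l x) δ)ᶜ) = 0 := by
    intro δ hδ
    set U : Set (Pt d) := ⋃ x ∈ Fintype.piFinset S, Metric.ball (wmean l x) δ with hU
    have hUopen : IsOpen U := isOpen_biUnion fun x _ => Metric.isOpen_ball
    have hkey : ∀ ε : NNReal, 0 < ε → ENNReal.ofReal (δ ^ 2) * nuhat Uᶜ ≤ ε := by
      intro ε hε
      have hγex : ∀ i, ∃ γi : Measure (Pt d × Pt d), IsCoupling (μ i) nuhat γi ∧
          ∫⁻ p, ENNReal.ofReal (‖p.1 - p.2‖ ^ 2) ∂γi < W2sq (μ i) nuhat + ε := by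
        intro i
        have hlt : W2sq (μ i) nuhat < W2sq (μ i) nuhat + ε :=
          ENNReal.lt_add_right (hWfin i) (by exact_mod_cast hε.ne')
        have hlt2 : sInf { c : ℝ≥0∞ | ∃ π : Measure (Pt d × Pt d), IsCoupling (μ i) nuhat π ∧
            c = ∫⁻ p, ENNReal.ofReal (‖p.1 - p.2‖ ^ 2) ∂π } < W2sq (μ i) nuhat + ε := hlt
        obtain ⟨c, ⟨γi, hco, rfl⟩, hclt⟩ := sInf_lt_iff.mp hlt2
        exact ⟨γi, hco, hclt⟩
      choose γ hco hcostlt using hγex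
      obtain ⟨π, D, hplan, -, heq, -, hDlow⟩ := core μ hμp S hS hl nuhat hν γ hco
      have hge : Psi l μ nuhat ≤ MOT l π := by
        haveI := hplan.1
        exact le_trans (hopt _ (Measure.isProbabilityMeasure_map (wmean_meas l).aemeasurable))
          (psi_le_mot μ hl π hplan)
      have hub : MOT l π + D ≤ Psi l μ nuhat + ε := by
        rw [← heq]
        calc ∑ i, ENNReal.ofReal (l i) * ∫⁻ p, ENNReal.ofReal (‖p.1 - p.2‖ ^ 2) ∂(γ i)
            ≤ ∑ i, ENNReal.ofReal (l i) * (W2sq (μ i) nuhat + ε) :=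
              Finset.sum_le_sum fun i _ => mul_le_mul_right (hcostlt i).le _
          _ = Psi l μ nuhat + (∑ i, ENNReal.ofReal (l i)) * ε := by
              simp only [mul_add, Finset.sum_add_distrib, Finset.sum_mul, Psi]
          _ = Psi l μ nuhat + ε := by
              rw [← ENNReal.ofReal_sum_of_nonneg (fun i _ => (hl.1 i).le), hl.2,
                ENNReal.ofReal_one, one_mul]
      have hDle : D ≤ ε := by
        have h1 : Psi l μ nuhat + D ≤ Psi l μ nuhat + ε :=
          le_trans (add_le_add_left hge D) hub
        exact (ENNReal.add_le_add_iff_left hfinPsi).mp h1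
      refine le_trans ?_ hDle
      have hg : ∫⁻ y, (Uᶜ.indicator (fun _ => ENNReal.ofReal (δ ^ 2)) y) ∂nuhat
          = ENNReal.ofReal (δ ^ 2) * nuhat Uᶜ := by
        rw [lintegral_indicator hUopen.measurableSet.compl, setLIntegral_const]
      rw [← hg]
      refine hDlow _ (measurable_const.indicator hUopen.measurableSet.compl) ?_
      intro y x hx
      by_cases hyU : y ∈ Uᶜ
      · rw [Set.indicator_of_mem hyU]
        have hnotin : y ∉ Metric.ball (wmean l x) δ := by
          intro hball
          exact hyU (Set.mem_biUnion hx hball)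
        have hdist : δ ≤ dist y (wmean l x) := not_lt.mp (by simpa [Metric.mem_ball] using hnotin)
        refine ENNReal.ofReal_le_ofReal ?_
        rw [show dist y (wmean l x) = ‖y - wmean l x‖ from dist_eq_norm _ _] at hdist
        exact pow_le_pow_left₀ hδ.le hdist 2
      · rw [Set.indicator_of_notMem hyU]
        exact zero_le
    have h0 : ENNReal.ofReal (δ ^ 2) * nuhat Uᶜ = 0 := by
      have := ENNReal.le_of_forall_pos_le_add (a := ENNReal.ofReal (δ ^ 2) * nuhat Uᶜ) (b := 0)
        (fun ε hε _ => by simpa using hkey ε hε)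
      simpa using this
    rcases mul_eq_zero.mp h0 with h | h
    · exact absurd h (by positivity)
    · exact h
  -- conclude
  rcases (Fintype.piFinset S).eq_empty_or_nonempty with hKe | hKne
  · exfalso
    have := hUnull 1 one_pos
    rw [hKe] at this
    simp only [Finset.notMem_empty, Set.iUnion_of_empty, Set.iUnion_empty, Set.compl_empty]
      at this
    exact (one_ne_zero : (1:ℝ≥0∞) ≠ 0) (by rw [← measure_univ (μ := nuhat)]; exact this)
  · refine measure_mono_null ?_ (measure_iUnion_null (fun n : ℕ =>
      hUnull (1 / (n + 1)) (by positivity)))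
    intro y hy
    simp only [Set.mem_compl_iff, Finset.mem_coe] at hy
    have hne : ∀ x ∈ Fintype.piFinset S, 0 < dist y (wmean l x) := by
      intro x hx
      rw [dist_pos]
      intro hEq
      exact hy (hEq ▸ hTmem x hx)
    set r : ℝ := (Fintype.piFinset S).inf' hKne (fun x => dist y (wmean l x)) with hr
    have hrpos : 0 < r := by
      rw [hr, Finset.lt_inf'_iff]
      exact hne
    obtain ⟨n, hn⟩ := exists_nat_one_div_lt hrpos
    refine Set.mem_iUnion.mpr ⟨n, ?_⟩
    simp only [Set.mem_compl_iff, Set.mem_iUnion]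
    rintro ⟨x, hx, hball⟩
    rw [Metric.mem_ball] at hball
    have : r ≤ dist y (wmean l x) := Finset.inf'_le _ hx
    have hcast : (1:ℝ) / (↑n + 1) < r := hn
    linarith

end Phase1

end Stmt4Aux

/-- Every optimal Wasserstein-2 barycenter `ν̂` is the pushforward of some
optimal multi-marginal plan under the weighted mean map; in particular, it is finitely
supported with support contained in the set of `λ`-weighted means of support points
of the `μ i`. -/
theorem stmt4 {d N : ℕ} (μ : Fin N → Measure (Pt d))
    (hμ : ∀ i, IsProbabilityMeasure (μ i) ∧ FinitelySupported (μ i))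
    (l : Fin N → ℝ) (hl : InSimplex l)
    (nuhat : Measure (Pt d)) (hν : IsProbabilityMeasure nuhat)
    (hopt : ∀ ν : Measure (Pt d), IsProbabilityMeasure ν → Psi l μ nuhat ≤ Psi l μ ν) :
    (∃ pihat : Measure (Fin N → Pt d), IsPlan μ pihat ∧
        (∀ π, IsPlan μ π → MOT l pihat ≤ MOT l π) ∧ nuhat = pihat.map (wmean l))
    ∧ FinitelySupported nuhat ∧ (msupport nuhat).Finite
    ∧ msupport nuhat ⊆
        {y : Pt d | ∃ x : Fin N → Pt d, (∀ i, x i ∈ msupport (μ i)) ∧ y = ∑ i, l i • x i} := by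

  classical
  haveI := hν
  haveI := fun i => (hμ i).1
  open Stmt4Aux in
  -- refined supports
  have hSex : ∀ i, ∃ S : Finset (Pt d),
      (μ i ((↑S : Set (Pt d))ᶜ) = 0) ∧ ∀ a ∈ S, a ∈ msupport (μ i) := by
    intro i
    obtain ⟨s, hs⟩ := (hμ i).2
    refine ⟨s.filter (fun a => μ i {a} ≠ 0), ?_, fun a ha => (Finset.mem_filter.mp ha).2⟩
    have hz : μ i (↑(s.filter (fun a => μ i {a} = 0)) : Set (Pt d)) = 0 := by
      rw [Stmt4Aux.measure_finset_eq_sum]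
      refine Finset.sum_eq_zero fun a ha => (Finset.mem_filter.mp ha).2
    refine measure_mono_null ?_ (by rw [measure_union_null hs hz] <;> skip)
    · intro a ha
      simp only [Set.mem_compl_iff, Finset.coe_filter, Set.mem_setOf_eq, not_and, not_not] at ha
      by_cases hmem : a ∈ s
      · exact Or.inr (by simp [hmem, ha hmem])
      · exact Or.inl hmem
  choose S hS hSsupp using hSex
  -- finiteness
  have hfinPsi : Psi l μ nuhat ≠ ⊤ := by
    have h1 : Psi l μ nuhat ≤ Psi l μ (Measure.dirac (0 : Pt d)) := hopt _ inferInstance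
    refine ne_top_of_le_ne_top ?_ h1
    refine (ENNReal.sum_lt_top.mpr fun i _ => ?_).ne
    exact ENNReal.mul_lt_top ENNReal.ofReal_lt_top
      (Stmt4Aux.w2_dirac_lt_top (μ i) ((hμ i).1) (S i) (hS i))
  have hWfin : ∀ i, W2sq (μ i) nuhat ≠ ⊤ := by
    intro i
    intro hcontra
    apply hfinPsi
    have hterm : ENNReal.ofReal (l i) * W2sq (μ i) nuhat ≤ Psi l μ nuhat :=
      Finset.single_le_sum (f := fun j => ENNReal.ofReal (l j) * W2sq (μ j) nuhat)
        (fun j _ => zero_le) (Finset.mem_univ i)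
    rw [hcontra, ENNReal.mul_top (by
      simpa using (ENNReal.ofReal_pos.mpr (hl.1 i)).ne')] at hterm
    exact top_le_iff.mp hterm
  -- the finite target set
  set T : Finset (Pt d) := (Fintype.piFinset S).image (fun x => wmean l x) with hT
  have hTmem : ∀ x ∈ Fintype.piFinset S, wmean l x ∈ T :=
    fun x hx => Finset.mem_image_of_mem _ hx
  have hνT : nuhat ((↑T : Set (Pt d))ᶜ) = 0 :=
    Stmt4Aux.phase1 μ (fun i => (hμ i).1) S hS hl nuhat hν hopt hfinPsi hWfin T hTmem
  -- optimal couplings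
  have hγopt : ∀ i, ∃ γi : Measure (Pt d × Pt d), IsCoupling (μ i) nuhat γi ∧
      ∫⁻ p, ENNReal.ofReal (‖p.1 - p.2‖ ^ 2) ∂γi = W2sq (μ i) nuhat :=
    fun i => Stmt4Aux.exists_opt_coupling (μ i) nuhat ((hμ i).1) hν (S i) T (hS i) hνT
  choose γ hγco hγcost using hγopt
  obtain ⟨π, D, hplan, ⟨w, hπw⟩, heq, hD0, hDlow⟩ :=
    Stmt4Aux.core μ (fun i => (hμ i).1) S hS hl nuhat hν γ hγco
  have hPsiEq : Psi l μ nuhat = MOT l π + D := by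
    rw [← heq, Psi]
    exact Finset.sum_congr rfl fun i _ => by rw [hγcost i]
  have hmono : Psi l μ nuhat ≤ MOT l π := by
    haveI := hplan.1
    exact le_trans (hopt _ (Measure.isProbabilityMeasure_map (Stmt4Aux.wmean_meas l).aemeasurable))
      (Stmt4Aux.psi_le_mot μ hl π hplan)
  have hMOTne : MOT l π ≠ ⊤ := by
    intro hcontra
    apply hfinPsi
    rw [hPsiEq, hcontra, top_add]
  have hDzero : D = 0 := by
    have h1 : MOT l π + D ≤ MOT l π + 0 := by
      rw [add_zero]
      exact hPsiEq ▸ hmono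
    simpa using (ENNReal.add_le_add_iff_left hMOTne).mp h1
  have hmap : nuhat = π.map (wmean l) := hD0 hDzero
  have hMOTeq : MOT l π = Psi l μ nuhat := by rw [hPsiEq, hDzero, add_zero]
  have hoptplan : ∀ π', IsPlan μ π' → MOT l π ≤ MOT l π' := by
    intro π' hπ'
    haveI := hπ'.1
    calc MOT l π = Psi l μ nuhat := hMOTeq
      _ ≤ Psi l μ (π'.map (wmean l)) :=
          hopt _ (Measure.isProbabilityMeasure_map (Stmt4Aux.wmean_meas l).aemeasurable)
      _ ≤ MOT l π' := Stmt4Aux.psi_le_mot μ hl π' hπ'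
  have hmap2 : nuhat = ∑ x ∈ Fintype.piFinset S, w x • Measure.dirac (wmean l x) := by
    rw [hmap, hπw,
      show (∑ x ∈ Fintype.piFinset S, w x • Measure.dirac x)
        = ∑ x ∈ Fintype.piFinset S, w x • Measure.dirac (id x) from rfl,
      Stmt4Aux.atomic_map _ w id (Stmt4Aux.wmean_meas l)]
    rfl
  refine ⟨⟨π, hplan, hoptplan, hmap⟩, ⟨T, hνT⟩, ?_, ?_⟩
  · -- msupport finite
    refine (T.finite_toSet).subset fun y hy => ?_
    by_contra hyT
    refine hy ?_
    refine measure_mono_null ?_ hνT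
    intro z hz
    rw [Set.mem_singleton_iff] at hz
    simpa [hz] using hyT
  · -- support characterization
    intro y hy
    have hy2 : nuhat {y} ≠ 0 := hy
    rw [hmap2, Stmt4Aux.atomic_apply (Fintype.piFinset S) w (wmean l)
      (measurableSet_singleton y)] at hy2
    obtain ⟨x, hxK, hxne⟩ := Finset.exists_ne_zero_of_sum_ne_zero hy2
    have hxy : wmean l x = y := by
      by_contra hne
      simp [Set.mem_singleton_iff, hne] at hxne
    exact ⟨x, fun i => hSsupp i (x i) (Fintype.mem_piFinset.mp hxK i), hxy ▸ rfl⟩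
end
end

section
/- There exists an optimal plan π̂ for the MOT problem (a minimizer of Φ over Π(μ¹,…,μ^N)) whose support has cardinality at most Σ_{i=1}^N n_i − N + 1. -/
open MeasureTheory
open scoped ENNReal

noncomputable section

/-! ### Auxiliary machinery for `stmt5` -/

lemma meas_finset_eq_sum {α : Type*} [MeasurableSpace α] [MeasurableSingletonClass α]
    (μ : Measure α) (s : Finset α) : μ ↑s = ∑ x ∈ s, μ {x} := by
  rw [show (↑s : Set α) = ⋃ x ∈ s, {x} by ext x; simp]
  rw [measure_biUnion_finset ?_ (fun b _ => measurableSet_singleton b)]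
  intro x _ y _ hxy
  simp [Set.disjoint_singleton, hxy]

lemma sumOne {α : Type*} [MeasurableSpace α] [MeasurableSingletonClass α]
    (μ : Measure α) [IsProbabilityMeasure μ] (s : Finset α) (hs : μ ((s : Set α))ᶜ = 0) :
    ∑ x ∈ s, (μ {x}).toReal = 1 := by
  have h1 : μ ↑s = 1 := by
    rw [← measure_univ (μ := μ), ← measure_add_measure_compl s.measurableSet, hs, add_zero]
  rw [← ENNReal.toReal_sum (fun y _ => measure_ne_top _ _), ← meas_finset_eq_sum, h1,
    ENNReal.toReal_one]

lemma measure_eq_sum_dirac {α : Type*} [MeasurableSpace α] [MeasurableSingletonClass α]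
    (μ : Measure α) (s : Finset α) (hs : μ ((s : Set α))ᶜ = 0) :
    μ = ∑ x ∈ s, μ {x} • Measure.dirac x := by
  classical
  ext A hA
  rw [Measure.finset_sum_apply]
  have h1 : μ A = μ (A ∩ ↑s) := by
    have h2 := measure_inter_add_diff (μ := μ) A s.measurableSet
    have h3 : μ (A \ ↑s) = 0 :=
      le_antisymm (le_trans (measure_mono (Set.diff_subset_compl A ↑s)) hs.le) bot_le
    rw [← h2, h3, add_zero]
  have h4 : A ∩ ↑s = ↑(s.filter (· ∈ A)) := by ext x; simp [and_comm]
  rw [h1, h4, meas_finset_eq_sum]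
  rw [Finset.sum_filter]
  refine Finset.sum_congr rfl fun x _ => ?_
  simp [Measure.smul_apply, Measure.dirac_apply' _ hA, Set.indicator_apply]

lemma map_mk {α β : Type*} [MeasurableSpace α] [MeasurableSpace β]
    [MeasurableSingletonClass β]
    {ι : Type*} (s : Finset ι) (c : ι → ℝ≥0∞) (x : ι → α) {f : α → β} (hf : Measurable f) :
    Measure.map f (∑ g ∈ s, c g • Measure.dirac (x g))
      = ∑ g ∈ s, c g • Measure.dirac (f (x g)) := by
  ext A hA
  rw [Measure.map_apply hf hA, Measure.finset_sum_apply, Measure.finset_sum_apply]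
  refine Finset.sum_congr rfl fun g _ => ?_
  by_cases h : f (x g) ∈ A <;>
    simp [Measure.smul_apply, Measure.dirac_apply' _ (hf hA), Measure.dirac_apply' _ hA,
      Set.indicator_apply, Set.mem_preimage, h]

/-- The real-valued MOT cost function. -/
def costR {d N : ℕ} (l : Fin N → ℝ) (x : Fin N → Pt d) : ℝ :=
  ∑ s : Fin N, ∑ t : Fin N, if s < t then l s * l t * ‖x s - x t‖ ^ 2 else 0

lemma cost_term_nonneg {d N : ℕ} {l : Fin N → ℝ} (hl : ∀ i, 0 ≤ l i) (x : Fin N → Pt d)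
    (s t : Fin N) : 0 ≤ if s < t then l s * l t * ‖x s - x t‖ ^ 2 else 0 := by
  split
  · exact mul_nonneg (mul_nonneg (hl s) (hl t)) (sq_nonneg _)
  · exact le_refl 0

lemma costR_nonneg {d N : ℕ} {l : Fin N → ℝ} (hl : ∀ i, 0 ≤ l i) (x : Fin N → Pt d) :
    0 ≤ costR l x :=
  Finset.sum_nonneg fun s _ => Finset.sum_nonneg fun t _ => cost_term_nonneg hl x s t

lemma ofReal_costR {d N : ℕ} {l : Fin N → ℝ} (hl : ∀ i, 0 ≤ l i) (x : Fin N → Pt d) :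
    ENNReal.ofReal (costR l x) = ∑ s : Fin N, ∑ t : Fin N,
      (if s < t then ENNReal.ofReal (l s * l t * ‖x s - x t‖ ^ 2) else 0) := by
  rw [costR, ENNReal.ofReal_sum_of_nonneg (fun s _ =>
    Finset.sum_nonneg fun t _ => cost_term_nonneg hl x s t)]
  refine Finset.sum_congr rfl fun s _ => ?_
  rw [ENNReal.ofReal_sum_of_nonneg (fun t _ => cost_term_nonneg hl x s t)]
  refine Finset.sum_congr rfl fun t _ => ?_
  split <;> simp

lemma MOT_mk {d N : ℕ} (l : Fin N → ℝ) (hl : ∀ i, 0 ≤ l i)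
    (G : Finset (Fin N → Pt d)) (w : (Fin N → Pt d) → ℝ) (hw : ∀ g, 0 ≤ w g) :
    MOT l (∑ g ∈ G, ENNReal.ofReal (w g) • Measure.dirac g)
      = ENNReal.ofReal (∑ g ∈ G, w g * costR l g) := by
  rw [MOT, lintegral_finset_sum_measure]
  rw [ENNReal.ofReal_sum_of_nonneg (fun g _ => mul_nonneg (hw g) (costR_nonneg hl g))]
  refine Finset.sum_congr rfl fun g _ => ?_
  rw [lintegral_smul_measure, lintegral_dirac, ← ofReal_costR hl,
    ENNReal.ofReal_mul (hw g), smul_eq_mul]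

lemma sum_w_eq_one {d N : ℕ} [DecidableEq (Pt d)] (hN : 0 < N) (μ : Fin N → Measure (Pt d))
    (supp : Fin N → Finset (Pt d))
    (hprob : ∀ i, IsProbabilityMeasure (μ i)) (hnull : ∀ i, μ i ((supp i : Set (Pt d)))ᶜ = 0)
    (w : (Fin N → Pt d) → ℝ)
    (hm : ∀ i, ∀ y ∈ supp i, ∑ g ∈ (Fintype.piFinset supp).filter (fun g => g i = y), w g
      = (μ i {y}).toReal) :
    ∑ g ∈ Fintype.piFinset supp, w g = 1 := by
  classical
  set i₀ : Fin N := ⟨0, hN⟩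
  have h1 : ∑ g ∈ Fintype.piFinset supp, w g
      = ∑ y ∈ supp i₀, ∑ g ∈ (Fintype.piFinset supp).filter (fun g => g i₀ = y), w g :=
    (Finset.sum_fiberwise_of_maps_to (fun g hg => (Fintype.mem_piFinset.1 hg) i₀) w).symm
  haveI := hprob i₀
  rw [h1, Finset.sum_congr rfl (fun y hy => hm i₀ y hy)]
  exact sumOne (μ i₀) (supp i₀) (hnull i₀)

lemma isPlan_mk {d N : ℕ} [DecidableEq (Pt d)] (hN : 0 < N) (μ : Fin N → Measure (Pt d))
    (supp : Fin N → Finset (Pt d))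
    (hprob : ∀ i, IsProbabilityMeasure (μ i)) (hnull : ∀ i, μ i ((supp i : Set (Pt d)))ᶜ = 0)
    (w : (Fin N → Pt d) → ℝ) (h0 : ∀ g, 0 ≤ w g)
    (hm : ∀ i, ∀ y ∈ supp i, ∑ g ∈ (Fintype.piFinset supp).filter (fun g => g i = y), w g
      = (μ i {y}).toReal) :
    IsPlan μ (∑ g ∈ Fintype.piFinset supp, ENNReal.ofReal (w g) • Measure.dirac g) := by
  classical
  constructor
  · constructor
    rw [Measure.finset_sum_apply]
    simp only [Measure.smul_apply, measure_univ, smul_eq_mul, mul_one]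
    rw [← ENNReal.ofReal_sum_of_nonneg (fun g _ => h0 g),
      sum_w_eq_one hN μ supp hprob hnull w hm, ENNReal.ofReal_one]
  · intro i
    rw [map_mk _ _ _ (measurable_pi_apply i)]
    have h1 : ∑ g ∈ Fintype.piFinset supp, ENNReal.ofReal (w g) • Measure.dirac (g i)
        = ∑ y ∈ supp i, ∑ g ∈ (Fintype.piFinset supp).filter (fun g => g i = y),
            ENNReal.ofReal (w g) • Measure.dirac (g i) :=
      (Finset.sum_fiberwise_of_maps_to (fun g hg => (Fintype.mem_piFinset.1 hg) i) _).symm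
    rw [h1]
    have h2 : ∀ y ∈ supp i,
        ∑ g ∈ (Fintype.piFinset supp).filter (fun g => g i = y),
          ENNReal.ofReal (w g) • Measure.dirac (g i) = μ i {y} • Measure.dirac y := by
      intro y hy
      rw [Finset.sum_congr rfl (fun g hg => by
        rw [(Finset.mem_filter.1 hg).2]), ← Finset.sum_smul,
        ← ENNReal.ofReal_sum_of_nonneg (fun g _ => h0 g), hm i y hy,
        ENNReal.ofReal_toReal (measure_ne_top _ _)]
    rw [Finset.sum_congr rfl h2]
    exact (measure_eq_sum_dirac (μ i) (supp i) (hnull i)).symm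

lemma plan_decomp {d N : ℕ} [DecidableEq (Pt d)] (μ : Fin N → Measure (Pt d))
    (supp : Fin N → Finset (Pt d))
    (hnull : ∀ i, μ i ((supp i : Set (Pt d)))ᶜ = 0)
    (π : Measure (Fin N → Pt d)) (hπ : IsPlan μ π) :
    π ((↑(Fintype.piFinset supp) : Set (Fin N → Pt d)))ᶜ = 0 := by
  have h1 : (↑(Fintype.piFinset supp) : Set (Fin N → Pt d))ᶜ
      = ⋃ i, (fun x : Fin N → Pt d => x i) ⁻¹' ((↑(supp i) : Set (Pt d))ᶜ) := by
    ext x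
    simp [Fintype.mem_piFinset, not_forall]
  rw [h1]
  refine measure_iUnion_null fun i => ?_
  rw [← Measure.map_apply (measurable_pi_apply i) (Finset.measurableSet _).compl, hπ.2 i]
  exact hnull i

lemma plan_fiber_sum {d N : ℕ} [DecidableEq (Pt d)] (μ : Fin N → Measure (Pt d))
    (supp : Fin N → Finset (Pt d))
    (hnull : ∀ i, μ i ((supp i : Set (Pt d)))ᶜ = 0)
    (π : Measure (Fin N → Pt d)) (hπ : IsPlan μ π) (i : Fin N) (y : Pt d) :
    ∑ g ∈ (Fintype.piFinset supp).filter (fun g => g i = y), π {g} = μ i {y} := by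
  classical
  have hdec := measure_eq_sum_dirac π (Fintype.piFinset supp)
    (plan_decomp μ supp hnull π hπ)
  have h2 : μ i {y} = π ((fun x : Fin N → Pt d => x i) ⁻¹' {y}) := by
    rw [← hπ.2 i, Measure.map_apply (measurable_pi_apply i) (measurableSet_singleton y)]
  rw [h2]
  conv_rhs => rw [hdec]
  rw [Measure.finset_sum_apply]
  have h3 : ∀ g ∈ Fintype.piFinset supp,
      (π {g} • Measure.dirac g) ((fun x : Fin N → Pt d => x i) ⁻¹' {y})
        = if g i = y then π {g} else 0 := by
    intro g _
    by_cases h : g i = y <;>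
      simp [Measure.smul_apply, Measure.dirac_apply, Set.indicator_apply, Set.mem_preimage, h]
  rw [Finset.sum_congr rfl h3, ← Finset.sum_filter]

lemma prod_feasible {d N : ℕ} [DecidableEq (Pt d)] (μ : Fin N → Measure (Pt d))
    (supp : Fin N → Finset (Pt d))
    (hprob : ∀ i, IsProbabilityMeasure (μ i)) (hnull : ∀ i, μ i ((supp i : Set (Pt d)))ᶜ = 0)
    (i : Fin N) (y : Pt d) (hy : y ∈ supp i) :
    ∑ g ∈ (Fintype.piFinset supp).filter (fun g => g i = y), ∏ j, (μ j {g j}).toReal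
      = (μ i {y}).toReal := by
  classical
  have hfe : (Fintype.piFinset supp).filter (fun g => g i = y)
      = Fintype.piFinset (Function.update supp i {y}) := by
    ext g
    simp only [Finset.mem_filter, Fintype.mem_piFinset]
    constructor
    · rintro ⟨hall, hi⟩ j
      by_cases h : j = i
      · subst h; rw [Function.update_self]; simpa using hi
      · rw [Function.update_of_ne h]; exact hall j
    · intro hall
      have hiy : g i = y := by simpa [Function.update_self] using hall i
      refine ⟨fun j => ?_, hiy⟩
      by_cases h : j = i
      · subst h; rw [hiy]; exact hy
      · have := hall j; rwa [Function.update_of_ne h] at this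
  have hps := Finset.prod_univ_sum (κ := fun _ : Fin N => Pt d)
    (t := Function.update supp i {y}) (f := fun j b => (μ j {b}).toReal)
  rw [hfe, ← hps]
  rw [← Finset.mul_prod_erase Finset.univ _ (Finset.mem_univ i)]
  have h1 : ∑ x ∈ Function.update supp i {y} i, (μ i {x}).toReal = (μ i {y}).toReal := by
    rw [Function.update_self, Finset.sum_singleton]
  have h2 : ∀ j ∈ Finset.univ.erase i,
      ∑ x ∈ Function.update supp i {y} j, (μ j {x}).toReal = 1 := by
    intro j hj
    haveI := hprob j
    rw [Function.update_of_ne (Finset.mem_erase.1 hj).1]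
    exact sumOne (μ j) (supp j) (hnull j)
  rw [h1, Finset.prod_congr rfl h2, Finset.prod_const_one, mul_one]
def Qmap {d N : ℕ} [DecidableEq (Pt d)] (supp : Fin N → Finset (Pt d)) (y₀ : Fin N → Pt d)
    (S : Finset (Fin N → Pt d)) :
    (↥S → ℝ) →ₗ[ℝ] ℝ × ((i : Fin N) → (↥((supp i).erase (y₀ i)) → ℝ)) :=
  LinearMap.prod (∑ g : ↥S, LinearMap.proj g)
    (LinearMap.pi fun i => LinearMap.pi fun y =>
      ∑ g : ↥S, if (g : Fin N → Pt d) i = (y : Pt d) then LinearMap.proj g else 0)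

lemma Qmap_fst {d N : ℕ} [DecidableEq (Pt d)] (supp : Fin N → Finset (Pt d)) (y₀ : Fin N → Pt d)
    (S : Finset (Fin N → Pt d)) (u : ↥S → ℝ) :
    (Qmap supp y₀ S u).1 = ∑ g : ↥S, u g := by
  simp [Qmap, LinearMap.sum_apply]

lemma Qmap_snd {d N : ℕ} [DecidableEq (Pt d)] (supp : Fin N → Finset (Pt d)) (y₀ : Fin N → Pt d)
    (S : Finset (Fin N → Pt d)) (u : ↥S → ℝ) (i : Fin N) (y : ↥((supp i).erase (y₀ i))) :
    (Qmap supp y₀ S u).2 i y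
      = ∑ g : ↥S, (if (g : Fin N → Pt d) i = (y : Pt d) then u g else 0) := by
  classical
  simp only [Qmap, LinearMap.prod_apply, Function.prod, LinearMap.pi_apply, LinearMap.sum_apply]
  refine Finset.sum_congr rfl fun g _ => ?_
  split <;> simp

lemma exists_kernel_vec {d N : ℕ} [DecidableEq (Pt d)] (supp : Fin N → Finset (Pt d))
    (y₀ : Fin N → Pt d) (S : Finset (Fin N → Pt d))
    (hcard : 1 + ∑ i, ((supp i).erase (y₀ i)).card < S.card) :
    ∃ u : ↥S → ℝ, u ≠ 0 ∧ Qmap supp y₀ S u = 0 := by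
  classical
  have hrank : Module.finrank ℝ (ℝ × ((i : Fin N) → (↥((supp i).erase (y₀ i)) → ℝ)))
      < Module.finrank ℝ (↥S → ℝ) := by
    rw [Module.finrank_prod, Module.finrank_pi_fintype, Module.finrank_pi]
    simp only [Module.finrank_pi, Fintype.card_coe, Module.finrank_self]
    simpa [Fintype.card_coe] using hcard
  have hni : ¬ Function.Injective (Qmap supp y₀ S) := by
    intro hinj
    exact absurd (LinearMap.finrank_le_finrank_of_injective hinj) (not_le.2 hrank)
  rw [Function.not_injective_iff] at hni
  obtain ⟨u₁, u₂, he, hne⟩ := hni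
  exact ⟨u₁ - u₂, sub_ne_zero.2 hne, by rw [map_sub, he, sub_self]⟩

/-- The feasible set of the finite LP. -/
def Feas {d N : ℕ} [DecidableEq (Pt d)] (μ : Fin N → Measure (Pt d))
    (supp : Fin N → Finset (Pt d)) : Set ((Fin N → Pt d) → ℝ) :=
  {w | (∀ g, 0 ≤ w g) ∧ (∀ g ∉ Fintype.piFinset supp, w g = 0) ∧
    ∀ i, ∀ y ∈ supp i, ∑ g ∈ (Fintype.piFinset supp).filter (fun g => g i = y), w g
      = (μ i {y}).toReal}

/-- The LP objective. -/
def Cost {d N : ℕ} [DecidableEq (Pt d)] (supp : Fin N → Finset (Pt d))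
    (c : (Fin N → Pt d) → ℝ) (w : (Fin N → Pt d) → ℝ) : ℝ :=
  ∑ g ∈ Fintype.piFinset supp, w g * c g

lemma exists_sparse_min {d N : ℕ} [DecidableEq (Pt d)] (hN : 0 < N)
    (μ : Fin N → Measure (Pt d)) (supp : Fin N → Finset (Pt d))
    (hprob : ∀ i, IsProbabilityMeasure (μ i))
    (hFne : (Feas μ supp).Nonempty)
    (hy₀ : ∀ i, (supp i).Nonempty)
    (c : (Fin N → Pt d) → ℝ) :
    ∃ w ∈ Feas μ supp, (∀ w' ∈ Feas μ supp, Cost supp c w ≤ Cost supp c w') ∧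
      ((Fintype.piFinset supp).filter (fun g => w g ≠ 0)).card + N
        ≤ (∑ i, (supp i).card) + 1 := by
  classical
  set G := Fintype.piFinset supp with hGdef
  set i₀ : Fin N := ⟨0, hN⟩
  -- compactness of the feasible set
  have hFclosed : IsClosed (Feas μ supp) := by
    have he : Feas μ supp =
        (⋂ g, {w : (Fin N → Pt d) → ℝ | 0 ≤ w g}) ∩
        ((⋂ g ∈ {g | g ∉ G}, {w : (Fin N → Pt d) → ℝ | w g = 0}) ∩
         (⋂ i, ⋂ y ∈ (supp i : Set (Pt d)),
            {w : (Fin N → Pt d) → ℝ |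
              ∑ g ∈ G.filter (fun g => g i = y), w g = (μ i {y}).toReal})) := by
      ext w
      simp only [Feas, Set.mem_inter_iff, Set.mem_iInter, Set.mem_setOf_eq, Finset.mem_coe,
        ← hGdef]
    rw [he]
    refine (isClosed_iInter fun g => isClosed_le continuous_const (continuous_apply g)).inter
      (IsClosed.inter ?_ ?_)
    · exact isClosed_biInter fun g _ => isClosed_eq (continuous_apply g) continuous_const
    · exact isClosed_iInter fun i => isClosed_biInter fun y _ =>
        isClosed_eq (continuous_finset_sum _ fun g _ => continuous_apply g) continuous_const
  have hsub : Feas μ supp ⊆ Set.pi Set.univ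
      (fun g => if g ∈ G then Set.Icc (0:ℝ) 1 else ({0} : Set ℝ)) := by
    intro w hw
    rw [Set.mem_pi]
    intro g _
    by_cases hg : g ∈ G
    · rw [if_pos hg]
      refine ⟨hw.1 g, ?_⟩
      have h1 : w g ≤ ∑ g' ∈ G.filter (fun g' => g' i₀ = g i₀), w g' :=
        Finset.single_le_sum (fun g' _ => hw.1 g') (Finset.mem_filter.2 ⟨hg, rfl⟩)
      have h2 := hw.2.2 i₀ (g i₀) ((Fintype.mem_piFinset.1 hg) i₀)
      have h3 : (μ i₀ {g i₀}).toReal ≤ 1 := by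
        haveI := hprob i₀
        have h4 : μ i₀ {g i₀} ≤ 1 := prob_le_one
        calc (μ i₀ {g i₀}).toReal ≤ (1 : ℝ≥0∞).toReal :=
              ENNReal.toReal_mono ENNReal.one_ne_top h4
          _ = 1 := ENNReal.toReal_one
      linarith [h1, h2 ▸ h1]
    · rw [if_neg hg]
      exact hw.2.1 g hg
  have hFcpt : IsCompact (Feas μ supp) := by
    refine IsCompact.of_isClosed_subset (isCompact_univ_pi fun g => ?_) hFclosed hsub
    by_cases hg : g ∈ G
    · rw [if_pos hg]; exact isCompact_Icc
    · rw [if_neg hg]; exact isCompact_singleton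
  have hCcont : Continuous (Cost supp c) :=
    continuous_finset_sum _ fun g _ => (continuous_apply g).mul continuous_const
  obtain ⟨w₁, hw₁F, hw₁min⟩ := hFcpt.exists_isMinOn hFne hCcont.continuousOn
  -- choose a minimizer with minimal support
  have hex : ∃ n, ∃ w, w ∈ Feas μ supp ∧ IsMinOn (Cost supp c) (Feas μ supp) w ∧
      (G.filter (fun g => w g ≠ 0)).card = n :=
    ⟨_, w₁, hw₁F, hw₁min, rfl⟩
  obtain ⟨w, hwF, hwmin, hwcard⟩ := Nat.find_spec hex
  set S := G.filter (fun g => w g ≠ 0) with hSdef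
  refine ⟨w, hwF, fun w' hw' => isMinOn_iff.1 hwmin w' hw', ?_⟩
  by_contra hbig
  push_neg at hbig
  -- pick base points of every support
  set y₀ : Fin N → Pt d := fun i => (hy₀ i).choose with hy₀def
  have hy₀mem : ∀ i, y₀ i ∈ supp i := fun i => (hy₀ i).choose_spec
  have hcard' : 1 + ∑ i, ((supp i).erase (y₀ i)).card < S.card := by
    have h1 : ∀ i, (supp i).card = ((supp i).erase (y₀ i)).card + 1 :=
      fun i => (Finset.card_erase_add_one (hy₀mem i)).symm
    have h2 : ∑ i, (supp i).card = (∑ i, ((supp i).erase (y₀ i)).card) + N := by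
      rw [Finset.sum_congr rfl fun i _ => h1 i, Finset.sum_add_distrib]
      simp [Finset.card_univ]
    have hb2 : ∑ i, (supp i).card + 1 < S.card + N := by rw [hSdef]; exact hbig
    omega
  obtain ⟨u, hu0, hQu⟩ := exists_kernel_vec supp y₀ S hcard'
  set v : (Fin N → Pt d) → ℝ := fun g => if h : g ∈ S then u ⟨g, h⟩ else 0 with hvdef
  have hvS : ∀ g ∉ S, v g = 0 := fun g hg => dif_neg hg
  have hvu : ∀ x : ↥S, v ↑x = u x := by
    intro x
    rw [hvdef]
    simp only [x.2, dif_pos, Subtype.coe_eta]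
  -- total sum of v vanishes
  have htotS : ∑ g ∈ S, v g = 0 := by
    have h1 : (Qmap supp y₀ S u).1 = 0 := by rw [hQu]; rfl
    rw [Qmap_fst] at h1
    rw [← Finset.sum_attach S v, Finset.sum_congr rfl fun x _ => hvu x, ← h1,
      Finset.univ_eq_attach]
  -- fiber sums of v vanish
  have hfibS : ∀ i, ∀ y ∈ supp i, ∑ g ∈ S.filter (fun g => g i = y), v g = 0 := by
    have key : ∀ i (y : Pt d), ∑ g ∈ S.filter (fun g => g i = y), v g
        = ∑ x : ↥S, (if (x : Fin N → Pt d) i = y then u x else 0) := by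
      intro i y
      rw [Finset.sum_filter, ← Finset.sum_attach S (fun g => if g i = y then v g else 0),
        Finset.univ_eq_attach]
      exact Finset.sum_congr rfl fun x _ => by rw [hvu x]
    have hne : ∀ i, ∀ y ∈ supp i, y ≠ y₀ i →
        ∑ g ∈ S.filter (fun g => g i = y), v g = 0 := by
      intro i y hy hyne
      have h1 : (Qmap supp y₀ S u).2 i ⟨y, Finset.mem_erase.2 ⟨hyne, hy⟩⟩ = 0 := by
        rw [hQu]; rfl
      rw [Qmap_snd] at h1
      rw [key i y]
      exact h1
    intro i y hy
    by_cases hyne : y = y₀ i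
    · rw [hyne]
      have hy' : y₀ i ∈ supp i := hy₀mem i
      have hpart : ∑ y' ∈ supp i, ∑ g ∈ S.filter (fun g => g i = y'), v g
          = ∑ g ∈ S, v g := by
        refine Finset.sum_fiberwise_of_maps_to (fun g hg => ?_) v
        have hgG : g ∈ G := (Finset.mem_filter.1 hg).1
        exact (Fintype.mem_piFinset.1 hgG) i
      have h2 := Finset.add_sum_erase (supp i)
        (fun y' => ∑ g ∈ S.filter (fun g => g i = y'), v g) hy'
      beta_reduce at h2
      have h3 : ∑ y' ∈ (supp i).erase (y₀ i), ∑ g ∈ S.filter (fun g => g i = y'), v g = 0 := by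
        refine Finset.sum_eq_zero fun y' hy' => ?_
        exact hne i y' (Finset.mem_of_mem_erase hy') (Finset.ne_of_mem_erase hy')
      rw [htotS] at hpart
      linarith [h2, h3, hpart]
    · exact hne i y hy hyne
  have hSsubG : S ⊆ G := Finset.filter_subset _ _
  have hfibG : ∀ i, ∀ y ∈ supp i, ∑ g ∈ G.filter (fun g => g i = y), v g = 0 := by
    intro i y hy
    rw [← Finset.sum_subset (Finset.filter_subset_filter _ hSsubG)
      (fun g _ hg2 => ?_)]
    · exact hfibS i y hy
    · by_cases hgS : g ∈ S
      · exact absurd (Finset.mem_filter.2 ⟨hgS, by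
          have := Finset.mem_filter.1 ‹g ∈ G.filter (fun g => g i = y)›
          exact this.2⟩) hg2
      · exact hvS g hgS
  have hGtot : ∑ g ∈ G, v g = 0 := by
    rw [← Finset.sum_subset hSsubG (fun g _ hg => hvS g hg)]
    exact htotS
  -- v takes a negative value on S
  have hvneg : ∃ g ∈ S, v g < 0 := by
    by_contra h
    push_neg at h
    have hz : ∀ g ∈ S, v g = 0 :=
      (Finset.sum_eq_zero_iff_of_nonneg h).1 htotS
    obtain ⟨x, hx⟩ := Function.ne_iff.1 hu0
    exact hx (by rw [← hvu x]; exact hz ↑x x.2)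
  obtain ⟨gneg, hgnegS, hgnegv⟩ := hvneg
  have hwpos : ∀ g ∈ S, 0 < w g := fun g hg =>
    lt_of_le_of_ne (hwF.1 g) (Ne.symm (Finset.mem_filter.1 hg).2)
  -- perturbations stay feasible
  have hpert : ∀ t : ℝ, (∀ g, 0 ≤ w g + t * v g) →
      (fun g => w g + t * v g) ∈ Feas μ supp := by
    intro t ht
    refine ⟨ht, fun g hg => ?_, fun i y hy => ?_⟩
    · have h1 : g ∉ S := fun hgS => hg (hSsubG hgS)
      show w g + t * v g = 0
      rw [hwF.2.1 g hg, hvS g h1, mul_zero, add_zero]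
    · rw [Finset.sum_add_distrib, ← Finset.mul_sum, hfibG i y hy, mul_zero, add_zero]
      exact hwF.2.2 i y hy
  have hcostlin : ∀ t : ℝ, Cost supp c (fun g => w g + t * v g)
      = Cost supp c w + t * ∑ g ∈ G, v g * c g := by
    intro t
    rw [Cost, Cost, Finset.mul_sum, ← Finset.sum_add_distrib]
    exact Finset.sum_congr rfl fun g _ => by ring
  set D := ∑ g ∈ G, v g * c g with hDdef
  have hSne : S.Nonempty := ⟨gneg, hgnegS⟩
  set m := S.inf' hSne w with hmdef
  have hm : 0 < m := (Finset.lt_inf'_iff hSne).2 fun g hg => hwpos g hg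
  set M := S.sup' hSne (fun g => |v g|) with hMdef
  have hM0 : 0 ≤ M := le_trans (abs_nonneg (v gneg)) (Finset.le_sup' (fun g => |v g|) hgnegS)
  set ε := m / (M + 1) with hεdef
  have hε : 0 < ε := div_pos hm (by linarith)
  have hεM : ε * (M + 1) = m := div_mul_cancel₀ _ (by linarith)
  have hnnboth : ∀ t : ℝ, |t| ≤ ε → ∀ g, 0 ≤ w g + t * v g := by
    intro t ht g
    by_cases hg : g ∈ S
    · have h1 : |t * v g| ≤ ε * M := by
        rw [abs_mul]
        exact mul_le_mul ht (Finset.le_sup' (fun g => |v g|) hg) (abs_nonneg _) hε.le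
      have h2 : ε * M ≤ m := by nlinarith
      have h3 : m ≤ w g := Finset.inf'_le w hg
      have h4 := neg_abs_le (t * v g)
      linarith
    · rw [hvS g hg, mul_zero, add_zero]
      exact hwF.1 g
  have hD0 : D = 0 := by
    have hp := isMinOn_iff.1 hwmin _ (hpert ε (hnnboth ε (le_of_eq (abs_of_pos hε))))
    have hn := isMinOn_iff.1 hwmin _ (hpert (-ε) (hnnboth (-ε) (le_of_eq (abs_neg ε ▸ abs_of_pos hε))))
    rw [hcostlin ε] at hp
    rw [hcostlin (-ε)] at hn
    nlinarith
  -- push to the boundary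
  set T := S.filter (fun g => v g < 0) with hTdef
  have hTne : T.Nonempty := ⟨gneg, Finset.mem_filter.2 ⟨hgnegS, hgnegv⟩⟩
  set tstar := T.inf' hTne (fun g => w g / (-v g)) with htstardef
  have htpos : 0 < tstar := by
    refine (Finset.lt_inf'_iff hTne).2 fun g hg => ?_
    have hgS := (Finset.mem_filter.1 hg).1
    have hgv := (Finset.mem_filter.1 hg).2
    exact div_pos (hwpos g hgS) (neg_pos.2 hgv)
  have hnn' : ∀ g, 0 ≤ w g + tstar * v g := by
    intro g
    by_cases hvg : 0 ≤ v g
    · exact add_nonneg (hwF.1 g) (mul_nonneg htpos.le hvg)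
    · push_neg at hvg
      have hgS : g ∈ S := by
        by_contra hgS
        rw [hvS g hgS] at hvg
        exact lt_irrefl 0 hvg
      have hgT : g ∈ T := Finset.mem_filter.2 ⟨hgS, hvg⟩
      have h1 : tstar ≤ w g / (-v g) := Finset.inf'_le (fun g => w g / (-v g)) hgT
      have h2 : tstar * (-v g) ≤ w g := (le_div_iff₀ (neg_pos.2 hvg)).1 h1
      linarith
  have hw'F := hpert tstar hnn'
  have hw'min : IsMinOn (Cost supp c) (Feas μ supp) (fun g => w g + tstar * v g) := by
    rw [isMinOn_iff]
    intro x hx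
    rw [hcostlin tstar, hD0, mul_zero, add_zero]
    exact isMinOn_iff.1 hwmin x hx
  obtain ⟨g₀, hg₀T, hg₀⟩ := T.exists_mem_eq_inf' hTne (fun g => w g / (-v g))
  have hg₀S : g₀ ∈ S := (Finset.mem_filter.1 hg₀T).1
  have hg₀v : v g₀ < 0 := (Finset.mem_filter.1 hg₀T).2
  have hw'g₀ : w g₀ + tstar * v g₀ = 0 := by
    have hvne : v g₀ ≠ 0 := ne_of_lt hg₀v
    rw [htstardef, hg₀]
    field_simp
    ring
  have hS' : G.filter (fun g => (w g + tstar * v g) ≠ 0) ⊆ S.erase g₀ := by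
    intro g hg
    obtain ⟨hgG, hne⟩ := Finset.mem_filter.1 hg
    have hgS : g ∈ S := by
      by_contra hgS
      have hw0 : w g = 0 := by
        by_contra hw0
        exact hgS (Finset.mem_filter.2 ⟨hgG, hw0⟩)
      rw [hw0, hvS g hgS, mul_zero, add_zero] at hne
      exact hne rfl
    refine Finset.mem_erase.2 ⟨fun h => hne (h ▸ hw'g₀), hgS⟩
  have hlt : (G.filter (fun g => (w g + tstar * v g) ≠ 0)).card < Nat.find hex := by
    calc (G.filter (fun g => (w g + tstar * v g) ≠ 0)).card
        ≤ (S.erase g₀).card := Finset.card_le_card hS'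
      _ < S.card := Finset.card_erase_lt_of_mem hg₀S
      _ = Nat.find hex := hwcard
  exact Nat.find_min hex hlt ⟨_, hw'F, hw'min, rfl⟩


/-- There exists an optimal MOT plan whose support has cardinality at most
`Σ_i n_i − N + 1`, where `n_i` is the number of support points of `μ i`
(stated as `card + N ≤ Σ_i n_i + 1` to avoid truncated subtraction). -/
theorem stmt5 {d N : ℕ} (μ : Fin N → Measure (Pt d)) (supp : Fin N → Finset (Pt d))
    (hμ : ∀ i, IsProbabilityMeasure (μ i) ∧ μ i ((supp i : Set (Pt d))ᶜ) = 0
      ∧ ∀ x ∈ supp i, μ i {x} ≠ 0)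
    (l : Fin N → ℝ) (hl : InSimplex l) :
    ∃ pihat : Measure (Fin N → Pt d), IsPlan μ pihat ∧
      (∀ π, IsPlan μ π → MOT l pihat ≤ MOT l π) ∧
      ∃ s : Finset (Fin N → Pt d), pihat ((s : Set (Fin N → Pt d))ᶜ) = 0 ∧
        msupport pihat ⊆ (s : Set (Fin N → Pt d)) ∧
        s.card + N ≤ (∑ i, (supp i).card) + 1 := by
  classical
  rcases Nat.eq_zero_or_pos N with hN | hN
  · -- degenerate case `N = 0`
    subst hN
    have hMOT0 : ∀ π : Measure (Fin 0 → Pt d), MOT l π = 0 := by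
      intro π
      rw [MOT]
      simp
    refine ⟨Measure.dirac (fun i : Fin 0 => i.elim0), ⟨inferInstance, fun i => i.elim0⟩,
      fun π _ => by rw [hMOT0, hMOT0], {fun i : Fin 0 => i.elim0}, ?_, ?_, by simp⟩
    · have : ((↑({fun i : Fin 0 => i.elim0} : Finset (Fin 0 → Pt d)) : Set (Fin 0 → Pt d)))ᶜ
          = ∅ := by
        ext x
        simp [Subsingleton.elim x (fun i : Fin 0 => i.elim0)]
      rw [this]
      simp
    · intro x _
      simp [Subsingleton.elim x (fun i : Fin 0 => i.elim0)]
  · -- main case `N > 0`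
    have hprob : ∀ i, IsProbabilityMeasure (μ i) := fun i => (hμ i).1
    have hnull : ∀ i, μ i ((supp i : Set (Pt d)))ᶜ = 0 := fun i => (hμ i).2.1
    have hl0 : ∀ i, 0 ≤ l i := fun i => (hl.1 i).le
    set G := Fintype.piFinset supp with hGdef
    have hsuppne : ∀ i, (supp i).Nonempty := by
      intro i
      rcases (supp i).eq_empty_or_nonempty with h | h
      · exfalso
        haveI := hprob i
        have h1 := hnull i
        rw [h] at h1
        simp at h1
      · exact h
    -- the product weights give a feasible point
    have hFne : (Feas μ supp).Nonempty := by
      refine ⟨fun g => if g ∈ G then ∏ j, (μ j {g j}).toReal else 0, ?_, ?_, ?_⟩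
      · intro g
        show 0 ≤ if g ∈ G then ∏ j, (μ j {g j}).toReal else 0
        split
        · exact Finset.prod_nonneg fun j _ => ENNReal.toReal_nonneg
        · exact le_refl 0
      · intro g hg
        show (if g ∈ G then ∏ j, (μ j {g j}).toReal else 0) = 0
        exact if_neg hg
      · intro i y hy
        rw [Finset.sum_congr rfl (fun g hg => if_pos ((Finset.mem_filter.1 hg).1))]
        exact prod_feasible μ supp hprob hnull i y hy
    obtain ⟨w, hwF, hwmin, hwcard⟩ :=
      exists_sparse_min hN μ supp hprob hFne hsuppne (costR l)
    set pihat : Measure (Fin N → Pt d) :=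
      ∑ g ∈ G, ENNReal.ofReal (w g) • Measure.dirac g with hpihat
    have hplan : IsPlan μ pihat :=
      isPlan_mk hN μ supp hprob hnull w hwF.1 hwF.2.2
    set S := G.filter (fun g => w g ≠ 0) with hSdef
    have hSnull : pihat ((↑S : Set (Fin N → Pt d)))ᶜ = 0 := by
      rw [hpihat, Measure.finset_sum_apply]
      refine Finset.sum_eq_zero fun g hgG => ?_
      by_cases hgS : g ∈ S
      · have h1 : g ∉ (↑S : Set (Fin N → Pt d))ᶜ := fun h => h (Finset.mem_coe.2 hgS)
        simp [Measure.smul_apply, Measure.dirac_apply, Set.indicator_apply, h1]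
      · have h2 : w g = 0 := by
          by_contra h3
          exact hgS (Finset.mem_filter.2 ⟨hgG, h3⟩)
        simp [h2]
    refine ⟨pihat, hplan, ?_, S, hSnull, ?_, hwcard⟩
    · -- optimality against any other plan
      intro π hπ
      haveI : IsProbabilityMeasure π := hπ.1
      set wπ : (Fin N → Pt d) → ℝ := fun g => if g ∈ G then (π {g}).toReal else 0 with hwπ
      have hwπ0 : ∀ g, 0 ≤ wπ g := by
        intro g
        show 0 ≤ if g ∈ G then (π {g}).toReal else 0
        split
        · exact ENNReal.toReal_nonneg
        · exact le_refl 0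
      have hπeq : π = ∑ g ∈ G, ENNReal.ofReal (wπ g) • Measure.dirac g := by
        have hdec := measure_eq_sum_dirac π G (plan_decomp μ supp hnull π hπ)
        rw [hdec]
        refine Finset.sum_congr rfl fun g hg => ?_
        have h5 : wπ g = (π {g}).toReal := if_pos hg
        rw [h5, ENNReal.ofReal_toReal (measure_ne_top π _)]
      have hwπF : wπ ∈ Feas μ supp := by
        refine ⟨hwπ0, fun g hg => if_neg hg, fun i y hy => ?_⟩
        have hc : ∀ g ∈ (Fintype.piFinset supp).filter (fun g => g i = y),
            wπ g = (π {g}).toReal := fun g hg => if_pos (Finset.mem_filter.1 hg).1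
        have hts := ENNReal.toReal_sum
          (s := (Fintype.piFinset supp).filter (fun g => g i = y))
          (f := fun g => π {g}) (fun g _ => measure_ne_top _ _)
        rw [Finset.sum_congr rfl hc, ← hts, plan_fiber_sum μ supp hnull π hπ i y]
      have h1 : MOT l pihat = ENNReal.ofReal (Cost supp (costR l) w) := by
        rw [hpihat, MOT_mk l hl0 G w hwF.1]
        rfl
      have h2 : MOT l π = ENNReal.ofReal (Cost supp (costR l) wπ) := by
        rw [hπeq, MOT_mk l hl0 G wπ hwπ0]
        rfl
      rw [h1, h2]
      exact ENNReal.ofReal_le_ofReal (hwmin wπ hwπF)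
    · -- support inclusion
      intro x hx
      by_contra hxS
      refine hx ?_
      have h1 : ({x} : Set (Fin N → Pt d)) ⊆ (↑S : Set (Fin N → Pt d))ᶜ := by
        intro z hz
        rw [Set.mem_singleton_iff.1 hz]
        exact hxS
      exact le_antisymm (le_trans (measure_mono h1) hSnull.le) bot_le
end
end

section
/- Let π̂ = Σ_{j=1}^M π̂_j δ(x̂_{1,j},…,x̂_{N,j}) (with π̂_j > 0 and the N-tuples (x̂_{1,j},…,x̂_{N,j}) pairwise distinct) be an optimal plan minimizing Φ over Π(μ¹,…,μ^N). Then the weighted means m̂_j = Σ_{i=1}^N λ_i x̂_{i,j} are pairwise distinct: m̂_j ≠ m̂_k whenever j ≠ k. -/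
open MeasureTheory
open scoped ENNReal

noncomputable section

/-- If `π̂ = Σ_j π̂_j δ(x̂_{1,j},…,x̂_{N,j})` (positive weights, pairwise
distinct tuples) is an optimal MOT plan, then the weighted means
`m̂_j = Σ_i λ_i x̂_{i,j}` are pairwise distinct. -/

lemma sum_erase2 {M : ℕ} {T : Type*} [AddCommMonoid T] {j k : Fin M} (h : j ≠ k) (G : Fin M → T) :
    ∑ r, G r = G j + (G k + ∑ r ∈ (Finset.univ.erase j).erase k, G r) := by
  rw [← Finset.add_sum_erase _ G (Finset.mem_univ j),
      ← Finset.add_sum_erase _ G (Finset.mem_erase.2 ⟨Ne.symm h, Finset.mem_univ k⟩)]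

lemma split_lemma {M : ℕ} {T : Type*} [AddCommMonoid T] [Module ℝ≥0∞ T] {j k : Fin M}
    (hjk : j ≠ k) (w : Fin M → ℝ) (ε : ℝ) (hε : 0 ≤ ε) (hεj : ε ≤ w j) (hεk : ε ≤ w k)
    (H : Fin M → T) :
    (∑ r, ENNReal.ofReal (Function.update (Function.update w j (w j - ε)) k (w k - ε) r) • H r)
      + ENNReal.ofReal ε • H j + ENNReal.ofReal ε • H k
      = ∑ r, ENNReal.ofReal (w r) • H r := by
  have hfun : (fun r => ENNReal.ofReal
        (Function.update (Function.update w j (w j - ε)) k (w k - ε) r) • H r)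
      = Function.update (Function.update (fun r => ENNReal.ofReal (w r) • H r) j
          (ENNReal.ofReal (w j - ε) • H j)) k (ENNReal.ofReal (w k - ε) • H k) := by
    funext r
    rcases eq_or_ne r k with rfl | hrk
    · simp
    · rcases eq_or_ne r j with rfl | hrj
      · simp [Function.update_of_ne hrk, Function.update_of_ne hjk]
      · simp [Function.update_of_ne hrk, Function.update_of_ne hrj]
  rw [hfun, sum_erase2 hjk, sum_erase2 hjk (fun r => ENNReal.ofReal (w r) • H r)]
  have hrem : ∑ r ∈ (Finset.univ.erase j).erase k,
      (Function.update (Function.update (fun r => ENNReal.ofReal (w r) • H r) j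
          (ENNReal.ofReal (w j - ε) • H j)) k (ENNReal.ofReal (w k - ε) • H k)) r
      = ∑ r ∈ (Finset.univ.erase j).erase k, ENNReal.ofReal (w r) • H r := by
    refine Finset.sum_congr rfl fun r hr => ?_
    have hrk : r ≠ k := (Finset.mem_erase.1 hr).1
    have hrj : r ≠ j := (Finset.mem_erase.1 (Finset.mem_erase.1 hr).2).1
    simp [Function.update_of_ne hrk, Function.update_of_ne hrj]
  rw [hrem]
  simp only [Function.update_self, Function.update_of_ne hjk]
  have hj : ENNReal.ofReal (w j - ε) • H j + ENNReal.ofReal ε • H j = ENNReal.ofReal (w j) • H j := by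
    rw [← add_smul, ← ENNReal.ofReal_add (by linarith) hε, sub_add_cancel]
  have hk : ENNReal.ofReal (w k - ε) • H k + ENNReal.ofReal ε • H k = ENNReal.ofReal (w k) • H k := by
    rw [← add_smul, ← ENNReal.ofReal_add (by linarith) hε, sub_add_cancel]
  rw [← hj, ← hk]; abel

lemma map_finset_sum_meas {α β ι : Type*} [MeasurableSpace α] [MeasurableSpace β]
    {g : α → β} (hg : Measurable g) (s : Finset ι) (μ : ι → Measure α) :
    (∑ i ∈ s, μ i).map g = ∑ i ∈ s, (μ i).map g := by
  induction s using Finset.cons_induction with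
  | empty => simp
  | cons a s ha ih => rw [Finset.sum_cons, Finset.sum_cons, Measure.map_add _ _ hg, ih]

lemma cost_identity_raw {d N : ℕ} (l : Fin N → ℝ) (hl1 : ∑ i, l i = 1) (y : Fin N → Pt d) :
    ∑ s : Fin N, ∑ t : Fin N, (if s < t then l s * l t * ‖y s - y t‖ ^ 2 else 0)
      = ∑ s, l s * ‖y s‖ ^ 2 - ‖∑ s, l s • y s‖ ^ 2 := by
  have hsymm : ∀ s t : Fin N, l t * l s * ‖y t - y s‖ ^ 2 = l s * l t * ‖y s - y t‖ ^ 2 := by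
    intro s t; rw [norm_sub_rev]; ring
  have hsplit : ∀ s t : Fin N, l s * l t * ‖y s - y t‖ ^ 2
      = (if s < t then l s * l t * ‖y s - y t‖ ^ 2 else 0)
        + (if t < s then l s * l t * ‖y s - y t‖ ^ 2 else 0) := by
    intro s t
    rcases lt_trichotomy s t with h | h | h
    · simp [h, not_lt_of_gt h, asymm h]
    · subst h; simp
    · simp [h, not_lt_of_gt h, asymm h]
  have h2 : ∑ s : Fin N, ∑ t : Fin N, l s * l t * ‖y s - y t‖ ^ 2
      = 2 * ∑ s : Fin N, ∑ t : Fin N, (if s < t then l s * l t * ‖y s - y t‖ ^ 2 else 0) := by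
    calc ∑ s : Fin N, ∑ t : Fin N, l s * l t * ‖y s - y t‖ ^ 2
        = ∑ s : Fin N, ∑ t : Fin N, ((if s < t then l s * l t * ‖y s - y t‖ ^ 2 else 0)
            + (if t < s then l s * l t * ‖y s - y t‖ ^ 2 else 0)) := by
          exact Finset.sum_congr rfl fun s _ => Finset.sum_congr rfl fun t _ => hsplit s t
      _ = (∑ s : Fin N, ∑ t : Fin N, (if s < t then l s * l t * ‖y s - y t‖ ^ 2 else 0))
            + ∑ s : Fin N, ∑ t : Fin N, (if t < s then l s * l t * ‖y s - y t‖ ^ 2 else 0) := by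
          rw [← Finset.sum_add_distrib]
          exact Finset.sum_congr rfl fun s _ => Finset.sum_add_distrib
      _ = 2 * ∑ s : Fin N, ∑ t : Fin N, (if s < t then l s * l t * ‖y s - y t‖ ^ 2 else 0) := by
          rw [two_mul]
          congr 1
          rw [Finset.sum_comm]
          exact Finset.sum_congr rfl fun s _ => Finset.sum_congr rfl fun t _ => by
            by_cases h : s < t <;> simp [h, hsymm]
  have e1 : ∑ s : Fin N, ∑ t : Fin N, l s * l t * ‖y s‖ ^ 2 = ∑ s, l s * ‖y s‖ ^ 2 := by
    refine Finset.sum_congr rfl fun s _ => ?_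
    have : ∑ t : Fin N, l s * l t * ‖y s‖ ^ 2 = (∑ t, l t) * (l s * ‖y s‖ ^ 2) := by
      rw [Finset.sum_mul]; exact Finset.sum_congr rfl fun t _ => by ring
    rw [this, hl1, one_mul]
  have e2 : ∑ s : Fin N, ∑ t : Fin N, l s * l t * ‖y t‖ ^ 2 = ∑ t, l t * ‖y t‖ ^ 2 := by
    rw [Finset.sum_comm]
    refine Finset.sum_congr rfl fun t _ => ?_
    have : ∑ s : Fin N, l s * l t * ‖y t‖ ^ 2 = (∑ s, l s) * (l t * ‖y t‖ ^ 2) := by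
      rw [Finset.sum_mul]; exact Finset.sum_congr rfl fun s _ => by ring
    rw [this, hl1, one_mul]
  have e3 : ∑ s : Fin N, ∑ t : Fin N, l s * (l t * (inner ℝ (y s) (y t) : ℝ))
      = ‖∑ s, l s • y s‖ ^ 2 := by
    rw [← real_inner_self_eq_norm_sq, sum_inner]
    refine Finset.sum_congr rfl fun s _ => ?_
    rw [real_inner_smul_left, inner_sum, Finset.mul_sum]
    exact Finset.sum_congr rfl fun t _ => by rw [real_inner_smul_right]
  have hexp : ∑ s : Fin N, ∑ t : Fin N, l s * l t * ‖y s - y t‖ ^ 2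
      = 2 * (∑ s, l s * ‖y s‖ ^ 2) - 2 * ‖∑ s, l s • y s‖ ^ 2 := by
    have hterm : ∀ s t : Fin N, l s * l t * ‖y s - y t‖ ^ 2
        = l s * l t * ‖y s‖ ^ 2 + l s * l t * ‖y t‖ ^ 2
          - 2 * (l s * (l t * (inner ℝ (y s) (y t) : ℝ))) := by
      intro s t
      rw [show ‖y s - y t‖ ^ 2 = ‖y s‖ ^ 2 - 2 * (inner ℝ (y s) (y t) : ℝ) + ‖y t‖ ^ 2 from
        norm_sub_sq_real (y s) (y t)]
      ring
    calc ∑ s : Fin N, ∑ t : Fin N, l s * l t * ‖y s - y t‖ ^ 2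
        = (∑ s : Fin N, ∑ t : Fin N, l s * l t * ‖y s‖ ^ 2)
          + (∑ s : Fin N, ∑ t : Fin N, l s * l t * ‖y t‖ ^ 2)
          - 2 * ∑ s : Fin N, ∑ t : Fin N, l s * (l t * (inner ℝ (y s) (y t) : ℝ)) := by
          rw [← Finset.sum_add_distrib, Finset.mul_sum, ← Finset.sum_sub_distrib]
          refine Finset.sum_congr rfl fun s _ => ?_
          rw [← Finset.sum_add_distrib, Finset.mul_sum, ← Finset.sum_sub_distrib]
          exact Finset.sum_congr rfl fun t _ => hterm s t
      _ = 2 * (∑ s, l s * ‖y s‖ ^ 2) - 2 * ‖∑ s, l s • y s‖ ^ 2 := by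
          rw [e1, e2, e3]; ring
  linarith [h2, hexp]

def frc {d N : ℕ} (l : Fin N → ℝ) (y : Fin N → Pt d) : ℝ :=
  ∑ s : Fin N, ∑ t : Fin N, (if s < t then l s * l t * ‖y s - y t‖ ^ 2 else 0)

lemma frc_nonneg {d N : ℕ} (l : Fin N → ℝ) (hl : ∀ i, 0 < l i) (y : Fin N → Pt d) :
    0 ≤ frc l y := by
  refine Finset.sum_nonneg fun s _ => Finset.sum_nonneg fun t _ => ?_
  split_ifs
  · exact mul_nonneg (mul_nonneg (hl s).le (hl t).le) (sq_nonneg _)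
  · exact le_rfl

lemma MOT_eq_lintegral_frc {d N : ℕ} (l : Fin N → ℝ) (hl : ∀ i, 0 < l i)
    (π : Measure (Fin N → Pt d)) :
    MOT l π = ∫⁻ y, ENNReal.ofReal (frc l y) ∂π := by
  unfold MOT
  congr 1
  funext y
  unfold frc
  rw [ENNReal.ofReal_sum_of_nonneg (fun s _ => Finset.sum_nonneg fun t _ => by
    split_ifs
    · exact mul_nonneg (mul_nonneg (hl s).le (hl t).le) (sq_nonneg _)
    · exact le_rfl)]
  refine Finset.sum_congr rfl fun s _ => ?_
  rw [ENNReal.ofReal_sum_of_nonneg (fun t _ => by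
    split_ifs
    · exact mul_nonneg (mul_nonneg (hl s).le (hl t).le) (sq_nonneg _)
    · exact le_rfl)]
  refine Finset.sum_congr rfl fun t _ => ?_
  split_ifs <;> simp

lemma cost_identity {d N : ℕ} (l : Fin N → ℝ) (hl1 : ∑ i, l i = 1) (y : Fin N → Pt d) :
    frc l y = ∑ s, l s * ‖y s‖ ^ 2 - ‖∑ s, l s • y s‖ ^ 2 :=
  cost_identity_raw l hl1 y

/-- STMT6 aux done -/
theorem stmt6 {d N M : ℕ} (μ : Fin N → Measure (Pt d))
    (hμ : ∀ i, IsProbabilityMeasure (μ i) ∧ FinitelySupported (μ i))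
    (l : Fin N → ℝ) (hl : InSimplex l)
    (w : Fin M → ℝ) (hw : ∀ j, 0 < w j) (hwsum : ∑ j, w j = 1)
    (x : Fin M → Fin N → Pt d) (hx : Function.Injective x)
    (pihat : Measure (Fin N → Pt d))
    (hrep : pihat = ∑ j, ENNReal.ofReal (w j) • Measure.dirac (x j))
    (hplan : IsPlan μ pihat)
    (hopt : ∀ π, IsPlan μ π → MOT l pihat ≤ MOT l π) :
    ∀ j k : Fin M, j ≠ k → (∑ i, l i • x j i) ≠ ∑ i, l i • x k i := by
  obtain ⟨hlpos, hlsum⟩ := hl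
  intro j k hjk hmm
  have hxjk : x j ≠ x k := fun h => hjk (hx h)
  obtain ⟨i, hi⟩ := Function.ne_iff.mp hxjk
  set a : Fin N → Pt d := Function.update (x j) i (x k i) with ha
  set b : Fin N → Pt d := Function.update (x k) i (x j i) with hb
  set ε : ℝ := min (w j) (w k) with hεdef
  have hε0 : 0 < ε := lt_min (hw j) (hw k)
  have hεj : ε ≤ w j := min_le_left _ _
  have hεk : ε ≤ w k := min_le_right _ _
  set π' : Measure (Fin N → Pt d) :=
    (∑ r, ENNReal.ofReal (Function.update (Function.update w j (w j - ε)) k (w k - ε) r)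
        • Measure.dirac (x r))
      + ENNReal.ofReal ε • Measure.dirac a + ENNReal.ofReal ε • Measure.dirac b with hπ'
  -- probability
  have hπ'univ : π' Set.univ = 1 := by
    have hs := split_lemma (T := ℝ≥0∞) hjk w ε hε0.le hεj hεk (fun _ => (1:ℝ≥0∞))
    simp only [smul_eq_mul, mul_one] at hs
    rw [hπ']
    simp only [Measure.coe_add, Pi.add_apply, Measure.smul_apply, Measure.finset_sum_apply,
      Measure.dirac_apply_of_mem (Set.mem_univ _), smul_eq_mul, mul_one]
    rw [hs, ← ENNReal.ofReal_sum_of_nonneg (fun r _ => (hw r).le), hwsum, ENNReal.ofReal_one]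
  have hmeas : ∀ i' : Fin N, Measurable (fun y : Fin N → Pt d => y i') :=
    fun i' => measurable_pi_apply i'
  have hmapsum : ∀ (c : Fin M → ℝ) (i' : Fin N),
      (∑ r, ENNReal.ofReal (c r) • Measure.dirac (x r)).map (fun y => y i')
        = ∑ r, ENNReal.ofReal (c r) • Measure.dirac (x r i') := by
    intro c i'
    rw [map_finset_sum_meas (hmeas i')]
    exact Finset.sum_congr rfl fun r _ => by
      rw [Measure.map_smul, Measure.map_dirac' (hmeas i')]
  have hmarg : ∀ i' : Fin N, π'.map (fun y => y i') = μ i' := by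
    intro i'
    have hpm : pihat.map (fun y => y i') = ∑ r, ENNReal.ofReal (w r) • Measure.dirac (x r i') := by
      rw [hrep]; exact hmapsum w i'
    have hmap : π'.map (fun y => y i')
        = (∑ r, ENNReal.ofReal (Function.update (Function.update w j (w j - ε)) k (w k - ε) r)
            • Measure.dirac (x r i'))
          + ENNReal.ofReal ε • Measure.dirac (a i') + ENNReal.ofReal ε • Measure.dirac (b i') := by
      rw [hπ', Measure.map_add _ _ (hmeas i'), Measure.map_add _ _ (hmeas i'),
        hmapsum _ i', Measure.map_smul, Measure.map_smul,
        Measure.map_dirac' (hmeas i'), Measure.map_dirac' (hmeas i')]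
    rw [hmap]
    rcases eq_or_ne i' i with rfl | hne
    · have haa : a i' = x k i' := Function.update_self _ _ _
      have hbb : b i' = x j i' := Function.update_self _ _ _
      rw [haa, hbb, add_right_comm,
        split_lemma hjk w ε hε0.le hεj hεk (fun r => Measure.dirac (x r i')), ← hpm]
      exact hplan.2 i'
    · have haa : a i' = x j i' := Function.update_of_ne hne _ _
      have hbb : b i' = x k i' := Function.update_of_ne hne _ _
      rw [haa, hbb,
        split_lemma hjk w ε hε0.le hεj hεk (fun r => Measure.dirac (x r i')), ← hpm]
      exact hplan.2 i'
  have hπ'plan : IsPlan μ π' := ⟨⟨hπ'univ⟩, hmarg⟩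
  -- MOT values
  have hMOTsum : ∀ (c : Fin M → ℝ),
      ∫⁻ z, ENNReal.ofReal (frc l z) ∂(∑ r, ENNReal.ofReal (c r) • Measure.dirac (x r))
        = ∑ r, ENNReal.ofReal (c r) * ENNReal.ofReal (frc l (x r)) := by
    intro c
    rw [lintegral_finset_sum_measure]
    exact Finset.sum_congr rfl fun r _ => by rw [lintegral_smul_measure, lintegral_dirac, smul_eq_mul]
  have hMOThat : MOT l pihat = ∑ r, ENNReal.ofReal (w r) * ENNReal.ofReal (frc l (x r)) := by
    rw [MOT_eq_lintegral_frc l hlpos, hrep, hMOTsum]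
  have hMOT' : MOT l π'
      = (∑ r, ENNReal.ofReal (Function.update (Function.update w j (w j - ε)) k (w k - ε) r)
            * ENNReal.ofReal (frc l (x r)))
        + (ENNReal.ofReal ε * ENNReal.ofReal (frc l a)
            + ENNReal.ofReal ε * ENNReal.ofReal (frc l b)) := by
    rw [MOT_eq_lintegral_frc l hlpos, hπ', lintegral_add_measure, lintegral_add_measure,
      hMOTsum, lintegral_smul_measure, lintegral_smul_measure, lintegral_dirac,
      lintegral_dirac, add_assoc, smul_eq_mul, smul_eq_mul]
  -- mean computations
  have hma : ∑ s, l s • a s = (∑ s, l s • x j s) + l i • (x k i - x j i) := by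
    have hfun : (fun s => l s • a s) = Function.update (fun s => l s • x j s) i (l i • x k i) := by
      funext s
      rcases eq_or_ne s i with rfl | h
      · simp [ha]
      · simp [ha, Function.update_of_ne h]
    rw [hfun, Finset.sum_update_of_mem (Finset.mem_univ i),
      ← Finset.add_sum_erase _ (fun s => l s • x j s) (Finset.mem_univ i),
      Finset.sdiff_singleton_eq_erase, smul_sub]
    abel
  have hmb : ∑ s, l s • b s = (∑ s, l s • x k s) - l i • (x k i - x j i) := by
    have hfun : (fun s => l s • b s) = Function.update (fun s => l s • x k s) i (l i • x j i) := by
      funext s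
      rcases eq_or_ne s i with rfl | h
      · simp [hb]
      · simp [hb, Function.update_of_ne h]
    rw [hfun, Finset.sum_update_of_mem (Finset.mem_univ i),
      ← Finset.add_sum_erase _ (fun s => l s • x k s) (Finset.mem_univ i),
      Finset.sdiff_singleton_eq_erase, smul_sub]
    abel
  have hnrm : (∑ s, l s * ‖a s‖ ^ 2) + (∑ s, l s * ‖b s‖ ^ 2)
      = (∑ s, l s * ‖x j s‖ ^ 2) + (∑ s, l s * ‖x k s‖ ^ 2) := by
    rw [← Finset.sum_add_distrib, ← Finset.sum_add_distrib]
    refine Finset.sum_congr rfl fun s _ => ?_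
    rcases eq_or_ne s i with rfl | h
    · simp only [ha, hb, Function.update_self]; ring
    · simp [ha, hb, Function.update_of_ne h]
  have hvne : l i • (x k i - x j i) ≠ 0 :=
    smul_ne_zero (ne_of_gt (hlpos i)) (sub_ne_zero.2 (Ne.symm hi))
  have hvpos : 0 < ‖l i • (x k i - x j i)‖ ^ 2 := pow_pos (norm_pos_iff.2 hvne) 2
  have hkey : frc l a + frc l b < frc l (x j) + frc l (x k) := by
    have hCa := cost_identity l hlsum a
    have hCb := cost_identity l hlsum b
    have hCj := cost_identity l hlsum (x j)
    have hCk := cost_identity l hlsum (x k)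
    rw [hma] at hCa
    rw [hmb, ← hmm] at hCb
    rw [← hmm] at hCk
    have hpar : ‖(∑ s, l s • x j s) + l i • (x k i - x j i)‖ ^ 2
        + ‖(∑ s, l s • x j s) - l i • (x k i - x j i)‖ ^ 2
        = 2 * ‖∑ s, l s • x j s‖ ^ 2 + 2 * ‖l i • (x k i - x j i)‖ ^ 2 := by
      rw [norm_add_sq_real, norm_sub_sq_real]; ring
    linarith [hnrm, hpar, hvpos, hCa, hCb, hCj, hCk]
  -- ENNReal comparison
  have hSfin : (∑ r, ENNReal.ofReal (Function.update (Function.update w j (w j - ε)) k (w k - ε) r)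
      * ENNReal.ofReal (frc l (x r))) ≠ ⊤ := by
    refine (ENNReal.sum_lt_top.2 fun r _ => ?_).ne
    exact ENNReal.mul_lt_top ENNReal.ofReal_lt_top ENNReal.ofReal_lt_top
  have hsplitF := split_lemma (T := ℝ≥0∞) hjk w ε hε0.le hεj hεk
    (fun r => ENNReal.ofReal (frc l (x r)))
  simp only [smul_eq_mul] at hsplitF
  have hlt : MOT l π' < MOT l pihat := by
    rw [hMOT', hMOThat, ← hsplitF, add_assoc]
    refine ENNReal.add_lt_add_left hSfin ?_
    have h1 : 0 ≤ ε * frc l a := mul_nonneg hε0.le (frc_nonneg l hlpos a)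
    have h2 : 0 ≤ ε * frc l b := mul_nonneg hε0.le (frc_nonneg l hlpos b)
    have h3 : 0 ≤ ε * frc l (x j) := mul_nonneg hε0.le (frc_nonneg l hlpos (x j))
    have h4 : 0 ≤ ε * frc l (x k) := mul_nonneg hε0.le (frc_nonneg l hlpos (x k))
    rw [← ENNReal.ofReal_mul hε0.le, ← ENNReal.ofReal_mul hε0.le,
      ← ENNReal.ofReal_mul hε0.le, ← ENNReal.ofReal_mul hε0.le,
      ← ENNReal.ofReal_add h1 h2, ← ENNReal.ofReal_add h3 h4]
    refine (ENNReal.ofReal_lt_ofReal_iff ?_).2 ?_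
    · nlinarith [frc_nonneg l hlpos a, frc_nonneg l hlpos b, hkey]
    · nlinarith [hkey]
  exact absurd (hopt π' hπ'plan) (not_le.2 hlt)
end
end

section
/- Let π̂ = Σ_{j=1}^M π̂_j δ(x̂_{1,j},…,x̂_{N,j}) be an optimal plan minimizing Φ over Π(μ¹,…,μ^N), let m̂_j = Σ_{i=1}^N λ_i x̂_{i,j}, and let ν̂ = (M_λ)_# π̂ = Σ_j π̂_j δ(m̂_j). Then for every i = 1,…,N, the two-marginal measure Σ_{j=1}^M π̂_j δ(m̂_j, x̂_{i,j}) is an optimal coupling between ν̂ and μ^i for the squared Euclidean cost, i.e. its cost equals W₂²(ν̂, μ^i). -/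
open MeasureTheory
open scoped ENNReal

noncomputable section

/- Auxiliary lemmas -/
section Aux
open scoped RealInnerProductSpace

lemma map_finset_sum_measure {α β ι : Type*} [MeasurableSpace α] [MeasurableSpace β]
    {f : α → β} (hf : Measurable f) (s : Finset ι) (μ : ι → Measure α) :
    (∑ j ∈ s, μ j).map f = ∑ j ∈ s, (μ j).map f := by
  induction s using Finset.cons_induction with
  | empty => simp
  | cons a s ha ih => rw [Finset.sum_cons, Finset.sum_cons, Measure.map_add _ _ hf, ih]

lemma lintegral_sum_smul_dirac {α ι : Type*} [MeasurableSpace α]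
    (s : Finset ι) (c : ι → ℝ≥0∞) (p : ι → α) {g : α → ℝ≥0∞} (hg : Measurable g) :
    ∫⁻ x, g x ∂(∑ j ∈ s, c j • Measure.dirac (p j)) = ∑ j ∈ s, c j * g (p j) := by
  rw [lintegral_finset_sum_measure]
  simp [lintegral_smul_measure, lintegral_dirac' _ hg]

lemma sum_smul_sub_wmean {d N : ℕ} (l : Fin N → ℝ) (hl : ∑ i, l i = 1)
    (z : Fin N → Pt d) : ∑ k, l k • (z k - ∑ i, l i • z i) = 0 := by
  simp only [smul_sub, Finset.sum_sub_distrib, ← Finset.sum_smul, hl, one_smul, sub_self]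

lemma lemA {d N : ℕ} (l : Fin N → ℝ) (hl : ∑ i, l i = 1) (z : Fin N → Pt d) (a : Pt d) :
    ∑ k, l k * ‖z k - a‖^2
      = (∑ k, l k * ‖z k - ∑ i, l i • z i‖^2) + ‖(∑ i, l i • z i) - a‖^2 := by
  set m : Pt d := ∑ i, l i • z i with hm
  have h1 : ∀ k, l k * ‖z k - a‖^2
      = l k * ‖z k - m‖^2 + 2 * (l k * inner ℝ (z k - m) (m - a)) + l k * ‖m - a‖^2 := by
    intro k
    have : z k - a = (z k - m) + (m - a) := by abel
    rw [this, norm_add_sq_real]; ring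
  rw [Finset.sum_congr rfl (fun k _ => h1 k)]
  rw [Finset.sum_add_distrib, Finset.sum_add_distrib, ← Finset.sum_mul, hl, one_mul,
    ← Finset.mul_sum]
  have h2 : ∑ k, l k * inner ℝ (z k - m) (m - a) = (0:ℝ) := by
    have hz := sum_smul_sub_wmean l hl z
    have e1 : ∀ k : Fin N, l k * inner ℝ (z k - m) (m - a)
        = inner ℝ (l k • (z k - m)) (m - a) := fun k => (real_inner_smul_left _ _ _).symm
    rw [Finset.sum_congr rfl (fun k _ => e1 k), ← sum_inner, hz, inner_zero_left]
  rw [h2]; ring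

lemma lemB {d N : ℕ} (l : Fin N → ℝ) (hl : ∑ i, l i = 1) (z : Fin N → Pt d) :
    ∑ s : Fin N, ∑ t : Fin N, (if s < t then l s * l t * ‖z s - z t‖^2 else 0)
      = ∑ k, l k * ‖z k - ∑ i, l i • z i‖^2 := by
  set m : Pt d := ∑ i, l i • z i with hm
  set g : Fin N → Fin N → ℝ := fun s t => l s * l t * ‖z s - z t‖^2 with hg
  set V : ℝ := ∑ k, l k * ‖z k - m‖^2 with hV
  have hsymm : ∀ s t, g s t = g t s := by
    intro s t; simp only [hg]; rw [norm_sub_rev]; ring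
  have hfull : ∑ s : Fin N, ∑ t : Fin N, g s t = 2 * V := by
    have hrow : ∀ s : Fin N, ∑ t : Fin N, g s t = l s * (V + ‖m - z s‖^2) := by
      intro s
      have : ∑ t : Fin N, g s t = l s * ∑ t : Fin N, l t * ‖z t - z s‖^2 := by
        simp only [hg]; rw [Finset.mul_sum]
        refine Finset.sum_congr rfl fun t _ => ?_
        rw [norm_sub_rev]; ring
      rw [this, lemA l hl z (z s)]
    rw [Finset.sum_congr rfl (fun s _ => hrow s)]
    have : ∑ s : Fin N, l s * (V + ‖m - z s‖^2)
        = (∑ s, l s) * V + ∑ s : Fin N, l s * ‖z s - m‖^2 := by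
      rw [Finset.sum_mul]
      rw [← Finset.sum_add_distrib]
      refine Finset.sum_congr rfl fun s _ => ?_
      rw [norm_sub_rev (z s) m]; ring
    rw [this, hl, ← hV]; ring
  have hsplit : ∀ s t : Fin N, g s t
      = (if s < t then g s t else 0) + (if t < s then g s t else 0) := by
    intro s t
    rcases lt_trichotomy s t with h|h|h
    · simp [h, h.asymm]
    · subst h; simp [lt_irrefl, hg]
    · simp [h, h.asymm]
  have h2 : ∑ s : Fin N, ∑ t : Fin N, g s t
      = (∑ s : Fin N, ∑ t : Fin N, (if s < t then g s t else 0))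
        + ∑ s : Fin N, ∑ t : Fin N, (if t < s then g s t else 0) := by
    rw [← Finset.sum_add_distrib]
    refine Finset.sum_congr rfl fun s _ => ?_
    rw [← Finset.sum_add_distrib]
    exact Finset.sum_congr rfl fun t _ => hsplit s t
  have h3 : ∑ s : Fin N, ∑ t : Fin N, (if t < s then g s t else 0)
      = ∑ s : Fin N, ∑ t : Fin N, (if s < t then g s t else 0) := by
    rw [Finset.sum_comm]
    exact Finset.sum_congr rfl fun t _ => Finset.sum_congr rfl fun s _ => by rw [hsymm]
  have : 2 * (∑ s : Fin N, ∑ t : Fin N, (if s < t then g s t else 0)) = 2 * V := by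
    rw [← hfull, h2, h3]; ring
  linarith

lemma F_eq {d N : ℕ} (l : Fin N → ℝ) (hlpos : ∀ i, 0 < l i) (hlsum : ∑ i, l i = 1)
    (z : Fin N → Pt d) :
    (∑ s : Fin N, ∑ t : Fin N,
        if s < t then ENNReal.ofReal (l s * l t * ‖z s - z t‖ ^ 2) else 0)
      = ENNReal.ofReal (∑ k, l k * ‖z k - wmean l z‖^2) := by
  have h1 : ∀ s t : Fin N,
      (if s < t then ENNReal.ofReal (l s * l t * ‖z s - z t‖ ^ 2) else 0)
        = ENNReal.ofReal (if s < t then l s * l t * ‖z s - z t‖ ^ 2 else 0) := by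
    intro s t; split <;> simp
  simp only [h1]
  have nn : ∀ s t : Fin N, 0 ≤ (if s < t then l s * l t * ‖z s - z t‖ ^ 2 else 0) := by
    intro s t; split
    · exact mul_nonneg (mul_nonneg (hlpos s).le (hlpos t).le) (sq_nonneg _)
    · exact le_refl 0
  rw [show wmean l z = ∑ i, l i • z i from rfl, ← lemB l hlsum z,
    ENNReal.ofReal_sum_of_nonneg fun s _ => Finset.sum_nonneg fun t _ => nn s t]
  exact Finset.sum_congr rfl fun s _ => (ENNReal.ofReal_sum_of_nonneg fun t _ => nn s t).symm

lemma G_measurable {d N : ℕ} (l : Fin N → ℝ) :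
    Measurable (fun z : Fin N → Pt d => ∑ s : Fin N, ∑ t : Fin N,
      if s < t then ENNReal.ofReal (l s * l t * ‖z s - z t‖ ^ 2) else 0) := by
  refine Finset.measurable_sum _ fun s _ => Finset.measurable_sum _ fun t _ => ?_
  split
  · exact ((((measurable_pi_apply s).sub (measurable_pi_apply t)).norm.pow_const 2).const_mul
      (l s * l t)).ennreal_ofReal
  · exact measurable_const

lemma cost_measurable {d : ℕ} :
    Measurable (fun p : Pt d × Pt d => ENNReal.ofReal (‖p.1 - p.2‖ ^ 2)) :=
  (((measurable_fst.sub measurable_snd).norm.pow_const 2)).ennreal_ofReal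

end Aux

/-- If `π̂ = Σ_j π̂_j δ(x̂_{1,j},…,x̂_{N,j})` is an optimal MOT plan,
`m̂_j = Σ_i λ_i x̂_{i,j}` and `ν̂ = (M_λ)_# π̂`, then for every `i` the measure
`Σ_j π̂_j δ(m̂_j, x̂_{i,j})` is an optimal coupling between `ν̂` and `μ^i`:
its squared-Euclidean cost equals `W₂²(ν̂, μ^i)`. -/
theorem stmt7 {d N M : ℕ} (μ : Fin N → Measure (Pt d))
    (hμ : ∀ i, IsProbabilityMeasure (μ i) ∧ FinitelySupported (μ i))
    (l : Fin N → ℝ) (hl : InSimplex l)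
    (w : Fin M → ℝ) (hw : ∀ j, 0 < w j) (hwsum : ∑ j, w j = 1)
    (x : Fin M → Fin N → Pt d) (hx : Function.Injective x)
    (pihat : Measure (Fin N → Pt d))
    (hrep : pihat = ∑ j, ENNReal.ofReal (w j) • Measure.dirac (x j))
    (hplan : IsPlan μ pihat)
    (hopt : ∀ π, IsPlan μ π → MOT l pihat ≤ MOT l π) :
    ∀ i : Fin N,
      IsCoupling (pihat.map (wmean l)) (μ i)
        (∑ j, ENNReal.ofReal (w j) • Measure.dirac ((wmean l (x j), x j i))) ∧
      (∫⁻ p, ENNReal.ofReal (‖p.1 - p.2‖ ^ 2)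
          ∂(∑ j, ENNReal.ofReal (w j) • Measure.dirac ((wmean l (x j), x j i))))
        = W2sq (pihat.map (wmean l)) (μ i) := by
  obtain ⟨hlpos, hlsum⟩ := hl
  have hwm : Measurable (wmean (d := d) (N := N) l) := by
    unfold wmean
    exact Finset.measurable_sum _ fun i _ => (measurable_pi_apply i).const_smul (l i)
  set m : Fin M → Pt d := fun j => wmean l (x j) with hm
  set c : Fin M → ℝ≥0∞ := fun j => ENNReal.ofReal (w j) with hc
  have hc0 : ∀ j, c j ≠ 0 := fun j => by
    simp [hc, ENNReal.ofReal_eq_zero, not_le, hw j]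
  have hctop : ∀ j, c j ≠ ⊤ := fun j => ENNReal.ofReal_ne_top
  have hν : pihat.map (wmean l) = ∑ j, c j • Measure.dirac (m j) := by
    rw [hrep, map_finset_sum_measure hwm]
    simp only [Measure.map_smul, Measure.map_dirac' hwm]
    rfl
  have hμrep : ∀ k, μ k = ∑ j, c j • Measure.dirac (x j k) := by
    intro k
    rw [← hplan.2 k, hrep, map_finset_sum_measure (measurable_pi_apply k)]
    simp only [Measure.map_smul, Measure.map_dirac' (measurable_pi_apply k)]
    rfl
  intro i
  set γ : Measure (Pt d × Pt d) := ∑ j, c j • Measure.dirac (m j, x j i) with hγ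
  have hcoupling : IsCoupling (pihat.map (wmean l)) (μ i) γ := by
    refine ⟨⟨?_⟩, ?_, ?_⟩
    · rw [hγ, Measure.finset_sum_apply]
      simp only [Measure.smul_apply, measure_univ, smul_eq_mul, mul_one]
      rw [hc, ← ENNReal.ofReal_sum_of_nonneg fun j _ => (hw j).le, hwsum, ENNReal.ofReal_one]
    · rw [hγ, map_finset_sum_measure measurable_fst, hν]
      simp only [Measure.map_smul, Measure.map_dirac' measurable_fst]
    · rw [hγ, map_finset_sum_measure measurable_snd, hμrep i]
      simp only [Measure.map_smul, Measure.map_dirac' measurable_snd]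
  have hcostγ : (∫⁻ p, ENNReal.ofReal (‖p.1 - p.2‖ ^ 2) ∂γ)
      = ∑ j, c j * ENNReal.ofReal (‖m j - x j i‖ ^ 2) := by
    rw [hγ, lintegral_sum_smul_dirac _ _ _ cost_measurable]
  refine ⟨hcoupling, le_antisymm ?_ ?_⟩
  · -- cost γ ≤ W2sq : by contradiction via glued plan
    by_contra hnot
    rw [not_le, hcostγ] at hnot
    unfold W2sq at hnot
    obtain ⟨Cst, ⟨β, hβc, rfl⟩, hClt⟩ := sInf_lt_iff.mp hnot
    obtain ⟨hβprob, hβ1, hβ2⟩ := hβc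
    rw [hν] at hβ1
    classical
    set A : Finset (Pt d) := Finset.image m Finset.univ with hA
    set T : Finset (Pt d) := Finset.image (fun j => x j i) Finset.univ with hT
    set b : Pt d → Pt d → ℝ≥0∞ := fun a y => β {(a, y)} with hb
    set v : Pt d → ℝ≥0∞ := fun a => (∑ j, c j • Measure.dirac (m j)) {a} with hv
    have hmapA : ∀ j : Fin M, j ∈ Finset.univ → m j ∈ A :=
      fun j _ => Finset.mem_image_of_mem m (Finset.mem_univ j)
    have hv_eq : ∀ a, v a = ∑ j ∈ Finset.univ.filter (fun j => m j = a), c j := by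
      intro a
      simp only [hv]
      rw [Measure.finset_sum_apply]
      simp only [Measure.smul_apply, smul_eq_mul]
      rw [Finset.sum_filter]
      refine Finset.sum_congr rfl fun j _ => ?_
      by_cases h : m j = a <;>
        simp [Measure.dirac_apply, Set.indicator_apply, h]
    have hv_ne_top : ∀ a, v a ≠ ⊤ := by
      intro a
      rw [hv_eq]
      exact (ENNReal.sum_lt_top.mpr fun j _ => ENNReal.ofReal_lt_top).ne
    have hv_ne0 : ∀ j : Fin M, v (m j) ≠ 0 := by
      intro j h0
      rw [hv_eq] at h0
      exact hc0 j (Finset.sum_eq_zero_iff.mp h0 j (by simp))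
    -- null sets
    have hTnull : μ i ((↑T : Set (Pt d))ᶜ) = 0 := by
      rw [hμrep i, Measure.finset_sum_apply]
      refine Finset.sum_eq_zero fun j _ => ?_
      have hmem : x j i ∈ T := Finset.mem_image_of_mem _ (Finset.mem_univ j)
      simp [Measure.dirac_apply, Set.indicator_apply, hmem]
    have hAnull : (∑ j, c j • Measure.dirac (m j)) ((↑A : Set (Pt d))ᶜ) = 0 := by
      rw [Measure.finset_sum_apply]
      refine Finset.sum_eq_zero fun j _ => ?_
      have hmem : m j ∈ A := hmapA j (Finset.mem_univ j)
      simp [Measure.dirac_apply, Set.indicator_apply, hmem]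
    have hsndnull : β (Prod.snd ⁻¹' (↑T : Set (Pt d))ᶜ) = 0 := by
      rw [← Measure.map_apply measurable_snd T.finite_toSet.measurableSet.compl, hβ2]
      exact hTnull
    have hfstnull : β (Prod.fst ⁻¹' (↑A : Set (Pt d))ᶜ) = 0 := by
      rw [← Measure.map_apply measurable_fst A.finite_toSet.measurableSet.compl, hβ1]
      exact hAnull
    -- row and column sums
    have hrow : ∀ a : Pt d, ∑ y ∈ T, b a y = v a := by
      intro a
      have h1 : v a = β (Prod.fst ⁻¹' {a}) := by
        simp only [hv]
        rw [← hβ1, Measure.map_apply measurable_fst (measurableSet_singleton a)]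
      have h2 := measure_inter_add_diff (μ := β) (Prod.fst ⁻¹' {a})
        (measurable_snd T.finite_toSet.measurableSet)
      have h3 : β (Prod.fst ⁻¹' {a} \ Prod.snd ⁻¹' ↑T) = 0 :=
        measure_mono_null (fun p hp => hp.2) hsndnull
      have h4 : β (Prod.fst ⁻¹' {a} ∩ Prod.snd ⁻¹' ↑T) = β (Prod.fst ⁻¹' {a}) := by
        rw [← h2, h3, add_zero]
      have h5 : Prod.fst ⁻¹' {a} ∩ Prod.snd ⁻¹' (↑T : Set (Pt d))
          = ⋃ y ∈ T, {((a : Pt d), y)} := by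
        ext p
        simp only [Set.mem_inter_iff, Set.mem_preimage, Set.mem_singleton_iff,
          Set.mem_iUnion, Finset.mem_coe, Prod.ext_iff]
        constructor
        · rintro ⟨h6, h7⟩; exact ⟨p.2, h7, h6, rfl⟩
        · rintro ⟨y, hy, h6, h7⟩; exact ⟨h6, h7 ▸ hy⟩
      have h6 : β (⋃ y ∈ T, {((a : Pt d), y)}) = ∑ y ∈ T, β {((a : Pt d), y)} := by
        refine measure_biUnion_finset ?_ fun y _ => measurableSet_singleton _
        intro y _ y' _ hne
        simp only [Function.onFun, Set.disjoint_singleton]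
        exact fun h => hne (congrArg Prod.snd h)
      rw [h1, ← h4, h5, h6]
    have hcol : ∀ y : Pt d, ∑ a ∈ A, b a y = μ i {y} := by
      intro y
      have h1 : μ i {y} = β (Prod.snd ⁻¹' {y}) := by
        rw [← hβ2, Measure.map_apply measurable_snd (measurableSet_singleton y)]
      have h2 := measure_inter_add_diff (μ := β) (Prod.snd ⁻¹' {y})
        (measurable_fst A.finite_toSet.measurableSet)
      have h3 : β (Prod.snd ⁻¹' {y} \ Prod.fst ⁻¹' ↑A) = 0 :=
        measure_mono_null (fun p hp => hp.2) hfstnull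
      have h4 : β (Prod.snd ⁻¹' {y} ∩ Prod.fst ⁻¹' ↑A) = β (Prod.snd ⁻¹' {y}) := by
        rw [← h2, h3, add_zero]
      have h5 : Prod.snd ⁻¹' {y} ∩ Prod.fst ⁻¹' (↑A : Set (Pt d))
          = ⋃ a ∈ A, {((a : Pt d), y)} := by
        ext p
        simp only [Set.mem_inter_iff, Set.mem_preimage, Set.mem_singleton_iff,
          Set.mem_iUnion, Finset.mem_coe, Prod.ext_iff]
        constructor
        · rintro ⟨h6, h7⟩; exact ⟨p.1, h7, rfl, h6⟩
        · rintro ⟨a, ha, h6, h7⟩; exact ⟨h7, h6 ▸ ha⟩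
      have h6 : β (⋃ a ∈ A, {((a : Pt d), y)}) = ∑ a ∈ A, β {((a : Pt d), y)} := by
        refine measure_biUnion_finset ?_ fun a _ => measurableSet_singleton _
        intro a _ a' _ hne
        simp only [Function.onFun, Set.disjoint_singleton]
        exact fun h => hne (congrArg Prod.fst h)
      rw [h1, ← h4, h5, h6]
    -- cost of β
    have hcostβ : (∫⁻ p, ENNReal.ofReal (‖p.1 - p.2‖ ^ 2) ∂β)
        = ∑ a ∈ A, ∑ y ∈ T, ENNReal.ofReal (‖a - y‖ ^ 2) * b a y := by
      have hS : MeasurableSet (↑(A ×ˢ T) : Set (Pt d × Pt d)) :=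
        (A ×ˢ T).finite_toSet.measurableSet
      rw [← lintegral_add_compl (fun p : Pt d × Pt d => ENNReal.ofReal (‖p.1 - p.2‖ ^ 2)) hS]
      have hcnull : β ((↑(A ×ˢ T) : Set (Pt d × Pt d))ᶜ) = 0 := by
        refine measure_mono_null ?_ (measure_union_null hfstnull hsndnull)
        intro p hp
        simp only [Set.mem_compl_iff, Finset.coe_product, Set.mem_prod, not_and_or] at hp
        rcases hp with hp | hp
        · exact Or.inl hp
        · exact Or.inr hp
      rw [setLIntegral_measure_zero _ _ hcnull, add_zero, lintegral_finset,
        Finset.sum_product]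
    -- the glued plan
    set q : Fin M → Pt d → ℝ≥0∞ := fun j y => c j * (b (m j) y * (v (m j))⁻¹) with hq
    set π' : Measure (Fin N → Pt d) :=
      ∑ j, ∑ y ∈ T, q j y • Measure.dirac (Function.update (x j) i y) with hπ'
    have hq_row : ∀ j, ∑ y ∈ T, q j y = c j := by
      intro j
      simp only [hq]
      rw [← Finset.mul_sum, ← Finset.sum_mul, hrow,
        ENNReal.mul_inv_cancel (hv_ne0 j) (hv_ne_top _), mul_one]
    have hq_col : ∀ y : Pt d, ∑ j, q j y = μ i {y} := by
      intro y
      rw [← Finset.sum_fiberwise_of_maps_to hmapA (fun j => q j y), ← hcol y]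
      refine Finset.sum_congr rfl fun a ha => ?_
      obtain ⟨j0, _, rfl⟩ := Finset.mem_image.mp ha
      have hfib : ∀ j ∈ Finset.univ.filter (fun j => m j = m j0),
          q j y = c j * (b (m j0) y * (v (m j0))⁻¹) := by
        intro j hj
        rw [Finset.mem_filter] at hj
        simp only [hq, hj.2]
      rw [Finset.sum_congr rfl hfib, ← Finset.sum_mul, ← hv_eq (m j0),
        mul_comm (b (m j0) y) _, ← mul_assoc,
        ENNReal.mul_inv_cancel (hv_ne0 j0) (hv_ne_top _), one_mul]
    have hmapπ' : ∀ k : Fin N, π'.map (fun z => z k)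
        = ∑ j, ∑ y ∈ T, q j y • Measure.dirac (Function.update (x j) i y k) := by
      intro k
      rw [hπ', map_finset_sum_measure (measurable_pi_apply k)]
      refine Finset.sum_congr rfl fun j _ => ?_
      rw [map_finset_sum_measure (measurable_pi_apply k)]
      simp only [Measure.map_smul, Measure.map_dirac' (measurable_pi_apply k)]
    have hπ'margin : ∀ k, π'.map (fun z => z k) = μ k := by
      intro k
      by_cases hk : k = i
      · subst hk
        rw [hmapπ' k]
        have hupd : ∀ j, ∀ y : Pt d, Function.update (x j) k y k = y :=
          fun j y => Function.update_self k y (x j)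
        simp only [hupd]
        rw [Finset.sum_comm]
        have h1 : ∀ y ∈ T, (∑ j, q j y • Measure.dirac y) = μ k {y} • Measure.dirac y := by
          intro y _
          rw [← Finset.sum_smul, hq_col y]
        rw [Finset.sum_congr rfl h1]
        -- μ k = ∑ y ∈ T, μ k {y} • dirac y
        have hμT : ∀ y : Pt d, μ k {y} = ∑ j ∈ Finset.univ.filter (fun j => x j k = y), c j := by
          intro y
          rw [hμrep k, Measure.finset_sum_apply]
          simp only [Measure.smul_apply, smul_eq_mul]
          rw [Finset.sum_filter]
          refine Finset.sum_congr rfl fun j _ => ?_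
          by_cases h : x j k = y <;>
            simp [Measure.dirac_apply, Set.indicator_apply, h]
        have hmapT : ∀ j : Fin M, j ∈ Finset.univ → x j k ∈ T :=
          fun j _ => Finset.mem_image_of_mem _ (Finset.mem_univ j)
        conv_rhs => rw [hμrep k]
        rw [← Finset.sum_fiberwise_of_maps_to hmapT (fun j => c j • Measure.dirac (x j k))]
        refine (Finset.sum_congr rfl fun y _ => ?_)
        rw [hμT y, Finset.sum_smul]
        refine Finset.sum_congr rfl fun j hj => ?_
        rw [Finset.mem_filter] at hj
        rw [hj.2]
      · rw [hmapπ' k]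
        have hupd : ∀ j, ∀ y : Pt d, Function.update (x j) i y k = x j k :=
          fun j y => Function.update_of_ne hk y (x j)
        simp only [hupd]
        have h1 : ∀ j : Fin M, j ∈ Finset.univ →
            (∑ y ∈ T, q j y • Measure.dirac (x j k)) = c j • Measure.dirac (x j k) := by
          intro j _
          rw [← Finset.sum_smul, hq_row j]
        rw [Finset.sum_congr rfl h1]
        exact (hμrep k).symm
    have hπ'prob : IsProbabilityMeasure π' := by
      constructor
      have h1 : (π'.map (fun z => z i)) Set.univ = π' Set.univ := by
        rw [Measure.map_apply (measurable_pi_apply i) MeasurableSet.univ, Set.preimage_univ]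
      rw [← h1, hπ'margin i]
      exact (hμ i).1.measure_univ
    have hπ'plan : IsPlan μ π' := ⟨hπ'prob, hπ'margin⟩
    -- MOT of π'
    set G : (Fin N → Pt d) → ℝ≥0∞ := fun z => ∑ s : Fin N, ∑ t : Fin N,
      if s < t then ENNReal.ofReal (l s * l t * ‖z s - z t‖ ^ 2) else 0 with hG
    set R : Fin M → ℝ := fun j => ∑ k ∈ Finset.univ.erase i, l k * ‖x j k - m j‖ ^ 2 with hR
    have hRnn : ∀ j, 0 ≤ R j := by
      intro j
      refine Finset.sum_nonneg fun k _ => mul_nonneg (hlpos k).le (sq_nonneg _)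
    have hsplitsum : ∀ j, ∀ z : Fin N → Pt d, (∀ k ∈ Finset.univ.erase i, z k = x j k) →
        ∑ k, l k * ‖z k - m j‖ ^ 2 = l i * ‖z i - m j‖ ^ 2 + R j := by
      intro j z hz
      rw [← Finset.add_sum_erase _ _ (Finset.mem_univ i)]
      congr 1
      exact Finset.sum_congr rfl fun k hk => by rw [hz k hk]
    have hMOTπ' : MOT l π' = ∑ j, ∑ y ∈ T, q j y * G (Function.update (x j) i y) := by
      rw [MOT, hπ', lintegral_finset_sum_measure]
      exact Finset.sum_congr rfl fun j _ =>
        lintegral_sum_smul_dirac T (q j) _ (G_measurable l)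
    have hGbound : ∀ j, ∀ y : Pt d, G (Function.update (x j) i y)
        ≤ ENNReal.ofReal (l i) * ENNReal.ofReal (‖y - m j‖ ^ 2) + ENNReal.ofReal (R j) := by
      intro j y
      simp only [hG]
      rw [F_eq l hlpos hlsum]
      have h1 : ∑ k, l k * ‖Function.update (x j) i y k - wmean l (Function.update (x j) i y)‖ ^ 2
          ≤ ∑ k, l k * ‖Function.update (x j) i y k - m j‖ ^ 2 := by
        rw [show wmean l (Function.update (x j) i y) = ∑ k, l k • Function.update (x j) i y k from rfl]
        rw [lemA l hlsum (Function.update (x j) i y) (m j)]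
        exact le_add_of_nonneg_left (sq_nonneg _) |>.trans (le_of_eq (add_comm _ _)) |>.trans (le_refl _)
      have h2 : ∑ k, l k * ‖Function.update (x j) i y k - m j‖ ^ 2
          = l i * ‖y - m j‖ ^ 2 + R j := by
        have := hsplitsum j (Function.update (x j) i y)
          (fun k hk => Function.update_of_ne (Finset.ne_of_mem_erase hk) y (x j))
        rw [this, Function.update_self]
      calc ENNReal.ofReal (∑ k, l k * ‖Function.update (x j) i y k
              - wmean l (Function.update (x j) i y)‖ ^ 2)
          ≤ ENNReal.ofReal (l i * ‖y - m j‖ ^ 2 + R j) := by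
            exact ENNReal.ofReal_le_ofReal (h1.trans_eq h2)
        _ = ENNReal.ofReal (l i) * ENNReal.ofReal (‖y - m j‖ ^ 2) + ENNReal.ofReal (R j) := by
            rw [ENNReal.ofReal_add (mul_nonneg (hlpos i).le (sq_nonneg _)) (hRnn j),
              ENNReal.ofReal_mul (hlpos i).le]
    have hinner : ∑ j, ∑ y ∈ T, q j y * ENNReal.ofReal (‖y - m j‖ ^ 2)
        = ∫⁻ p, ENNReal.ofReal (‖p.1 - p.2‖ ^ 2) ∂β := by
      rw [hcostβ]
      rw [← Finset.sum_fiberwise_of_maps_to hmapA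
        (fun j => ∑ y ∈ T, q j y * ENNReal.ofReal (‖y - m j‖ ^ 2))]
      refine Finset.sum_congr rfl fun a ha => ?_
      obtain ⟨j0, _, rfl⟩ := Finset.mem_image.mp ha
      rw [Finset.sum_comm]
      refine Finset.sum_congr rfl fun y _ => ?_
      have hfib : ∀ j ∈ Finset.univ.filter (fun j => m j = m j0),
          q j y * ENNReal.ofReal (‖y - m j‖ ^ 2)
            = c j * (b (m j0) y * (v (m j0))⁻¹ * ENNReal.ofReal (‖y - m j0‖ ^ 2)) := by
        intro j hj
        rw [Finset.mem_filter] at hj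
        simp only [hq, hj.2, mul_assoc]
      rw [Finset.sum_congr rfl hfib, ← Finset.sum_mul, ← hv_eq (m j0)]
      rw [show ENNReal.ofReal (‖m j0 - y‖ ^ 2) = ENNReal.ofReal (‖y - m j0‖ ^ 2) by
        rw [norm_sub_rev]]
      rw [mul_comm (b (m j0) y) ((v (m j0))⁻¹), ← mul_assoc, ← mul_assoc,
        ENNReal.mul_inv_cancel (hv_ne0 j0) (hv_ne_top _), one_mul, mul_comm]
    have hbound : MOT l π' ≤ ENNReal.ofReal (l i)
        * (∫⁻ p, ENNReal.ofReal (‖p.1 - p.2‖ ^ 2) ∂β) + ∑ j, c j * ENNReal.ofReal (R j) := by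
      rw [hMOTπ']
      calc ∑ j, ∑ y ∈ T, q j y * G (Function.update (x j) i y)
          ≤ ∑ j, ∑ y ∈ T, q j y * (ENNReal.ofReal (l i) * ENNReal.ofReal (‖y - m j‖ ^ 2)
              + ENNReal.ofReal (R j)) := by
            refine Finset.sum_le_sum fun j _ => Finset.sum_le_sum fun y _ => ?_
            exact mul_le_mul_right (hGbound j y) _
        _ = ENNReal.ofReal (l i) * (∑ j, ∑ y ∈ T, q j y * ENNReal.ofReal (‖y - m j‖ ^ 2))
              + ∑ j, c j * ENNReal.ofReal (R j) := by
            simp only [mul_add, Finset.sum_add_distrib]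
            congr 1
            · rw [Finset.mul_sum]
              refine Finset.sum_congr rfl fun j _ => ?_
              rw [Finset.mul_sum]
              refine Finset.sum_congr rfl fun y _ => ?_
              ring
            · refine Finset.sum_congr rfl fun j _ => ?_
              rw [← Finset.sum_mul, hq_row j]
        _ = _ := by rw [hinner]
    -- MOT of pihat
    have hMOTpihat : MOT l pihat = ENNReal.ofReal (l i)
        * (∑ j, c j * ENNReal.ofReal (‖m j - x j i‖ ^ 2)) + ∑ j, c j * ENNReal.ofReal (R j) := by
      rw [MOT, hrep, lintegral_sum_smul_dirac _ _ _ (G_measurable l)]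
      show (∑ j, c j * G (x j)) = _
      have hGx : ∀ j, G (x j) = ENNReal.ofReal (l i) * ENNReal.ofReal (‖m j - x j i‖ ^ 2)
          + ENNReal.ofReal (R j) := by
        intro j
        simp only [hG]
        rw [F_eq l hlpos hlsum]
        have h2 : ∑ k, l k * ‖x j k - m j‖ ^ 2 = l i * ‖x j i - m j‖ ^ 2 + R j :=
          hsplitsum j (x j) (fun k _ => rfl)
        rw [show wmean l (x j) = m j from rfl, h2,
          ENNReal.ofReal_add (mul_nonneg (hlpos i).le (sq_nonneg _)) (hRnn j),
          ENNReal.ofReal_mul (hlpos i).le, norm_sub_rev]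
      simp only [hGx]
      rw [Finset.mul_sum, ← Finset.sum_add_distrib]
      refine Finset.sum_congr rfl fun j _ => ?_
      ring
    have hT2top : (∑ j, c j * ENNReal.ofReal (R j)) ≠ ⊤ :=
      (ENNReal.sum_lt_top.mpr fun j _ =>
        ENNReal.mul_lt_top ENNReal.ofReal_lt_top ENNReal.ofReal_lt_top).ne
    have hstrict : MOT l π' < MOT l pihat := by
      refine hbound.trans_lt ?_
      rw [hMOTpihat]
      refine ENNReal.add_lt_add_right hT2top ?_
      refine ENNReal.mul_lt_mul_right ?_ ENNReal.ofReal_ne_top hClt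
      simp [ENNReal.ofReal_eq_zero, not_le, hlpos i]
    exact absurd (hopt π' hπ'plan) (not_le.mpr hstrict)
  · exact sInf_le ⟨γ, hcoupling, rfl⟩
end
end
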